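/- arXiv:1907.08912 — 12 statements merged into one kernel-verified Lean document; each statement's English description precedes it below -/
import Mathlib

section
/- The dual function d is (‖A‖²/α)-smooth: for all σ, τ ∈ EuclideanSpace ℝ κ, 0 ≤ d(σ) − d(τ) − ⟪A y_τ − b, σ − τ⟫ + (‖A‖²/(2α))·‖σ − τ‖², where y_τ is the unique minimizer of L(·,τ) over Y. -/
open scoped RealInnerProductSpace

/-- Quadratic growth at a minimizer of a strongly convex function. -/
lemma strong_growth {E : Type*} [NormedAddCommGroup E] [InnerProductSpace ℝ E]
    {Y : Set E} {α : ℝ} {f : E → ℝ} (hf : StrongConvexOn Y α f)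
    {x₀ : E} (hx₀ : x₀ ∈ Y) (hmin : ∀ y ∈ Y, f x₀ ≤ f y) :
    ∀ y ∈ Y, f x₀ + α / 2 * ‖y - x₀‖ ^ 2 ≤ f y := by
  intro y hy
  have key : ∀ t : ℝ, t ∈ Set.Ioo (0:ℝ) 1 →
      f x₀ + (1 - t) * (α / 2 * ‖y - x₀‖ ^ 2) ≤ f y := by
    intro t ht
    obtain ⟨ht0, ht1⟩ := ht
    have hb : (0:ℝ) ≤ 1 - t := by linarith
    have hsum : t + (1 - t) = 1 := by ring
    have hcvx := hf.2 hy hx₀ ht0.le hb hsum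
    simp only [smul_eq_mul] at hcvx
    have hmem : t • y + (1 - t) • x₀ ∈ Y := hf.1 hy hx₀ ht0.le hb hsum
    have hge := hmin _ hmem
    have h2 : t * (f x₀ + (1 - t) * (α / 2 * ‖y - x₀‖ ^ 2)) ≤ t * f y := by nlinarith
    exact le_of_mul_le_mul_left h2 ht0
  have hten : Filter.Tendsto (fun t : ℝ => f x₀ + (1 - t) * (α / 2 * ‖y - x₀‖ ^ 2))
      (nhdsWithin 0 (Set.Ioi 0)) (nhds (f x₀ + (1 - 0) * (α / 2 * ‖y - x₀‖ ^ 2))) := by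
    apply Filter.Tendsto.mono_left _ nhdsWithin_le_nhds
    exact Filter.Tendsto.const_add _
      (((tendsto_const_nhds.sub Filter.tendsto_id).mul tendsto_const_nhds).congr (by simp))
  have hfin : f x₀ + (1 - 0) * (α / 2 * ‖y - x₀‖ ^ 2) ≤ f y := by
    refine le_of_tendsto hten ?_
    filter_upwards [Ioo_mem_nhdsGT_of_mem (Set.mem_Ico.mpr ⟨le_refl 0, one_pos⟩)] with t ht
      using key t ht
  simpa using hfin

theorem stmt_1
    {ι κ : Type*} [Fintype ι] [Fintype κ] [Nonempty ι] [Nonempty κ]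
    (Y : Set (EuclideanSpace ℝ ι)) (hYne : Y.Nonempty) (hYcpt : IsCompact Y)
    (hYconv : Convex ℝ Y)
    (α : ℝ) (hα : 0 < α)
    (F₀ : EuclideanSpace ℝ ι → ℝ) (hF₀cont : Continuous F₀)
    (hF₀sc : StrongConvexOn Y α F₀)
    (A : EuclideanSpace ℝ ι →L[ℝ] EuclideanSpace ℝ κ) (b : EuclideanSpace ℝ κ)
    (L : EuclideanSpace ℝ ι → EuclideanSpace ℝ κ → ℝ)
    (hL : ∀ y τ, L y τ = F₀ y + ⟪τ, A y - b⟫)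
    (d : EuclideanSpace ℝ κ → ℝ)
    (hd : ∀ τ, d τ = sInf ((fun y => L y τ) '' Y))
    (yt : EuclideanSpace ℝ κ → EuclideanSpace ℝ ι)
    (hytY : ∀ τ, yt τ ∈ Y)
    (hytmin : ∀ τ, ∀ y ∈ Y, L (yt τ) τ ≤ L y τ)
    :
    ∀ σ τ : EuclideanSpace ℝ κ,
      0 ≤ d σ - d τ - ⟪A (yt τ) - b, σ - τ⟫ + ‖A‖ ^ 2 / (2 * α) * ‖σ - τ‖ ^ 2 := by
  intro σ τ
  -- d evaluates at the minimizer
  have hdval : ∀ ρ, d ρ = L (yt ρ) ρ := by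
    intro ρ
    rw [hd]
    refine IsLeast.csInf_eq ⟨⟨yt ρ, hytY ρ, rfl⟩, ?_⟩
    rintro _ ⟨y, hy, rfl⟩
    exact hytmin ρ y hy
  -- strong convexity of L · τ
  have hLsc : StrongConvexOn Y α (fun y => L y τ) := by
    constructor
    · exact hF₀sc.1
    · intro x hx y hy a c ha hc hac
      have h1 := hF₀sc.2 hx hy ha hc hac
      have hlin : ⟪τ, A (a • x + c • y) - b⟫ = a * ⟪τ, A x - b⟫ + c * ⟪τ, A y - b⟫ := by
        have hv : A (a • x + c • y) - b = a • (A x - b) + c • (A y - b) := by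
          have h5 : a • (A x - b) + c • (A y - b) = a • A x + c • A y - (a + c) • b := by
            rw [smul_sub, smul_sub, add_smul]; abel
          rw [h5, hac, one_smul, map_add, map_smul, map_smul]
        rw [hv, inner_add_right, real_inner_smul_right, real_inner_smul_right]
      simp only [hL, smul_eq_mul] at h1 ⊢
      rw [hlin]
      linarith
  -- quadratic growth at yt τ
  have hgrow := strong_growth hLsc (hytY τ) (hytmin τ) (yt σ) (hytY σ)
  -- relation between L at σ and τ
  have hshift : ∀ y, L y σ = L y τ + ⟪σ - τ, A y - b⟫ := by
    intro y
    rw [hL, hL, inner_sub_left]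
    ring
  set t := ‖yt σ - yt τ‖ with ht
  have hinner : -(‖σ - τ‖ * (‖A‖ * t)) ≤ ⟪σ - τ, A (yt σ) - b⟫ - ⟪σ - τ, A (yt τ) - b⟫ := by
    have h1 : ⟪σ - τ, A (yt σ) - b⟫ - ⟪σ - τ, A (yt τ) - b⟫
        = ⟪σ - τ, A (yt σ) - A (yt τ)⟫ := by
      rw [← inner_sub_right]
      congr 1
      abel
    rw [h1]
    have h2 := abs_real_inner_le_norm (σ - τ) (A (yt σ) - A (yt τ))
    have h3 : ‖A (yt σ) - A (yt τ)‖ ≤ ‖A‖ * t := by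
      rw [← map_sub]; exact A.le_opNorm _
    have h4 := neg_abs_le ⟪σ - τ, A (yt σ) - A (yt τ)⟫
    nlinarith [norm_nonneg (σ - τ), norm_nonneg (A (yt σ) - A (yt τ))]
  have hquad : 0 ≤ α / 2 * t ^ 2 - ‖σ - τ‖ * (‖A‖ * t) + ‖A‖ ^ 2 / (2 * α) * ‖σ - τ‖ ^ 2 := by
    have hs := sq_nonneg (α * t - ‖A‖ * ‖σ - τ‖)
    have h2α : 0 < 2 * α := by linarith
    have key : (α / 2 * t ^ 2 - ‖σ - τ‖ * (‖A‖ * t) + ‖A‖ ^ 2 / (2 * α) * ‖σ - τ‖ ^ 2)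
        = (α * t - ‖A‖ * ‖σ - τ‖) ^ 2 / (2 * α) := by
      field_simp
      ring
    rw [key]
    positivity
  rw [hdval, hdval, hshift (yt σ), real_inner_comm (σ - τ) (A (yt τ) - b)]
  linarith
end

section
/- For every τ ∈ EuclideanSpace ℝ κ, the dual function d is differentiable at τ with gradient A y_τ − b, where y_τ is the unique minimizer of L(·,τ) over Y; i.e., HasGradientAt d (A y_τ − b) τ. -/
open scoped RealInnerProductSpace

theorem stmt_2
    {ι κ : Type*} [Fintype ι] [Fintype κ] [Nonempty ι] [Nonempty κ]
    (Y : Set (EuclideanSpace ℝ ι)) (hYne : Y.Nonempty) (hYcpt : IsCompact Y)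
    (hYconv : Convex ℝ Y)
    (α : ℝ) (hα : 0 < α)
    (F₀ : EuclideanSpace ℝ ι → ℝ) (hF₀cont : Continuous F₀)
    (hF₀sc : StrongConvexOn Y α F₀)
    (A : EuclideanSpace ℝ ι →L[ℝ] EuclideanSpace ℝ κ) (b : EuclideanSpace ℝ κ)
    (L : EuclideanSpace ℝ ι → EuclideanSpace ℝ κ → ℝ)
    (hL : ∀ y τ, L y τ = F₀ y + ⟪τ, A y - b⟫)
    (d : EuclideanSpace ℝ κ → ℝ)
    (hd : ∀ τ, d τ = sInf ((fun y => L y τ) '' Y))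
    (yt : EuclideanSpace ℝ κ → EuclideanSpace ℝ ι)
    (hytY : ∀ τ, yt τ ∈ Y)
    (hytmin : ∀ τ, ∀ y ∈ Y, L (yt τ) τ ≤ L y τ)
    :
    ∀ τ : EuclideanSpace ℝ κ, HasGradientAt d (A (yt τ) - b) τ := by
  -- d τ = L (yt τ) τ
  have hdL : ∀ τ, d τ = L (yt τ) τ := by
    intro τ
    rw [hd]
    refine (IsLeast.csInf_eq ⟨⟨yt τ, hytY τ, rfl⟩, ?_⟩)
    rintro _ ⟨y, hy, rfl⟩
    exact hytmin τ y hy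
  -- difference of L in the τ variable
  have hLdiff : ∀ y (σ τ : EuclideanSpace ℝ κ),
      L y σ - L y τ = ⟪σ - τ, A y - b⟫ := by
    intro y σ τ
    simp [hL, inner_sub_left]
  intro τ
  set C : ℝ := 4 * ‖A‖ / α with hC
  have hC0 : 0 ≤ C := by positivity
  -- strong convexity estimate: α/4 ‖Δ‖² ≤ ⟪σ - τ, A Δ⟫ with Δ = yt τ - yt σ
  have key : ∀ σ : EuclideanSpace ℝ κ,
      α / 4 * ‖yt τ - yt σ‖ ^ 2 ≤ ⟪σ - τ, A (yt τ - yt σ)⟫ := by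
    intro σ
    have hmem : (1/2 : ℝ) • yt τ + (1/2 : ℝ) • yt σ ∈ Y :=
      hYconv (hytY τ) (hytY σ) (by norm_num) (by norm_num) (by norm_num)
    have hsc := hF₀sc.2 (hytY τ) (hytY σ) (by norm_num : (0:ℝ) ≤ 1/2)
      (by norm_num : (0:ℝ) ≤ 1/2) (by norm_num)
    have hmid : L ((1/2 : ℝ) • yt τ + (1/2 : ℝ) • yt σ) σ
        ≤ 1/2 * L (yt τ) σ + 1/2 * L (yt σ) σ - α / 8 * ‖yt τ - yt σ‖ ^ 2 := by
      have haff : ⟪σ, A ((1/2 : ℝ) • yt τ + (1/2 : ℝ) • yt σ) - b⟫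
          = 1/2 * ⟪σ, A (yt τ) - b⟫ + 1/2 * ⟪σ, A (yt σ) - b⟫ := by
        simp [map_add, map_smul, inner_sub_right, inner_add_right, inner_smul_right]
        ring
      simp only [hL, haff]
      simp only [smul_eq_mul] at hsc
      nlinarith [hsc]
    have hmin := hytmin σ _ hmem
    have h1 : α / 4 * ‖yt τ - yt σ‖ ^ 2 ≤ L (yt τ) σ - L (yt σ) σ := by nlinarith
    have h2 : L (yt τ) τ ≤ L (yt σ) τ := hytmin τ _ (hytY σ)
    have h3 : L (yt τ) σ - L (yt σ) σ
        = (L (yt τ) τ - L (yt σ) τ) + ⟪σ - τ, A (yt τ - yt σ)⟫ := by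
      have e1 := hLdiff (yt τ) σ τ
      have e2 := hLdiff (yt σ) σ τ
      have : A (yt τ - yt σ) = (A (yt τ) - b) - (A (yt σ) - b) := by
        simp [map_sub]
      rw [this, inner_sub_right]
      linarith
    linarith
  -- Lipschitz bound on the minimizer
  have hlip : ∀ σ : EuclideanSpace ℝ κ, ‖yt τ - yt σ‖ ≤ C * ‖σ - τ‖ := by
    intro σ
    rcases eq_or_lt_of_le (norm_nonneg (yt τ - yt σ)) with h0 | h0
    · rw [← h0]; positivity
    · have h1 := key σ
      have h2 : ⟪σ - τ, A (yt τ - yt σ)⟫ ≤ ‖σ - τ‖ * (‖A‖ * ‖yt τ - yt σ‖) := by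
        calc ⟪σ - τ, A (yt τ - yt σ)⟫ ≤ ‖σ - τ‖ * ‖A (yt τ - yt σ)‖ :=
              real_inner_le_norm _ _
          _ ≤ ‖σ - τ‖ * (‖A‖ * ‖yt τ - yt σ‖) := by
              gcongr; exact A.le_opNorm _
      have : α / 4 * ‖yt τ - yt σ‖ ≤ ‖σ - τ‖ * ‖A‖ := by
        have := h1.trans h2
        nlinarith
      rw [hC]
      rw [div_mul_eq_mul_div, le_div_iff₀ hα]
      nlinarith
  -- gradient via little-o
  rw [hasGradientAt_iff_isLittleO]
  have hbound : ∀ σ : EuclideanSpace ℝ κ,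
      ‖d σ - d τ - ⟪A (yt τ) - b, σ - τ⟫‖ ≤ (‖A‖ * C) * ‖σ - τ‖ ^ 2 := by
    intro σ
    have hsym : ⟪A (yt τ) - b, σ - τ⟫ = ⟪σ - τ, A (yt τ) - b⟫ := real_inner_comm _ _
    have hup : d σ - d τ - ⟪σ - τ, A (yt τ) - b⟫ ≤ 0 := by
      have h1 : d σ ≤ L (yt τ) σ := by
        rw [hdL σ]; exact hytmin σ _ (hytY τ)
      have h2 := hLdiff (yt τ) σ τ
      rw [hdL τ]
      linarith
    have hdown : -(‖A‖ * C * ‖σ - τ‖ ^ 2) ≤ d σ - d τ - ⟪σ - τ, A (yt τ) - b⟫ := by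
      have h1 : d τ ≤ L (yt σ) τ := by
        rw [hdL τ]; exact hytmin τ _ (hytY σ)
      have h2 := hLdiff (yt σ) σ τ
      have h3 : ⟪σ - τ, A (yt τ - yt σ)⟫
          = ⟪σ - τ, A (yt τ) - b⟫ - ⟪σ - τ, A (yt σ) - b⟫ := by
        simp [map_sub, inner_sub_right]
      have h4 : ⟪σ - τ, A (yt τ - yt σ)⟫ ≤ ‖A‖ * C * ‖σ - τ‖ ^ 2 := by
        calc ⟪σ - τ, A (yt τ - yt σ)⟫ ≤ ‖σ - τ‖ * ‖A (yt τ - yt σ)‖ :=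
              real_inner_le_norm _ _
          _ ≤ ‖σ - τ‖ * (‖A‖ * (C * ‖σ - τ‖)) := by
              gcongr
              calc ‖A (yt τ - yt σ)‖ ≤ ‖A‖ * ‖yt τ - yt σ‖ := A.le_opNorm _
                _ ≤ ‖A‖ * (C * ‖σ - τ‖) := by gcongr; exact hlip σ
          _ = ‖A‖ * C * ‖σ - τ‖ ^ 2 := by ring
      have h5 : d σ = L (yt σ) σ := hdL σ
      linarith
    rw [hsym, Real.norm_eq_abs, abs_le]
    have hnn : (0:ℝ) ≤ ‖A‖ * C * ‖σ - τ‖ ^ 2 := by positivity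
    exact ⟨by linarith, by linarith⟩
  rw [Asymptotics.isLittleO_iff]
  intro c hc
  set K := ‖A‖ * C with hK
  have hK0 : 0 ≤ K := by positivity
  have hδ : 0 < c / (K + 1) := by positivity
  filter_upwards [Metric.ball_mem_nhds τ hδ] with σ hσ
  have hσ' : ‖σ - τ‖ < c / (K + 1) := by
    rw [Metric.mem_ball, dist_eq_norm] at hσ; exact hσ
  calc ‖d σ - d τ - ⟪A (yt τ) - b, σ - τ⟫‖ ≤ K * ‖σ - τ‖ ^ 2 := hbound σ
    _ ≤ c * ‖σ - τ‖ := by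
        have h1 : K * ‖σ - τ‖ ≤ c := by
          have h2 : K * ‖σ - τ‖ ≤ K * (c / (K + 1)) := mul_le_mul_of_nonneg_left hσ'.le hK0
          have h3 : K * (c / (K + 1)) ≤ c := by
            rw [mul_div_assoc']
            rw [div_le_iff₀ (by linarith)]
            nlinarith
          linarith
        calc K * ‖σ - τ‖ ^ 2 = (K * ‖σ - τ‖) * ‖σ - τ‖ := by ring
          _ ≤ c * ‖σ - τ‖ := mul_le_mul_of_nonneg_right h1 (norm_nonneg _)
end

section
/- (ε-approximate smoothness of the dual.) Let ε ≥ 0, let τ ∈ EuclideanSpace ℝ κ, and let y be an ε-equilibrium for toll τ. Then for every σ ∈ EuclideanSpace ℝ κ, L(y,τ) + ⟪A y − b, σ − τ⟫ − d(σ) ≤ (‖A‖²/α)·‖σ − τ‖² + 2ε. -/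
open scoped RealInnerProductSpace

-- auxiliary: strong convexity gives quadratic growth at a minimizer
lemma aux_min_growth {E : Type*} [NormedAddCommGroup E] [NormedSpace ℝ E]
    {Y : Set E} {α : ℝ} {g : E → ℝ}
    (hg : StrongConvexOn Y α g)
    {x z : E} (hx : x ∈ Y) (hz : z ∈ Y) (hmin : ∀ w ∈ Y, g x ≤ g w) :
    g x + α / 2 * ‖z - x‖ ^ 2 ≤ g z := by
  have key : ∀ t : ℝ, t ∈ Set.Ioo (0:ℝ) 1 →
      g x + (1 - t) * (α / 2 * ‖z - x‖ ^ 2) ≤ g z := by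
    rintro t ⟨ht0, ht1⟩
    have h := hg.2 hz hx (le_of_lt ht0) (by linarith : (0:ℝ) ≤ 1 - t) (by ring)
    have hmem : t • z + (1 - t) • x ∈ Y := hg.1 hz hx ht0.le (by linarith) (by ring)
    have h2 := hmin _ hmem
    have hn : ‖z - x‖ ^ 2 = ‖z - x‖ ^ 2 := rfl
    simp only [smul_eq_mul] at h
    nlinarith [h, h2]
  have hT : Filter.Tendsto (fun t : ℝ => g x + (1 - t) * (α / 2 * ‖z - x‖ ^ 2))
      (nhdsWithin 0 (Set.Ioo (0:ℝ) 1)) (nhds (g x + α / 2 * ‖z - x‖ ^ 2)) := by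
    have : Continuous (fun t : ℝ => g x + (1 - t) * (α / 2 * ‖z - x‖ ^ 2)) := by continuity
    have h2 : Filter.Tendsto (fun t : ℝ => g x + (1 - t) * (α / 2 * ‖z - x‖ ^ 2))
        (nhdsWithin 0 (Set.Ioo (0:ℝ) 1)) (nhds (g x + (1 - 0) * (α / 2 * ‖z - x‖ ^ 2))) :=
      (this.tendsto 0).mono_left nhdsWithin_le_nhds
    simpa using h2
  have hne : (nhdsWithin (0:ℝ) (Set.Ioo (0:ℝ) 1)).NeBot := by
    apply IsGLB.nhdsWithin_neBot
    · exact isGLB_Ioo one_pos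
    · exact Set.nonempty_Ioo.2 one_pos
  exact le_of_tendsto hT (Filter.eventually_of_mem self_mem_nhdsWithin key)


lemma aux_sc_toll {ι κ : Type*} [Fintype ι] [Fintype κ]
    {Y : Set (EuclideanSpace ℝ ι)} {α : ℝ} {F₀ : EuclideanSpace ℝ ι → ℝ}
    (hF₀sc : StrongConvexOn Y α F₀)
    (A : EuclideanSpace ℝ ι →L[ℝ] EuclideanSpace ℝ κ) (b : EuclideanSpace ℝ κ)
    (τ : EuclideanSpace ℝ κ) :
    StrongConvexOn Y α (fun z => F₀ z + ⟪τ, A z - b⟫) := by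
  refine ⟨hF₀sc.1, fun x hx z hz a c ha hc hac => ?_⟩
  have h := hF₀sc.2 hx hz ha hc hac
  have hlin : A (a • x + c • z) - b = a • (A x - b) + c • (A z - b) := by
    have : a • (A x - b) + c • (A z - b) = a • A x + c • A z - (a + c) • b := by module
    rw [this, hac, one_smul, map_add, map_smul, map_smul]
  have hinner : ⟪τ, A (a • x + c • z) - b⟫
      = a * ⟪τ, A x - b⟫ + c * ⟪τ, A z - b⟫ := by
    rw [hlin, inner_add_right, real_inner_smul_right, real_inner_smul_right]
  simp only [smul_eq_mul] at h ⊢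
  rw [hinner]
  linarith

theorem stmt_4
    {ι κ : Type*} [Fintype ι] [Fintype κ] [Nonempty ι] [Nonempty κ]
    (Y : Set (EuclideanSpace ℝ ι)) (hYne : Y.Nonempty) (hYcpt : IsCompact Y)
    (hYconv : Convex ℝ Y)
    (α : ℝ) (hα : 0 < α)
    (F₀ : EuclideanSpace ℝ ι → ℝ) (hF₀cont : Continuous F₀)
    (hF₀sc : StrongConvexOn Y α F₀)
    (A : EuclideanSpace ℝ ι →L[ℝ] EuclideanSpace ℝ κ) (b : EuclideanSpace ℝ κ)
    (L : EuclideanSpace ℝ ι → EuclideanSpace ℝ κ → ℝ)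
    (hL : ∀ y τ, L y τ = F₀ y + ⟪τ, A y - b⟫)
    (d : EuclideanSpace ℝ κ → ℝ)
    (hd : ∀ τ, d τ = sInf ((fun y => L y τ) '' Y))
    :
    ∀ ε : ℝ, 0 ≤ ε → ∀ τ : EuclideanSpace ℝ κ, ∀ y ∈ Y, L y τ ≤ d τ + ε →
      ∀ σ : EuclideanSpace ℝ κ,
        L y τ + ⟪A y - b, σ - τ⟫ - d σ ≤ ‖A‖ ^ 2 / α * ‖σ - τ‖ ^ 2 + 2 * ε := by
  intro ε hε τ y hy hyε σ
  -- continuity of z ↦ L z μ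
  have hcont : ∀ μ : EuclideanSpace ℝ κ, Continuous (fun z => L z μ) := by
    intro μ
    have : Continuous (fun z : EuclideanSpace ℝ ι => F₀ z + ⟪μ, A z - b⟫) :=
      hF₀cont.add (Continuous.inner continuous_const (A.continuous.sub continuous_const))
    simpa only [← hL] using this
  -- strong convexity of z ↦ L z μ
  have hsc : ∀ μ : EuclideanSpace ℝ κ, StrongConvexOn Y α (fun z => L z μ) := by
    intro μ
    have := aux_sc_toll hF₀sc A b μ
    simpa only [← hL] using this
  -- minimizers
  obtain ⟨ybar, hybarY, hybarmin⟩ := hYcpt.exists_isMinOn hYne (hcont τ).continuousOn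
  obtain ⟨ys, hysY, hysmin⟩ := hYcpt.exists_isMinOn hYne (hcont σ).continuousOn
  have hdval : ∀ (μ : EuclideanSpace ℝ κ) (w : EuclideanSpace ℝ ι), w ∈ Y →
      (∀ z ∈ Y, L w μ ≤ L z μ) → d μ = L w μ := by
    intro μ w hw hmin
    rw [hd]
    apply le_antisymm
    · exact csInf_le ⟨L w μ, by rintro _ ⟨z, hz, rfl⟩; exact hmin z hz⟩ ⟨w, hw, rfl⟩
    · exact le_csInf (hYne.image _) (by rintro _ ⟨z, hz, rfl⟩; exact hmin z hz)
  have hdτ : d τ = L ybar τ := hdval τ ybar hybarY fun z hz => hybarmin hz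
  have hdσ : d σ = L ys σ := hdval σ ys hysY fun z hz => hysmin hz
  -- quadratic growth at the minimizer of L · τ
  have hgrow_y : L ybar τ + α / 2 * ‖y - ybar‖ ^ 2 ≤ L y τ :=
    aux_min_growth (hsc τ) hybarY hy (fun w hw => hybarmin hw)
  have hgrow_ys : L ybar τ + α / 2 * ‖ys - ybar‖ ^ 2 ≤ L ys τ :=
    aux_min_growth (hsc τ) hybarY hysY (fun w hw => hybarmin hw)
  -- decomposition of L ys σ
  have hdec : L ys σ = L ys τ + ⟪σ - τ, A ys - b⟫ := by
    rw [hL, hL, inner_sub_left]; ring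
  -- inner product bounds
  have hib : ∀ u v : EuclideanSpace ℝ ι, ⟪σ - τ, A u - A v⟫ ≤ ‖A‖ * ‖σ - τ‖ * ‖u - v‖ := by
    intro u v
    calc ⟪σ - τ, A u - A v⟫ ≤ ‖σ - τ‖ * ‖A u - A v‖ := real_inner_le_norm _ _
      _ = ‖σ - τ‖ * ‖A (u - v)‖ := by rw [map_sub]
      _ ≤ ‖σ - τ‖ * (‖A‖ * ‖u - v‖) := by
          apply mul_le_mul_of_nonneg_left (A.le_opNorm _) (norm_nonneg _)
      _ = ‖A‖ * ‖σ - τ‖ * ‖u - v‖ := by ring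
  have hI1 : ⟪σ - τ, A y - A ybar⟫ ≤ ‖A‖ * ‖σ - τ‖ * ‖y - ybar‖ := hib y ybar
  have hI2 : ⟪σ - τ, A ybar - A ys⟫ ≤ ‖A‖ * ‖σ - τ‖ * ‖ybar - ys‖ := hib ybar ys
  -- rewrite goal
  have hsplit : ⟪A y - b, σ - τ⟫ - ⟪σ - τ, A ys - b⟫
      = ⟪σ - τ, A y - A ybar⟫ + ⟪σ - τ, A ybar - A ys⟫ := by
    rw [real_inner_comm, ← inner_add_right, ← inner_sub_right]
    congr 1
    abel
  have hεy : α / 2 * ‖y - ybar‖ ^ 2 ≤ ε := by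
    have := hyε
    rw [hdτ] at this
    linarith
  have hnormsym : ‖ybar - ys‖ = ‖ys - ybar‖ := norm_sub_rev _ _
  rw [hdσ, hdec]
  have hkey : L y τ + (⟪A y - b, σ - τ⟫ - ⟪σ - τ, A ys - b⟫) - L ys τ
      ≤ ‖A‖ ^ 2 / α * ‖σ - τ‖ ^ 2 + 2 * ε := by
    rw [hsplit]
    have hyεbar : L y τ ≤ L ybar τ + ε := by rw [hdτ] at hyε; exact hyε
    have hD : ‖A‖ ^ 2 / (2 * α) * ‖σ - τ‖ ^ 2 * (2 * α) = ‖A‖ ^ 2 * ‖σ - τ‖ ^ 2 := by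
      field_simp
    have amgm1 : ‖A‖ * ‖σ - τ‖ * ‖y - ybar‖
        ≤ ‖A‖ ^ 2 / (2 * α) * ‖σ - τ‖ ^ 2 + α / 2 * ‖y - ybar‖ ^ 2 := by
      nlinarith [sq_nonneg (‖A‖ * ‖σ - τ‖ - α * ‖y - ybar‖), hα, hD]
    have amgm2 : ‖A‖ * ‖σ - τ‖ * ‖ys - ybar‖
        ≤ ‖A‖ ^ 2 / (2 * α) * ‖σ - τ‖ ^ 2 + α / 2 * ‖ys - ybar‖ ^ 2 := by
      nlinarith [sq_nonneg (‖A‖ * ‖σ - τ‖ - α * ‖ys - ybar‖), hα, hD]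
    have hsum : ‖A‖ ^ 2 / (2 * α) * ‖σ - τ‖ ^ 2 + ‖A‖ ^ 2 / (2 * α) * ‖σ - τ‖ ^ 2
        = ‖A‖ ^ 2 / α * ‖σ - τ‖ ^ 2 := by
      field_simp; ring
    rw [hnormsym] at hI2
    linarith [hI1, hI2, amgm1, amgm2, hεy, hgrow_ys, hyεbar, hsum]
  linarith [hkey]
end

section
/- (Residue inequality for projected inexact dual ascent.) If 2γ‖A‖² ≤ α, then for every τ ∈ EuclideanSpace ℝ κ with τ ≥ 0 componentwise and every s ∈ ℕ, ‖τ^{s+1} − τ‖² ≤ ‖τ^s − τ‖² + 2γ·( d(τ^{s+1}) − L(y^s, τ^s) + 2ε^s + ⟪A y^s − b, τ^s − τ⟫ ). -/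
open scoped RealInnerProductSpace

set_option maxHeartbeats 2000000

theorem stmt_5
    {ι κ : Type*} [Fintype ι] [Fintype κ] [Nonempty ι] [Nonempty κ]
    (Y : Set (EuclideanSpace ℝ ι)) (hYne : Y.Nonempty) (hYcpt : IsCompact Y)
    (hYconv : Convex ℝ Y)
    (α : ℝ) (hα : 0 < α)
    (F₀ : EuclideanSpace ℝ ι → ℝ) (hF₀cont : Continuous F₀)
    (hF₀sc : StrongConvexOn Y α F₀)
    (A : EuclideanSpace ℝ ι →L[ℝ] EuclideanSpace ℝ κ) (b : EuclideanSpace ℝ κ)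
    (L : EuclideanSpace ℝ ι → EuclideanSpace ℝ κ → ℝ)
    (hL : ∀ y τ, L y τ = F₀ y + ⟪τ, A y - b⟫)
    (d : EuclideanSpace ℝ κ → ℝ)
    (hd : ∀ τ, d τ = sInf ((fun y => L y τ) '' Y))
    (γ : ℝ) (hγ : 0 < γ)
    (τs : ℕ → EuclideanSpace ℝ κ) (ys : ℕ → EuclideanSpace ℝ ι) (εs : ℕ → ℝ)
    (hτ0 : ∀ i, 0 ≤ τs 0 i)
    (hεs : ∀ s, 0 ≤ εs s)
    (hysY : ∀ s, ys s ∈ Y)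
    (hyseq : ∀ s, L (ys s) (τs s) ≤ d (τs s) + εs s)
    (hupdate : ∀ s i, τs (s + 1) i = max (τs s i + γ * (A (ys s) - b) i) 0)
    (hstep : 2 * γ * ‖A‖ ^ 2 ≤ α)
    :
    ∀ τ : EuclideanSpace ℝ κ, (∀ i, 0 ≤ τ i) → ∀ s : ℕ,
      ‖τs (s + 1) - τ‖ ^ 2 ≤ ‖τs s - τ‖ ^ 2 +
        2 * γ * (d (τs (s + 1)) - L (ys s) (τs s) + 2 * εs s + ⟪A (ys s) - b, τs s - τ⟫) := by
  intro τ hτ s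
  set g : EuclideanSpace ℝ κ := A (ys s) - b with hg
  set δ : EuclideanSpace ℝ κ := τs (s + 1) - τs s with hδ
  clear_value g δ
  -- continuity of L · σ
  have hLcont : ∀ σ : EuclideanSpace ℝ κ, Continuous fun y => L y σ := by
    intro σ
    simp only [hL]
    exact hF₀cont.add (continuous_const.inner (A.continuous.sub continuous_const))
  have hbdd : ∀ σ, BddBelow ((fun y => L y σ) '' Y) := fun σ =>
    (hYcpt.image (hLcont σ)).bddBelow
  -- strong convexity consequence: ε-minimizer quadratic growth with 2ε slack
  have hA : ∀ y ∈ Y, L (ys s) (τs s) - 2 * εs s + α / 4 * ‖y - ys s‖ ^ 2 ≤ L y (τs s) := by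
    intro y hy
    have hm : ((1/2 : ℝ) • y + (1/2 : ℝ) • ys s) ∈ Y :=
      hYconv hy (hysY s) (by norm_num) (by norm_num) (by norm_num)
    have hsc := hF₀sc.2 hy (hysY s) (by norm_num : (0:ℝ) ≤ 1/2)
      (by norm_num : (0:ℝ) ≤ 1/2) (by norm_num)
    simp only [smul_eq_mul] at hsc
    have hdle : d (τs s) ≤ L ((1/2 : ℝ) • y + (1/2 : ℝ) • ys s) (τs s) := by
      rw [hd]
      exact csInf_le (hbdd _) ⟨_, hm, rfl⟩
    have heq := hyseq s
    have hAm : A ((1/2 : ℝ) • y + (1/2 : ℝ) • ys s) - b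
        = (1/2 : ℝ) • (A y - b) + (1/2 : ℝ) • (A (ys s) - b) := by
      rw [map_add, map_smul, map_smul]
      module
    have hLm : L ((1/2 : ℝ) • y + (1/2 : ℝ) • ys s) (τs s)
        = F₀ ((1/2 : ℝ) • y + (1/2 : ℝ) • ys s)
          + (1/2) * ⟪τs s, A y - b⟫ + (1/2) * ⟪τs s, A (ys s) - b⟫ := by
      rw [hL, hAm, inner_add_right, real_inner_smul_right, real_inner_smul_right]
      ring
    have hLy := hL y (τs s)
    have hLys := hL (ys s) (τs s)
    nlinarith [hsc, hdle, heq, hLm, hLy, hLys]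
  -- dual lower bound
  have hC : L (ys s) (τs s) - 2 * εs s + ⟪δ, g⟫ - ‖δ‖ ^ 2 / (2 * γ) ≤ d (τs (s + 1)) := by
    rw [hd]
    apply le_csInf (hYne.image _)
    rintro _ ⟨y, hy, rfl⟩
    have h1 := hA y hy
    have hLy : L y (τs (s + 1)) = L y (τs s) + ⟪δ, A y - b⟫ := by
      rw [hL, hL, hδ, inner_sub_left]
      ring
    have hsplit : ⟪δ, A y - b⟫ = ⟪δ, g⟫ + ⟪δ, A y - A (ys s)⟫ := by
      rw [← inner_add_right]
      congr 1
      rw [hg]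
      abel
    have hCS : -(‖δ‖ * (‖A‖ * ‖y - ys s‖)) ≤ ⟪δ, A y - A (ys s)⟫ := by
      have h2 := abs_real_inner_le_norm δ (A y - A (ys s))
      have h3 : ‖A y - A (ys s)‖ ≤ ‖A‖ * ‖y - ys s‖ := by
        rw [← map_sub]; exact A.le_opNorm _
      have h4 := neg_abs_le ⟪δ, A y - A (ys s)⟫
      nlinarith [norm_nonneg δ]
    -- quadratic inequality: α/4 t² - ‖δ‖‖A‖ t + ‖δ‖²/(2γ) ≥ 0
    have hq : 0 ≤ α / 4 * ‖y - ys s‖ ^ 2 - ‖δ‖ * (‖A‖ * ‖y - ys s‖) + ‖δ‖ ^ 2 / (2 * γ) := by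
      have hDD : ‖δ‖ ^ 2 * ‖A‖ ^ 2 ≤ α * (‖δ‖ ^ 2 / (2 * γ)) := by
        rw [mul_div_assoc', le_div_iff₀ (by positivity : (0:ℝ) < 2 * γ)]
        nlinarith [sq_nonneg ‖δ‖, hγ]
      nlinarith [sq_nonneg (α * ‖y - ys s‖ / 2 - ‖δ‖ * ‖A‖), hDD, hα,
        mul_pos hα hγ]
    nlinarith [h1, hLy, hsplit, hCS, hq]
  -- projection inequality
  have hproj : ⟪δ, τs (s + 1) - τ⟫ ≤ γ * ⟪g, τs (s + 1) - τ⟫ := by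
    have key : ∀ i, ((δ - γ • g) i) * ((τs (s + 1) - τ) i) ≤ 0 := by
      intro i
      have hup := hupdate s i
      rw [← hg] at hup
      have hδi : (δ - γ • g) i = τs (s + 1) i - τs s i - γ * g i := by
        simp only [hδ, PiLp.sub_apply, PiLp.smul_apply, smul_eq_mul]
      have hτi : (τs (s + 1) - τ) i = τs (s + 1) i - τ i := rfl
      rw [hδi, hτi, hup]
      rcases le_or_gt 0 (τs s i + γ * g i) with h | h
      · rw [max_eq_left h]
        have hX : τs s i + γ * g i - τs s i - γ * g i = 0 := by ring
        rw [hX, zero_mul]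
      · rw [max_eq_right h.le]
        have hX : (0 - τs s i - γ * g i) * (0 - τ i) = (τs s i + γ * g i) * τ i := by ring
        rw [hX]
        exact mul_nonpos_iff.mpr (Or.inr ⟨h.le, hτ i⟩)
    have hsum : ⟪δ - γ • g, τs (s + 1) - τ⟫ ≤ 0 := by
      have hre : ⟪δ - γ • g, τs (s + 1) - τ⟫
          = ∑ i, ((δ - γ • g) i) * ((τs (s + 1) - τ) i) := by
        simp only [PiLp.inner_apply, RCLike.inner_apply, conj_trivial]
        exact Finset.sum_congr rfl fun i _ => mul_comm _ _
      rw [hre]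
      exact Finset.sum_nonpos fun i _ => key i
    rw [inner_sub_left, real_inner_smul_left] at hsum
    linarith
  -- norm expansion
  have h1 : τs (s + 1) - τ = (τs s - τ) + δ := by
    rw [hδ, add_comm (τs s - τ) (τs (s + 1) - τs s), sub_add_sub_cancel]
  have hexp : ‖τs (s + 1) - τ‖ ^ 2
      = ‖τs s - τ‖ ^ 2 + 2 * ⟪δ, τs (s + 1) - τ⟫ - ‖δ‖ ^ 2 := by
    have h2 : ⟪δ, τs (s + 1) - τ⟫ = ⟪δ, τs s - τ⟫ + ‖δ‖ ^ 2 := by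
      rw [h1, inner_add_right, real_inner_self_eq_norm_sq]
    have h3 : ‖(τs s - τ) + δ‖ ^ 2 = ‖τs s - τ‖ ^ 2 + 2 * ⟪τs s - τ, δ⟫ + ‖δ‖ ^ 2 :=
      norm_add_sq_real _ _
    rw [h1, h3, inner_add_right, real_inner_self_eq_norm_sq]
    linarith [real_inner_comm (τs s - τ) δ]
  have hgsplit : ⟪g, τs (s + 1) - τ⟫ = ⟪g, τs s - τ⟫ + ⟪g, δ⟫ := by
    rw [h1, inner_add_right]
  have hgδ : ⟪g, δ⟫ = ⟪δ, g⟫ := real_inner_comm _ _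
  have hC2 : 2 * γ * ⟪δ, g⟫ - ‖δ‖ ^ 2
      ≤ 2 * γ * (d (τs (s + 1)) - L (ys s) (τs s) + 2 * εs s) := by
    have := mul_le_mul_of_nonneg_left hC (show (0:ℝ) ≤ 2 * γ by positivity)
    have h2γ : (2 * γ) * (‖δ‖ ^ 2 / (2 * γ)) = ‖δ‖ ^ 2 := by field_simp
    nlinarith [this]
  nlinarith [hexp, hproj, hgsplit, hgδ, hC2, hγ]
end

section
/- (Per-step descent toward the optimal toll.) If 2γ‖A‖² ≤ α, then for every s ∈ ℕ, ‖τ^{s+1} − τ⋆‖² − ‖τ^s − τ⋆‖² ≤ 2γ·( d(τ^{s+1}) − d(τ⋆) + 2ε^s ). -/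
set_option maxHeartbeats 1000000

open scoped RealInnerProductSpace

lemma sc_growth {E : Type*} [NormedAddCommGroup E] [InnerProductSpace ℝ E]
    {s : Set E} {α : ℝ} (hα : 0 < α) {F : E → ℝ} (hF : StrongConvexOn s α F)
    (g : E → ℝ)
    (hg : ∀ (a b : ℝ) (x y : E), a + b = 1 → g (a • x + b • y) = a * g x + b * g y)
    {x₀ x : E} (hx₀ : x₀ ∈ s) (hx : x ∈ s)
    (hmin : ∀ y ∈ s, F x₀ + g x₀ ≤ F y + g y) :
    F x₀ + g x₀ + α / 2 * ‖x - x₀‖ ^ 2 ≤ F x + g x := by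
  set c : ℝ := α / 2 * ‖x - x₀‖ ^ 2 with hc
  have hc0 : 0 ≤ c := by positivity
  set D : ℝ := (F x + g x) - (F x₀ + g x₀) with hD
  have hD0 : 0 ≤ D := by have := hmin x hx; simp only [hD]; linarith
  have key : ∀ a : ℝ, 0 < a → a ≤ 1 → (1 - a) * c ≤ D := by
    intro a ha0 ha1
    have hb0 : (0:ℝ) ≤ 1 - a := by linarith
    have hab : a + (1 - a) = 1 := by ring
    have hmem : a • x + (1 - a) • x₀ ∈ s := hF.1 hx hx₀ ha0.le hb0 hab
    have h1 := hF.2 hx hx₀ ha0.le hb0 hab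
    have h2 := hg a (1 - a) x x₀ hab
    have h3 := hmin _ hmem
    simp only [smul_eq_mul] at h1
    rw [h2] at h3
    rw [← hc] at h1
    have h5 : a * ((1 - a) * c) ≤ a * D := by nlinarith [h1, h3]
    exact le_of_mul_le_mul_left h5 ha0
  by_contra hcon
  push_neg at hcon
  have hclt : D < c := by simp only [hD]; linarith
  have hcpos : 0 < c := lt_of_le_of_lt hD0 hclt
  have ha : (0:ℝ) < (c - D) / (2 * c) := div_pos (by linarith) (by linarith)
  have ha1 : (c - D) / (2 * c) ≤ 1 := by
    rw [div_le_one (by positivity)]; linarith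
  have hk := key _ ha ha1
  have heq : (1 - (c - D) / (2 * c)) * c = (c + D) / 2 := by field_simp; ring
  rw [heq] at hk
  linarith

theorem stmt_6
    {ι κ : Type*} [Fintype ι] [Fintype κ] [Nonempty ι] [Nonempty κ]
    (Y : Set (EuclideanSpace ℝ ι)) (hYne : Y.Nonempty) (hYcpt : IsCompact Y)
    (hYconv : Convex ℝ Y)
    (α : ℝ) (hα : 0 < α)
    (F₀ : EuclideanSpace ℝ ι → ℝ) (hF₀cont : Continuous F₀)
    (hF₀sc : StrongConvexOn Y α F₀)
    (A : EuclideanSpace ℝ ι →L[ℝ] EuclideanSpace ℝ κ) (b : EuclideanSpace ℝ κ)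
    (L : EuclideanSpace ℝ ι → EuclideanSpace ℝ κ → ℝ)
    (hL : ∀ y τ, L y τ = F₀ y + ⟪τ, A y - b⟫)
    (d : EuclideanSpace ℝ κ → ℝ)
    (hd : ∀ τ, d τ = sInf ((fun y => L y τ) '' Y))
    (γ : ℝ) (hγ : 0 < γ)
    (τs : ℕ → EuclideanSpace ℝ κ) (ys : ℕ → EuclideanSpace ℝ ι) (εs : ℕ → ℝ)
    (hτ0 : ∀ i, 0 ≤ τs 0 i)
    (hεs : ∀ s, 0 ≤ εs s)
    (hysY : ∀ s, ys s ∈ Y)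
    (hyseq : ∀ s, L (ys s) (τs s) ≤ d (τs s) + εs s)
    (hupdate : ∀ s i, τs (s + 1) i = max (τs s i + γ * (A (ys s) - b) i) 0)
    (τstar : EuclideanSpace ℝ κ) (hτstarpos : ∀ i, 0 ≤ τstar i)
    (hτstarmax : ∀ σ : EuclideanSpace ℝ κ, (∀ i, 0 ≤ σ i) → d σ ≤ d τstar)
    (hstep : 2 * γ * ‖A‖ ^ 2 ≤ α)
    :
    ∀ s : ℕ,
      ‖τs (s + 1) - τstar‖ ^ 2 - ‖τs s - τstar‖ ^ 2 ≤
        2 * γ * (d (τs (s + 1)) - d τstar + 2 * εs s) := by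
  -- general preliminaries
  have hfcont : ∀ τ : EuclideanSpace ℝ κ, Continuous (fun y => L y τ) := by
    intro τ
    have : (fun y => L y τ) = fun y => F₀ y + ⟪τ, A y - b⟫ := by
      funext y; exact hL y τ
    rw [this]
    exact hF₀cont.add (Continuous.inner continuous_const ((A.continuous).sub continuous_const))
  have hbdd : ∀ τ : EuclideanSpace ℝ κ, BddBelow ((fun y => L y τ) '' Y) := fun τ =>
    (hYcpt.image (hfcont τ)).bddBelow
  have hdle : ∀ (τ : EuclideanSpace ℝ κ) (y : EuclideanSpace ℝ ι), y ∈ Y → d τ ≤ L y τ := by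
    intro τ y hy
    rw [hd]
    exact csInf_le (hbdd τ) ⟨y, hy, rfl⟩
  -- affine property of the toll part
  have haff : ∀ (τ : EuclideanSpace ℝ κ) (a c : ℝ) (x y : EuclideanSpace ℝ ι), a + c = 1 →
      ⟪τ, A (a • x + c • y) - b⟫ = a * ⟪τ, A x - b⟫ + c * ⟪τ, A y - b⟫ := by
    intro τ a c x y hac
    have e : ∀ z : EuclideanSpace ℝ ι, ⟪τ, A z - b⟫ = ⟪τ, A z⟫ - ⟪τ, b⟫ := fun z =>
      inner_sub_right τ (A z) b
    rw [e, e, e, map_add, map_smul, map_smul, inner_add_right, real_inner_smul_right,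
      real_inner_smul_right]
    linear_combination (⟪τ, b⟫ : ℝ) * hac
  -- nonnegativity of the tolls
  have hτnn : ∀ s i, 0 ≤ τs s i := by
    intro s
    induction s with
    | zero => exact hτ0
    | succ n _ => intro i; rw [hupdate]; exact le_max_right _ _
  intro s
  set T : EuclideanSpace ℝ κ := τs s with hT
  set T' : EuclideanSpace ℝ κ := τs (s + 1) with hT'
  set g : EuclideanSpace ℝ κ := A (ys s) - b with hg
  set ε : ℝ := εs s with hε
  have hε0 : 0 ≤ ε := hεs s
  -- minimizer of L · T on Y
  obtain ⟨y₀, hy₀Y, hy₀min⟩ := hYcpt.exists_isMinOn hYne (hfcont T).continuousOn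
  rw [isMinOn_iff] at hy₀min
  have hdT : d T = L y₀ T := by
    refine le_antisymm (hdle T y₀ hy₀Y) ?_
    rw [hd]
    exact le_csInf (hYne.image _) (by rintro _ ⟨y, hy, rfl⟩; exact hy₀min y hy)
  -- quadratic growth
  have hgrow : ∀ y ∈ Y, L y₀ T + α / 2 * ‖y - y₀‖ ^ 2 ≤ L y T := by
    intro y hy
    have := sc_growth hα hF₀sc (fun y => ⟪T, A y - b⟫)
      (fun a c x y' hac => haff T a c x y' hac) hy₀Y hy
      (fun y' hy' => by rw [← hL, ← hL]; exact hy₀min y' hy')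
    rw [← hL, ← hL] at this
    exact this
  have hqg : α / 2 * ‖ys s - y₀‖ ^ 2 ≤ ε := by
    have h1 := hgrow (ys s) (hysY s)
    have h2 := hyseq s
    rw [← hT, ← hε, hdT] at h2
    linarith
  -- projection inequality
  have hproj : ⟪T + γ • g - T', τstar - T'⟫ ≤ (0:ℝ) := by
    rw [PiLp.inner_apply]
    refine Finset.sum_nonpos fun i _ => ?_
    have hup : T' i = max (T i + γ * g i) 0 := hupdate s i
    simp only [RCLike.inner_apply, starRingEnd_apply, star_trivial,
      PiLp.sub_apply, PiLp.add_apply, PiLp.smul_apply, smul_eq_mul]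
    rcases le_or_gt 0 (T i + γ * g i) with h | h
    · rw [hup, max_eq_left h]; simp
    · rw [hup, max_eq_right h.le]
      simp only [sub_zero]
      exact mul_nonpos_of_nonneg_of_nonpos (hτstarpos i) (by linarith)
  -- main algebraic identity
  have key1 : ‖T' - τstar‖ ^ 2 - ‖T - τstar‖ ^ 2
      = 2 * ⟪T' - T, T' - τstar⟫ - ‖T' - T‖ ^ 2 := by
    have h0 : T - τstar = (T' - τstar) - (T' - T) := by abel
    have hns : ‖(T' - τstar) - (T' - T)‖ ^ 2
        = ‖T' - τstar‖ ^ 2 - 2 * ⟪T' - τstar, T' - T⟫ + ‖T' - T‖ ^ 2 :=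
      norm_sub_sq_real _ _
    rw [h0, hns, real_inner_comm (T' - τstar) (T' - T)]
    ring
  have key2 : ⟪T' - T, T' - τstar⟫ ≤ γ * ⟪g, T' - τstar⟫ := by
    have h0 : T + γ • g - T' = γ • g - (T' - T) := by abel
    rw [h0] at hproj
    have h1 : τstar - T' = -(T' - τstar) := by abel
    rw [h1, inner_neg_right, inner_sub_left, real_inner_smul_left] at hproj
    linarith
  have key3 : ⟪g, T' - τstar⟫ = ⟪g, T - τstar⟫ + ⟪g, T' - T⟫ := by
    rw [← inner_add_right]
    congr 1
    abel
  -- dual bound at τstar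
  have key5 : ⟪g, T - τstar⟫ ≤ d T - d τstar + ε := by
    have h1 : d τstar ≤ L (ys s) τstar := hdle τstar (ys s) (hysY s)
    have h2 : L (ys s) τstar = L (ys s) T - ⟪g, T - τstar⟫ := by
      rw [hL, hL, ← hg, inner_sub_right g T τstar, real_inner_comm g T,
        real_inner_comm g τstar]
      ring
    have h3 := hyseq s
    rw [← hT, ← hε] at h3
    rw [h2] at h1
    linarith
  -- dual ascent bound
  set g₀ : EuclideanSpace ℝ κ := A y₀ - b with hg₀
  have key9 : d T + ⟪g₀, T' - T⟫ - ‖A‖ ^ 2 / (2 * α) * ‖T' - T‖ ^ 2 ≤ d T' := by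
    rw [hd T']
    refine le_csInf (hYne.image _) ?_
    rintro _ ⟨y, hy, rfl⟩
    dsimp only
    have h1 : L y T' = L y T + ⟪T' - T, A y - b⟫ := by
      rw [hL, hL, inner_sub_left]; ring
    have h2 : A y - b = g₀ + A (y - y₀) := by
      rw [hg₀, map_sub]; abel
    have h3 : ⟪T' - T, A y - b⟫ = ⟪g₀, T' - T⟫ + ⟪T' - T, A (y - y₀)⟫ := by
      rw [h2, inner_add_right, real_inner_comm]
    have h4 : -(‖T' - T‖ * (‖A‖ * ‖y - y₀‖)) ≤ ⟪T' - T, A (y - y₀)⟫ := by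
      have := abs_real_inner_le_norm (T' - T) (A (y - y₀))
      have hA := A.le_opNorm (y - y₀)
      have h5 : |⟪T' - T, A (y - y₀)⟫| ≤ ‖T' - T‖ * (‖A‖ * ‖y - y₀‖) := by
        refine this.trans ?_
        exact mul_le_mul_of_nonneg_left hA (norm_nonneg _)
      linarith [neg_abs_le ⟪T' - T, A (y - y₀)⟫]
    have h6 := hgrow y hy
    rw [h1, h3]
    have h7 : d T = L y₀ T := hdT
    have h8 : ‖T' - T‖ * (‖A‖ * ‖y - y₀‖) - α / 2 * ‖y - y₀‖ ^ 2
        ≤ ‖A‖ ^ 2 / (2 * α) * ‖T' - T‖ ^ 2 := by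
      rw [show ‖A‖ ^ 2 / (2 * α) * ‖T' - T‖ ^ 2 = (‖A‖ * ‖T' - T‖) ^ 2 / (2 * α) by ring,
        le_div_iff₀ (by positivity)]
      nlinarith [sq_nonneg (‖A‖ * ‖T' - T‖ - α * ‖y - y₀‖)]
    linarith [h4, h6, h8]
  -- cross term bound
  have key8 : 2 * γ * ⟪g - g₀, T' - T⟫ ≤ ‖T' - T‖ ^ 2 / 2 + 2 * γ * ε := by
    have h2 : g - g₀ = A (ys s - y₀) := by rw [hg, hg₀, map_sub]; abel
    have h4 : ⟪g - g₀, T' - T⟫ ≤ ‖A‖ * ‖ys s - y₀‖ * ‖T' - T‖ := by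
      rw [h2]
      have h5 := abs_real_inner_le_norm (A (ys s - y₀)) (T' - T)
      have hA := A.le_opNorm (ys s - y₀)
      calc ⟪A (ys s - y₀), T' - T⟫ ≤ |⟪A (ys s - y₀), T' - T⟫| := le_abs_self _
        _ ≤ ‖A (ys s - y₀)‖ * ‖T' - T‖ := h5
        _ ≤ ‖A‖ * ‖ys s - y₀‖ * ‖T' - T‖ :=
            mul_le_mul_of_nonneg_right hA (norm_nonneg _)
    have hAnn : (0:ℝ) ≤ ‖A‖ := norm_nonneg _
    nlinarith [sq_nonneg (‖A‖ * ‖T' - T‖ - α * ‖ys s - y₀‖), mul_pos hγ hα,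
      norm_nonneg (T' - T), norm_nonneg (ys s - y₀), hqg, hstep, hγ.le, hα.le,
      mul_le_mul_of_nonneg_left h4 (by positivity : (0:ℝ) ≤ 2 * γ)]
  -- assemble
  have hM2 : (0:ℝ) ≤ ‖T' - T‖ ^ 2 := by positivity
  have e1 : 2 * γ * ⟪g, T - τstar⟫ ≤ 2 * γ * (d T - d τstar + ε) :=
    mul_le_mul_of_nonneg_left key5 (by positivity)
  have e2 : 2 * γ * ⟪g₀, T' - T⟫
      ≤ 2 * γ * (d T' - d T) + 2 * γ * (‖A‖ ^ 2 / (2 * α)) * ‖T' - T‖ ^ 2 := by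
    have := mul_le_mul_of_nonneg_left key9 (by positivity : (0:ℝ) ≤ 2 * γ)
    nlinarith [this]
  have e3 : 2 * γ * (‖A‖ ^ 2 / (2 * α)) * ‖T' - T‖ ^ 2 ≤ ‖T' - T‖ ^ 2 / 2 := by
    have h1 : 2 * γ * (‖A‖ ^ 2 / (2 * α)) ≤ 1 / 2 := by
      rw [show 2 * γ * (‖A‖ ^ 2 / (2 * α)) = (2 * γ * ‖A‖ ^ 2) / (2 * α) by ring]
      rw [div_le_div_iff₀ (by positivity) (by norm_num : (0:ℝ) < 2)]
      linarith
    nlinarith [h1, hM2]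
  have e4 : ⟪g, T' - T⟫ = ⟪g₀, T' - T⟫ + ⟪g - g₀, T' - T⟫ := by
    rw [← inner_add_left]; congr 1; abel
  have e5 : 2 * γ * ⟪T' - T, T' - τstar⟫ ≤ 2 * γ * (γ * ⟪g, T' - τstar⟫) :=
    mul_le_mul_of_nonneg_left key2 (by positivity)
  rw [key1]
  have key2' : 2 * ⟪T' - T, T' - τstar⟫ ≤ 2 * γ * ⟪g, T' - τstar⟫ := by
    nlinarith [key2]
  rw [key3] at key2'
  have hfin : 2 * γ * ⟪g, T' - T⟫
      ≤ 2 * γ * (d T' - d T) + ‖T' - T‖ ^ 2 / 2 + ‖T' - T‖ ^ 2 / 2 + 2 * γ * ε := by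
    rw [e4]
    nlinarith [e2, e3, key8]
  nlinarith [key2', e1, hfin]
end

section
/- (Convergence of the average toll.) If 2γ‖A‖² ≤ α, then for every k ≥ 1 the average toll τ̄^k = (1/k)∑_{s=1}^k τ^s satisfies d(τ⋆) − d(τ̄^k) ≤ (1/k)·( (1/(2γ))·‖τ⁰ − τ⋆‖² + 2·E^k ), where E^k = ∑_{s=0}^{k-1} ε^s. -/
set_option maxHeartbeats 1000000
open scoped RealInnerProductSpace

lemma aux_qg {E : Type*} [NormedAddCommGroup E] [NormedSpace ℝ E] {Y : Set E} {α : ℝ}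
    {f : E → ℝ} (hf : StrongConvexOn Y α f) {x : E} (hx : x ∈ Y)
    (hmin : ∀ z ∈ Y, f x ≤ f z) {y : E} (hy : y ∈ Y) :
    f x + α / 2 * ‖y - x‖ ^ 2 ≤ f y := by
  have key : ∀ t : ℝ, t ∈ Set.Ioo (0:ℝ) 1 → f x + (1 - t) * (α / 2 * ‖y - x‖ ^ 2) ≤ f y := by
    rintro t ⟨ht0, ht1⟩
    have h2 := hf.2 hy hx (le_of_lt ht0) (by linarith : (0:ℝ) ≤ 1 - t) (by ring)
    have hmem : t • y + (1 - t) • x ∈ Y :=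
      hf.1 hy hx (le_of_lt ht0) (by linarith) (by ring)
    have h3 := hmin _ hmem
    simp only [smul_eq_mul] at h2
    have h4 : t * (f x + (1 - t) * (α / 2 * ‖y - x‖ ^ 2)) ≤ t * f y := by nlinarith
    exact le_of_mul_le_mul_left h4 ht0
  have hlim : Filter.Tendsto (fun t : ℝ => f x + (1 - t) * (α / 2 * ‖y - x‖ ^ 2))
      (nhdsWithin 0 (Set.Ioi 0)) (nhds (f x + α / 2 * ‖y - x‖ ^ 2)) := by
    have hc : Filter.Tendsto (fun t : ℝ => f x + (1 - t) * (α / 2 * ‖y - x‖ ^ 2))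
        (nhds (0:ℝ)) (nhds (f x + (1 - 0) * (α / 2 * ‖y - x‖ ^ 2))) := by
      apply Continuous.tendsto; continuity
    simpa using hc.mono_left nhdsWithin_le_nhds
  exact le_of_tendsto hlim (Filter.eventually_of_mem
    (Ioo_mem_nhdsGT_of_mem ⟨le_refl 0, one_pos⟩) key)

lemma aux_proj {κ : Type*} [Fintype κ] (v σ p : EuclideanSpace ℝ κ)
    (hσ : ∀ i, 0 ≤ σ i) (hp : ∀ i, p i = max (v i) 0) :
    ⟪v - p, σ - p⟫ ≤ 0 := by
  rw [PiLp.inner_apply]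
  apply Finset.sum_nonpos
  intro i _
  simp only [PiLp.sub_apply, RCLike.inner_apply, conj_trivial]
  rw [hp i]
  rcases le_or_gt 0 (v i) with h | h
  · rw [max_eq_left h]; simp
  · rw [max_eq_right h.le]
    simp only [sub_zero]
    exact mul_nonpos_of_nonneg_of_nonpos (hσ i) h.le

theorem stmt_7
    {ι κ : Type*} [Fintype ι] [Fintype κ] [Nonempty ι] [Nonempty κ]
    (Y : Set (EuclideanSpace ℝ ι)) (hYne : Y.Nonempty) (hYcpt : IsCompact Y)
    (hYconv : Convex ℝ Y)
    (α : ℝ) (hα : 0 < α)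
    (F₀ : EuclideanSpace ℝ ι → ℝ) (hF₀cont : Continuous F₀)
    (hF₀sc : StrongConvexOn Y α F₀)
    (A : EuclideanSpace ℝ ι →L[ℝ] EuclideanSpace ℝ κ) (b : EuclideanSpace ℝ κ)
    (L : EuclideanSpace ℝ ι → EuclideanSpace ℝ κ → ℝ)
    (hL : ∀ y τ, L y τ = F₀ y + ⟪τ, A y - b⟫)
    (d : EuclideanSpace ℝ κ → ℝ)
    (hd : ∀ τ, d τ = sInf ((fun y => L y τ) '' Y))
    (γ : ℝ) (hγ : 0 < γ)
    (τs : ℕ → EuclideanSpace ℝ κ) (ys : ℕ → EuclideanSpace ℝ ι) (εs : ℕ → ℝ)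
    (hτ0 : ∀ i, 0 ≤ τs 0 i)
    (hεs : ∀ s, 0 ≤ εs s)
    (hysY : ∀ s, ys s ∈ Y)
    (hyseq : ∀ s, L (ys s) (τs s) ≤ d (τs s) + εs s)
    (hupdate : ∀ s i, τs (s + 1) i = max (τs s i + γ * (A (ys s) - b) i) 0)
    (τstar : EuclideanSpace ℝ κ) (hτstarpos : ∀ i, 0 ≤ τstar i)
    (hτstarmax : ∀ σ : EuclideanSpace ℝ κ, (∀ i, 0 ≤ σ i) → d σ ≤ d τstar)
    (hstep : 2 * γ * ‖A‖ ^ 2 ≤ α)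
    :
    ∀ k : ℕ, 1 ≤ k →
      d τstar - d ((k : ℝ)⁻¹ • ∑ s ∈ Finset.Icc 1 k, τs s) ≤
        (1 / (k : ℝ)) * (1 / (2 * γ) * ‖τs 0 - τstar‖ ^ 2 + 2 * ∑ s ∈ Finset.range k, εs s) := by
  -- basic setup
  set β : ℝ := 1 / (4 * γ) with hβdef
  have hβpos : 0 < β := by positivity
  have hβ : 4 * γ * β = 1 := by rw [hβdef]; field_simp
  have h2αβ : ‖A‖ ^ 2 ≤ 2 * α * β := by nlinarith [hβpos.le, hγ.le]
  -- continuity of L in y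
  have hLcont : ∀ τ, Continuous fun y => L y τ := by
    intro τ
    have heq : (fun y => L y τ) = fun y : EuclideanSpace ℝ ι => F₀ y + ⟪τ, A y - b⟫ :=
      funext fun y => hL y τ
    rw [heq]
    exact hF₀cont.add (Continuous.inner continuous_const (A.continuous.sub continuous_const))
  -- exact minimizers
  have hmin : ∀ τ : EuclideanSpace ℝ κ, ∃ x ∈ Y, ∀ z ∈ Y, L x τ ≤ L z τ := by
    intro τ
    obtain ⟨x, hxY, hx⟩ := hYcpt.exists_isMinOn hYne (hLcont τ).continuousOn
    exact ⟨x, hxY, fun z hz => hx hz⟩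
  choose yh yhY yhmin using hmin
  have hbdd : ∀ τ, BddBelow ((fun y => L y τ) '' Y) := by
    rintro τ
    exact ⟨L (yh τ) τ, by rintro r ⟨z, hz, rfl⟩; exact yhmin τ z hz⟩
  have hdle : ∀ τ, ∀ z ∈ Y, d τ ≤ L z τ := by
    intro τ z hz
    rw [hd]
    exact csInf_le (hbdd τ) (Set.mem_image_of_mem _ hz)
  have hdeq : ∀ τ, d τ = L (yh τ) τ := by
    intro τ
    refine le_antisymm (hdle τ _ (yhY τ)) ?_
    rw [hd]
    exact le_csInf (hYne.image _) (by rintro r ⟨z, hz, rfl⟩; exact yhmin τ z hz)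
  -- strong convexity of L(·, τ)
  have hLsc : ∀ τ, StrongConvexOn Y α (fun y => L y τ) := by
    intro τ
    refine ⟨hYconv, fun x hx y hy a c ha hc hac => ?_⟩
    have hlin : ⟪τ, A (a • x + c • y) - b⟫ = a * ⟪τ, A x - b⟫ + c * ⟪τ, A y - b⟫ := by
      have hb : A (a • x + c • y) - b = a • (A x - b) + c • (A y - b) := by
        have h1 : (a + c) • b = b := by rw [hac, one_smul]
        calc A (a • x + c • y) - b = a • A x + c • A y - (a + c) • b := by
              rw [h1, map_add, map_smul, map_smul]
          _ = a • (A x - b) + c • (A y - b) := by module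
      rw [hb, inner_add_right, real_inner_smul_right, real_inner_smul_right]
    simp only [hL, smul_eq_mul]
    have hF := hF₀sc.2 hx hy ha hc hac
    simp only [smul_eq_mul] at hF
    rw [hlin]
    linarith
  have hQG : ∀ τ, ∀ z ∈ Y, d τ + α / 2 * ‖z - yh τ‖ ^ 2 ≤ L z τ := by
    intro τ z hz
    rw [hdeq τ]
    exact aux_qg (hLsc τ) (yhY τ) (yhmin τ) hz
  -- linearity of L in τ
  have hLlin : ∀ z σ τ, L z σ = L z τ + ⟪σ - τ, A z - b⟫ := by
    intro z σ τ
    rw [hL, hL, inner_sub_left]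
    ring
  -- smoothness-type lower bound on d
  have hsm : ∀ s σ, d (τs s) + ⟪A (yh (τs s)) - b, σ - τs s⟫ - β * ‖σ - τs s‖ ^ 2 ≤ d σ := by
    intro s σ
    set τ := τs s
    rw [hd σ]
    apply le_csInf (hYne.image _)
    rintro r ⟨z, hz, rfl⟩
    show _ ≤ L z σ
    have e1 : L z σ = L z τ + ⟪σ - τ, A z - b⟫ := hLlin z σ τ
    have e2 : d τ + α / 2 * ‖z - yh τ‖ ^ 2 ≤ L z τ := hQG τ z hz
    have e3 : ⟪σ - τ, A z - b⟫ = ⟪A (yh τ) - b, σ - τ⟫ + ⟪σ - τ, A (z - yh τ)⟫ := by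
      have hz2 : A z - b = (A (yh τ) - b) + A (z - yh τ) := by
        rw [map_sub]; abel
      rw [hz2, inner_add_right, real_inner_comm (σ - τ)]
    have e4 : -(‖A‖ * ‖σ - τ‖ * ‖z - yh τ‖) ≤ ⟪σ - τ, A (z - yh τ)⟫ := by
      have h1 := abs_real_inner_le_norm (σ - τ) (A (z - yh τ))
      have h2 := A.le_opNorm (z - yh τ)
      have h3 := neg_abs_le ⟪σ - τ, A (z - yh τ)⟫
      nlinarith [norm_nonneg (σ - τ), norm_nonneg (A (z - yh τ))]
    have e5 : -(β * ‖σ - τ‖ ^ 2) ≤ α / 2 * ‖z - yh τ‖ ^ 2 - ‖A‖ * ‖σ - τ‖ * ‖z - yh τ‖ := by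
      nlinarith [sq_nonneg (α * ‖z - yh τ‖ - ‖A‖ * ‖σ - τ‖),
        mul_le_mul_of_nonneg_right h2αβ (sq_nonneg ‖σ - τ‖), hα, norm_nonneg (σ - τ),
        norm_nonneg (z - yh τ)]
    rw [e1, e3]
    linarith
  -- the per-step key inequality
  have hkey : ∀ s, d τstar - d (τs (s + 1)) ≤
      2 * εs s + 2 * β * (‖τs s - τstar‖ ^ 2 - ‖τs (s + 1) - τstar‖ ^ 2) := by
    intro s
    set τ := τs s with hτdef
    set τ' := τs (s + 1) with hτ'def
    set y := ys s with hydef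
    set g : EuclideanSpace ℝ κ := A y - b with hgdef
    set gh : EuclideanSpace ℝ κ := A (yh τ) - b with hghdef
    set ε := εs s with hεdef
    -- distance of approximate to exact minimizer
    have hc : α / 2 * ‖y - yh τ‖ ^ 2 ≤ ε := by
      have := hQG τ y (hysY s)
      have h2 := hyseq s
      rw [← hτdef, ← hydef] at h2
      linarith
    -- error vector bound
    have hδ2 : γ * ‖g - gh‖ ^ 2 ≤ ε := by
      have h1 : g - gh = A (y - yh τ) := by rw [hgdef, hghdef, map_sub]; abel
      have h2 : ‖g - gh‖ ≤ ‖A‖ * ‖y - yh τ‖ := by rw [h1]; exact A.le_opNorm _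
      have h3 : ‖g - gh‖ ^ 2 ≤ ‖A‖ ^ 2 * ‖y - yh τ‖ ^ 2 := by
        nlinarith [norm_nonneg (g - gh), norm_nonneg (y - yh τ), norm_nonneg A]
      nlinarith [norm_nonneg (y - yh τ), sq_nonneg ‖y - yh τ‖, hγ, hα,
        mul_le_mul_of_nonneg_left hc hγ.le]
    -- concavity-type upper bound
    have hconc : d τstar ≤ d τ + ε + ⟪g, τstar - τ⟫ := by
      have h1 : d τstar ≤ L y τstar := hdle τstar y (hysY s)
      have h2 : L y τstar = L y τ + ⟪τstar - τ, g⟫ := hLlin y τstar τ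
      have h3 := hyseq s
      rw [← hτdef, ← hydef] at h3
      rw [real_inner_comm] at h2
      linarith
    -- smoothness lower bound at τ'
    have hsm' : d τ + ⟪gh, τ' - τ⟫ - β * ‖τ' - τ‖ ^ 2 ≤ d τ' := hsm s τ'
    -- projection inequality
    have hproj : γ * ⟪g, τstar - τ'⟫ ≤ ⟪τ' - τ, τstar - τ'⟫ := by
      have hv : ∀ i, τ' i = max ((τ + γ • g) i) 0 := by
        intro i
        rw [hτ'def, hupdate s i]
        congr 1
      have h0 := aux_proj (τ + γ • g) τstar τ' hτstarpos hv
      have h1 : τ + γ • g - τ' = (τ - τ') + γ • g := by abel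
      rw [h1, inner_add_left, real_inner_smul_left] at h0
      have h2 : ⟪τ - τ', τstar - τ'⟫ = -⟪τ' - τ, τstar - τ'⟫ := by
        rw [← inner_neg_left]; congr 1; abel
      rw [h2] at h0
      linarith
    -- parallelogram-type identity
    have hid : ⟪τ' - τ, τstar - τ'⟫ =
        (‖τ - τstar‖ ^ 2 - ‖τ' - τ‖ ^ 2 - ‖τ' - τstar‖ ^ 2) / 2 := by
      have h1 : τstar - τ = (τ' - τ) + (τstar - τ') := by abel
      have h2 : ‖τstar - τ‖ ^ 2 = ‖τ' - τ‖ ^ 2 + 2 * ⟪τ' - τ, τstar - τ'⟫ + ‖τstar - τ'‖ ^ 2 := by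
        rw [h1]; exact norm_add_sq_real _ _
      have h3 : ‖τstar - τ‖ = ‖τ - τstar‖ := norm_sub_rev _ _
      have h4 : ‖τstar - τ'‖ = ‖τ' - τstar‖ := norm_sub_rev _ _
      rw [h3, h4] at h2
      linarith
    -- Cauchy-Schwarz + Young
    have hcs : ⟪g - gh, τ' - τ⟫ ≤ ε + β * ‖τ' - τ‖ ^ 2 := by
      have h1 := real_inner_le_norm (g - gh) (τ' - τ)
      nlinarith [sq_nonneg (2 * γ * ‖g - gh‖ - ‖τ' - τ‖), hγ, hβ, hβpos,
        norm_nonneg (g - gh), norm_nonneg (τ' - τ)]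
    -- combine
    have hdec1 : ⟪g, τstar - τ⟫ = ⟪g, τstar - τ'⟫ + ⟪g, τ' - τ⟫ := by
      rw [← inner_add_right]; congr 1; abel
    have hdec2 : ⟪g - gh, τ' - τ⟫ = ⟪g, τ' - τ⟫ - ⟪gh, τ' - τ⟫ := inner_sub_left _ _ _
    have hp1 : ⟪g, τstar - τ'⟫ ≤ 4 * β * ⟪τ' - τ, τstar - τ'⟫ := by
      nlinarith [hproj, hβpos]
    have h4 : 4 * β * ⟪τ' - τ, τstar - τ'⟫ =
        2 * β * ‖τ - τstar‖ ^ 2 - 2 * β * ‖τ' - τ‖ ^ 2 - 2 * β * ‖τ' - τstar‖ ^ 2 := by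
      rw [hid]; ring
    nlinarith [hconc, hsm', hcs, hp1, h4, hdec1, hdec2]
  -- now the summation and averaging
  intro k hk
  have hkpos : (0:ℝ) < (k : ℝ) := by exact_mod_cast hk
  have h2β : 1 / (2 * γ) = 2 * β := by rw [hβdef]; field_simp; ring
  set τbar := (k : ℝ)⁻¹ • ∑ s ∈ Finset.Icc 1 k, τs s with hτbar
  have hsum1 : ∑ s ∈ Finset.range k, (d τstar - d (τs (s + 1))) ≤
      2 * ∑ s ∈ Finset.range k, εs s + 2 * β * ‖τs 0 - τstar‖ ^ 2 := by
    have h1 : ∑ s ∈ Finset.range k, (d τstar - d (τs (s + 1))) ≤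
        ∑ s ∈ Finset.range k, (2 * εs s +
          2 * β * (‖τs s - τstar‖ ^ 2 - ‖τs (s + 1) - τstar‖ ^ 2)) :=
      Finset.sum_le_sum fun s _ => hkey s
    have h2 : ∑ s ∈ Finset.range k, (2 * εs s +
          2 * β * (‖τs s - τstar‖ ^ 2 - ‖τs (s + 1) - τstar‖ ^ 2)) =
        2 * ∑ s ∈ Finset.range k, εs s +
          2 * β * (‖τs 0 - τstar‖ ^ 2 - ‖τs k - τstar‖ ^ 2) := by
      rw [Finset.sum_add_distrib, ← Finset.mul_sum, ← Finset.mul_sum,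
        Finset.sum_range_sub' (fun s => ‖τs s - τstar‖ ^ 2) k]
    have h3 : 0 ≤ ‖τs k - τstar‖ ^ 2 := sq_nonneg _
    nlinarith [hβpos]
  have hcard : ((Finset.Icc 1 k).card : ℝ) = (k : ℝ) := by
    rw [Nat.card_Icc]; push_cast; ring
  have hjensen : (k : ℝ)⁻¹ * ∑ s ∈ Finset.Icc 1 k, d (τs s) ≤ d τbar := by
    rw [hd τbar]
    apply le_csInf (hYne.image _)
    rintro r ⟨z, hz, rfl⟩
    show _ ≤ L z τbar
    have e1 : L z τbar = (k : ℝ)⁻¹ * ∑ s ∈ Finset.Icc 1 k, L z (τs s) := by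
      simp only [hL]
      rw [hτbar, real_inner_smul_left, sum_inner, Finset.sum_add_distrib,
        Finset.sum_const, nsmul_eq_mul, hcard, mul_add, ← mul_assoc,
        inv_mul_cancel₀ hkpos.ne', one_mul]
    rw [e1]
    have h2 : ∑ s ∈ Finset.Icc 1 k, d (τs s) ≤ ∑ s ∈ Finset.Icc 1 k, L z (τs s) :=
      Finset.sum_le_sum fun s _ => hdle (τs s) z hz
    exact mul_le_mul_of_nonneg_left h2 (by positivity)
  have hsum2 : ∑ s ∈ Finset.Icc 1 k, d (τs s) = ∑ s ∈ Finset.range k, d (τs (s + 1)) := by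
    rw [← Finset.Ico_add_one_right_eq_Icc, Finset.sum_Ico_eq_sum_range]
    simp [add_comm]
  have e2 : d τstar - (k : ℝ)⁻¹ * ∑ s ∈ Finset.Icc 1 k, d (τs s) =
      (k : ℝ)⁻¹ * ∑ s ∈ Finset.range k, (d τstar - d (τs (s + 1))) := by
    rw [hsum2, Finset.sum_sub_distrib, Finset.sum_const, Finset.card_range, nsmul_eq_mul,
      mul_sub, ← mul_assoc, inv_mul_cancel₀ hkpos.ne', one_mul]
  have e3 : (k : ℝ)⁻¹ * ∑ s ∈ Finset.range k, (d τstar - d (τs (s + 1))) ≤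
      (k : ℝ)⁻¹ * (2 * ∑ s ∈ Finset.range k, εs s + 2 * β * ‖τs 0 - τstar‖ ^ 2) :=
    mul_le_mul_of_nonneg_left hsum1 (by positivity)
  have hfin : d τstar - d τbar ≤
      (k : ℝ)⁻¹ * (2 * ∑ s ∈ Finset.range k, εs s + 2 * β * ‖τs 0 - τstar‖ ^ 2) := by
    linarith [hjensen, e2 ▸ e3]
  calc d τstar - d τbar ≤
      (k : ℝ)⁻¹ * (2 * ∑ s ∈ Finset.range k, εs s + 2 * β * ‖τs 0 - τstar‖ ^ 2) := hfin
    _ = (1 / (k : ℝ)) * (1 / (2 * γ) * ‖τs 0 - τstar‖ ^ 2 + 2 * ∑ s ∈ Finset.range k, εs s) := by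
        rw [h2β, one_div]; ring
end

section
/- (Bounded toll iterates.) If 2γ‖A‖² ≤ α, then for every k ∈ ℕ, ‖τ^k − τ⋆‖² ≤ ‖τ⁰ − τ⋆‖² + 4γ·E^k, where E^k = ∑_{s=0}^{k-1} ε^s. -/
open scoped RealInnerProductSpace

set_option maxHeartbeats 1000000 in
theorem stmt_8
    {ι κ : Type*} [Fintype ι] [Fintype κ] [Nonempty ι] [Nonempty κ]
    (Y : Set (EuclideanSpace ℝ ι)) (hYne : Y.Nonempty) (hYcpt : IsCompact Y)
    (hYconv : Convex ℝ Y)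
    (α : ℝ) (hα : 0 < α)
    (F₀ : EuclideanSpace ℝ ι → ℝ) (hF₀cont : Continuous F₀)
    (hF₀sc : StrongConvexOn Y α F₀)
    (A : EuclideanSpace ℝ ι →L[ℝ] EuclideanSpace ℝ κ) (b : EuclideanSpace ℝ κ)
    (L : EuclideanSpace ℝ ι → EuclideanSpace ℝ κ → ℝ)
    (hL : ∀ y τ, L y τ = F₀ y + ⟪τ, A y - b⟫)
    (d : EuclideanSpace ℝ κ → ℝ)
    (hd : ∀ τ, d τ = sInf ((fun y => L y τ) '' Y))
    (γ : ℝ) (hγ : 0 < γ)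
    (τs : ℕ → EuclideanSpace ℝ κ) (ys : ℕ → EuclideanSpace ℝ ι) (εs : ℕ → ℝ)
    (hτ0 : ∀ i, 0 ≤ τs 0 i)
    (hεs : ∀ s, 0 ≤ εs s)
    (hysY : ∀ s, ys s ∈ Y)
    (hyseq : ∀ s, L (ys s) (τs s) ≤ d (τs s) + εs s)
    (hupdate : ∀ s i, τs (s + 1) i = max (τs s i + γ * (A (ys s) - b) i) 0)
    (τstar : EuclideanSpace ℝ κ) (hτstarpos : ∀ i, 0 ≤ τstar i)
    (hτstarmax : ∀ σ : EuclideanSpace ℝ κ, (∀ i, 0 ≤ σ i) → d σ ≤ d τstar)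
    (hstep : 2 * γ * ‖A‖ ^ 2 ≤ α)
    :
    ∀ k : ℕ,
      ‖τs k - τstar‖ ^ 2 ≤ ‖τs 0 - τstar‖ ^ 2 + 4 * γ * ∑ s ∈ Finset.range k, εs s := by
  classical
  -- continuity of L in y
  have hLcont : ∀ τ : EuclideanSpace ℝ κ, Continuous fun y => L y τ := by
    intro τ
    have : (fun y => L y τ) = fun y => F₀ y + ⟪τ, A y - b⟫ := funext fun y => hL y τ
    rw [this]
    exact hF₀cont.add (continuous_const.inner (A.continuous.sub continuous_const))
  -- exact minimizers
  have hmin : ∀ τ : EuclideanSpace ℝ κ, ∃ y, y ∈ Y ∧ ∀ z ∈ Y, L y τ ≤ L z τ := by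
    intro τ
    obtain ⟨y, hyY, hy⟩ := hYcpt.exists_isMinOn hYne ((hLcont τ).continuousOn)
    exact ⟨y, hyY, fun z hz => hy hz⟩
  choose w hwY hwmin using hmin
  have hdval : ∀ τ, d τ = L (w τ) τ := by
    intro τ
    rw [hd]
    refine IsLeast.csInf_eq ⟨⟨w τ, hwY τ, rfl⟩, ?_⟩
    rintro x ⟨z, hz, rfl⟩
    exact hwmin τ z hz
  have hdle : ∀ τ, ∀ y ∈ Y, d τ ≤ L y τ := by
    intro τ y hy
    rw [hdval τ]; exact hwmin τ y hy
  -- translation identity in the toll variable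
  have hLshift : ∀ (y : EuclideanSpace ℝ ι) (σ τ : EuclideanSpace ℝ κ),
      L y σ = L y τ + ⟪σ - τ, A y - b⟫ := by
    intro y σ τ
    rw [hL, hL, inner_sub_left]
    ring
  -- quadratic growth from strong convexity
  have hgrow : ∀ τ, ∀ y ∈ Y, d τ + α / 2 * ‖y - w τ‖ ^ 2 ≤ L y τ := by
    intro τ y hy
    set K := α / 2 * ‖y - w τ‖ ^ 2 with hKdef
    have hK : 0 ≤ K := by positivity
    have key : ∀ t : ℝ, 0 < t → t ≤ 1 → (1 - t) * K ≤ L y τ - d τ := by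
      intro t ht ht1
      have hconv0 := hF₀sc.2 hy (hwY τ) ht.le (by linarith : (0:ℝ) ≤ 1 - t)
        (by ring : t + (1 - t) = 1)
      have hconv : F₀ (t • y + (1 - t) • w τ)
          ≤ t * F₀ y + (1 - t) * F₀ (w τ) - t * (1 - t) * K := by
        rw [hKdef]
        simpa [smul_eq_mul] using hconv0
      have hlin : ⟪τ, A (t • y + (1 - t) • w τ) - b⟫
          = t * ⟪τ, A y - b⟫ + (1 - t) * ⟪τ, A (w τ) - b⟫ := by
        have hAeq : A (t • y + (1 - t) • w τ) - b
            = t • (A y - b) + (1 - t) • (A (w τ) - b) := by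
          rw [map_add, map_smul, map_smul]
          module
        rw [hAeq, inner_add_right, real_inner_smul_right, real_inner_smul_right]
      have hmem : t • y + (1 - t) • w τ ∈ Y :=
        hYconv hy (hwY τ) ht.le (by linarith) (by ring)
      have h2 := hdle τ _ hmem
      have hLpt : L (t • y + (1 - t) • w τ) τ ≤ t * L y τ + (1 - t) * L (w τ) τ
          - t * (1 - t) * K := by
        rw [hL (t • y + (1 - t) • w τ) τ, hL y τ, hL (w τ) τ, hlin]
        nlinarith [hconv]
      rw [hdval τ] at h2 ⊢
      nlinarith
    by_contra hcon
    push_neg at hcon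
    have hG : 0 ≤ L y τ - d τ := by have := hdle τ y hy; linarith
    set G := L y τ - d τ with hGdef
    have hGK : G < K := by linarith
    have hKpos : 0 < K := lt_of_le_of_lt hG hGK
    have htpos : 0 < (K - G) / (2 * K) := div_pos (by linarith) (by linarith)
    have htle : (K - G) / (2 * K) ≤ 1 := by
      rw [div_le_one (by positivity)]
      linarith
    have h := key _ htpos htle
    have heq : (1 - (K - G) / (2 * K)) * K = K - (K - G) / 2 := by
      field_simp
    rw [heq] at h
    linarith
  -- nonnegativity of the iterates
  have hτpos : ∀ s i, 0 ≤ τs s i := by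
    intro s
    induction s with
    | zero => exact hτ0
    | succ n _ => intro i; rw [hupdate]; exact le_max_right _ _
  -- squared norm as a sum
  have hnormsq : ∀ x : EuclideanSpace ℝ κ, ‖x‖ ^ 2 = ∑ i, (x i) ^ 2 := by
    intro x
    rw [EuclideanSpace.norm_eq, Real.sq_sqrt (Finset.sum_nonneg fun i _ => sq_nonneg _)]
    try simp [Real.norm_eq_abs, sq_abs]
  -- per-step inequality
  have hstepineq : ∀ s : ℕ,
      ‖τs (s + 1) - τstar‖ ^ 2 ≤ ‖τs s - τstar‖ ^ 2 + 4 * γ * εs s := by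
    intro s
    set g : EuclideanSpace ℝ κ := A (ys s) - b with hgdef
    set v : EuclideanSpace ℝ κ := τs s + γ • g with hvdef
    have hcoord : ∀ i, τs (s + 1) i = max (v i) 0 := by
      intro i
      rw [hupdate s i]
      have hvi : v i = τs s i + γ * (A (ys s) - b) i := by
        simp [hvdef, hgdef]
      rw [hvi]
    -- projection inequality
    have hproj : ‖τs (s + 1) - τstar‖ ^ 2 ≤ ‖v - τstar‖ ^ 2 - ‖v - τs (s + 1)‖ ^ 2 := by
      have hpt : ∀ i, (τs (s + 1) i - τstar i) ^ 2
          ≤ (v i - τstar i) ^ 2 - (v i - τs (s + 1) i) ^ 2 := by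
        intro i
        rw [hcoord i]
        rcases le_total (v i) 0 with h | h
        · rw [max_eq_right h]
          nlinarith [mul_nonneg (neg_nonneg.2 h) (hτstarpos i)]
        · rw [max_eq_left h]
          nlinarith
      have h1 : ‖τs (s + 1) - τstar‖ ^ 2 = ∑ i, (τs (s + 1) i - τstar i) ^ 2 := by
        rw [hnormsq]; apply Finset.sum_congr rfl; intro i _; simp
      have h2 : ‖v - τstar‖ ^ 2 = ∑ i, (v i - τstar i) ^ 2 := by
        rw [hnormsq]; apply Finset.sum_congr rfl; intro i _; simp
      have h3 : ‖v - τs (s + 1)‖ ^ 2 = ∑ i, (v i - τs (s + 1) i) ^ 2 := by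
        rw [hnormsq]; apply Finset.sum_congr rfl; intro i _; simp
      rw [h1, h2, h3, ← Finset.sum_sub_distrib]
      exact Finset.sum_le_sum fun i _ => hpt i
    -- expansions
    have hexp1 : ‖v - τstar‖ ^ 2
        = ‖τs s - τstar‖ ^ 2 + 2 * γ * ⟪g, τs s - τstar⟫ + γ ^ 2 * ‖g‖ ^ 2 := by
      have : v - τstar = (τs s - τstar) + γ • g := by rw [hvdef]; abel
      rw [this, norm_add_sq_real, real_inner_smul_right, norm_smul]
      rw [real_inner_comm]
      simp only [Real.norm_eq_abs, mul_pow, sq_abs]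
      ring
    set Δ : EuclideanSpace ℝ κ := τs (s + 1) - τs s with hΔdef
    have hexp2 : ‖v - τs (s + 1)‖ ^ 2
        = γ ^ 2 * ‖g‖ ^ 2 - 2 * γ * ⟪g, Δ⟫ + ‖Δ‖ ^ 2 := by
      have : v - τs (s + 1) = γ • g - Δ := by rw [hvdef, hΔdef]; abel
      rw [this, norm_sub_sq_real, real_inner_smul_left, norm_smul]
      simp only [Real.norm_eq_abs, mul_pow, sq_abs]
      ring
    -- supergradient inequality at τ⋆
    have hI2 : ⟪g, τs s - τstar⟫ ≤ d (τs s) - d τstar + εs s := by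
      have h1 : d τstar ≤ L (ys s) τstar := hdle τstar (ys s) (hysY s)
      rw [hLshift (ys s) τstar (τs s)] at h1
      have h2 := hyseq s
      have h3 : ⟪τstar - τs s, A (ys s) - b⟫ = -⟪g, τs s - τstar⟫ := by
        rw [← neg_sub (τs s) τstar, inner_neg_left, real_inner_comm, hgdef]
      rw [h3] at h1
      linarith
    -- bound on ⟪g, Δ⟫
    set τ' : EuclideanSpace ℝ κ := τs (s + 1) with hτ'def
    set r : ℝ := ‖w τ' - w (τs s)‖ with hrdef
    set m : ℝ := ‖ys s - w (τs s)‖ with hmdef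
    set q : ℝ := ‖Δ‖ with hqdef
    have hm : α / 2 * m ^ 2 ≤ εs s := by
      have := hgrow (τs s) (ys s) (hysY s)
      have h2 := hyseq s
      rw [hmdef]
      linarith
    have hI1 : ⟪g, Δ⟫ ≤ (d τ' - d (τs s)) - α / 2 * r ^ 2 + ‖A‖ * (m + r) * q := by
      have hdt' : d τ' = L (w τ') (τs s) + ⟪Δ, A (w τ') - b⟫ := by
        rw [hdval τ', hLshift (w τ') τ' (τs s)]
      have hgr : d (τs s) + α / 2 * r ^ 2 ≤ L (w τ') (τs s) := by
        have := hgrow (τs s) (w τ') (hwY τ')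
        rw [hrdef]
        linarith
      have hpart1 : ⟪A (w τ') - b, Δ⟫ ≤ (d τ' - d (τs s)) - α / 2 * r ^ 2 := by
        rw [real_inner_comm]
        linarith
      have hsplit : g = (A (w τ') - b) + A (ys s - w τ') := by
        rw [hgdef, map_sub]; abel
      have hpart2 : ⟪A (ys s - w τ'), Δ⟫ ≤ ‖A‖ * (m + r) * q := by
        calc ⟪A (ys s - w τ'), Δ⟫ ≤ ‖A (ys s - w τ')‖ * ‖Δ‖ := real_inner_le_norm _ _
          _ ≤ (‖A‖ * ‖ys s - w τ'‖) * ‖Δ‖ := by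
              gcongr
              exact A.le_opNorm _
          _ ≤ (‖A‖ * (m + r)) * ‖Δ‖ := by
              gcongr
              calc ‖ys s - w τ'‖ = ‖(ys s - w (τs s)) + (w (τs s) - w τ')‖ := by
                    rw [sub_add_sub_cancel]
                _ ≤ ‖ys s - w (τs s)‖ + ‖w (τs s) - w τ'‖ := norm_add_le _ _
                _ = m + r := by rw [hmdef, hrdef, norm_sub_rev (w (τs s))]
          _ = ‖A‖ * (m + r) * q := by rw [hqdef]
      calc ⟪g, Δ⟫ = ⟪A (w τ') - b, Δ⟫ + ⟪A (ys s - w τ'), Δ⟫ := by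
            rw [hsplit, inner_add_left]
        _ ≤ (d τ' - d (τs s)) - α / 2 * r ^ 2 + ‖A‖ * (m + r) * q := by linarith
    have hd' : d τ' ≤ d τstar := hτstarmax τ' (fun i => hτpos (s + 1) i)
    -- combine
    have hP : ‖τ' - τstar‖ ^ 2 ≤ ‖τs s - τstar‖ ^ 2
        + 2 * γ * ⟪g, τs s - τstar⟫ + 2 * γ * ⟪g, Δ⟫ - q ^ 2 := by
      rw [hqdef]
      linarith [hproj, hexp1, hexp2]
    have hγ2 : (0:ℝ) ≤ 2 * γ := by linarith
    have e1 := mul_le_mul_of_nonneg_left hI1 hγ2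
    have e2 := mul_le_mul_of_nonneg_left hI2 hγ2
    have e3 := mul_le_mul_of_nonneg_left hd' hγ2
    have e4 := mul_le_mul_of_nonneg_left hm hγ2
    have hN : (0:ℝ) ≤ ‖A‖ := norm_nonneg _
    have hmn : (0:ℝ) ≤ m := norm_nonneg _
    have hrn : (0:ℝ) ≤ r := norm_nonneg _
    have hqn : (0:ℝ) ≤ q := norm_nonneg _
    have hprod : 0 ≤ γ * ((α - 2 * γ * ‖A‖ ^ 2) * (m ^ 2 + r ^ 2)) := by
      apply mul_nonneg hγ.le
      apply mul_nonneg (by linarith) (by positivity)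
    have habs : 2 * γ * ‖A‖ * (m + r) * q ≤ γ * α * (m ^ 2 + r ^ 2) + q ^ 2 := by
      nlinarith [sq_nonneg (q - γ * ‖A‖ * (m + r)), sq_nonneg (γ * ‖A‖ * (m - r)), hprod]
    linarith [hP, e1, e2, e3, e4, habs]
  -- induction
  intro k
  induction k with
  | zero => simp
  | succ n ih =>
      rw [Finset.sum_range_succ]
      have := hstepineq n
      linarith
end

section
/- (Accumulated constraint violation is dominated by the toll.) For every k ≥ 1, the average response ȳ^k = (1/k)∑_{s=0}^{k-1} y^s satisfies γ·k·[A ȳ^k − b]_+ ≤ τ^k componentwise, where [v]_+ denotes the componentwise positive part of v. -/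
open scoped RealInnerProductSpace

theorem stmt_10
    {ι κ : Type*} [Fintype ι] [Fintype κ] [Nonempty ι] [Nonempty κ]
    (Y : Set (EuclideanSpace ℝ ι)) (hYne : Y.Nonempty) (hYcpt : IsCompact Y)
    (hYconv : Convex ℝ Y)
    (α : ℝ) (hα : 0 < α)
    (F₀ : EuclideanSpace ℝ ι → ℝ) (hF₀cont : Continuous F₀)
    (hF₀sc : StrongConvexOn Y α F₀)
    (A : EuclideanSpace ℝ ι →L[ℝ] EuclideanSpace ℝ κ) (b : EuclideanSpace ℝ κ)
    (L : EuclideanSpace ℝ ι → EuclideanSpace ℝ κ → ℝ)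
    (hL : ∀ y τ, L y τ = F₀ y + ⟪τ, A y - b⟫)
    (d : EuclideanSpace ℝ κ → ℝ)
    (hd : ∀ τ, d τ = sInf ((fun y => L y τ) '' Y))
    (γ : ℝ) (hγ : 0 < γ)
    (τs : ℕ → EuclideanSpace ℝ κ) (ys : ℕ → EuclideanSpace ℝ ι) (εs : ℕ → ℝ)
    (hτ0 : ∀ i, 0 ≤ τs 0 i)
    (hεs : ∀ s, 0 ≤ εs s)
    (hysY : ∀ s, ys s ∈ Y)
    (hyseq : ∀ s, L (ys s) (τs s) ≤ d (τs s) + εs s)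
    (hupdate : ∀ s i, τs (s + 1) i = max (τs s i + γ * (A (ys s) - b) i) 0)
    :
    ∀ k : ℕ, 1 ≤ k → ∀ i : κ,
      γ * k * max ((A ((k : ℝ)⁻¹ • ∑ s ∈ Finset.range k, ys s) - b) i) 0 ≤ τs k i := by

  have hnn : ∀ s i, 0 ≤ τs s i := by
    intro s i
    cases s with
    | zero => exact hτ0 i
    | succ n => rw [hupdate]; exact le_max_right _ _
  have key : ∀ k i, τs 0 i + γ * ∑ s ∈ Finset.range k, ((A (ys s) : EuclideanSpace ℝ κ) i - b i) ≤ τs k i := by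
    intro k i
    induction k with
    | zero => simp
    | succ n ih =>
      rw [Finset.sum_range_succ, mul_add, ← add_assoc, hupdate]
      refine le_trans ?_ (le_max_left _ _)
      have : ((A (ys n) - b : EuclideanSpace ℝ κ)) i = (A (ys n) : EuclideanSpace ℝ κ) i - b i := rfl
      rw [this]
      linarith
  intro k hk i
  have hk0 : (k : ℝ) ≠ 0 := Nat.cast_ne_zero.mpr (by omega)
  have hE : ((A ((k : ℝ)⁻¹ • ∑ s ∈ Finset.range k, ys s) - b : EuclideanSpace ℝ κ)) i
      = (k : ℝ)⁻¹ * ∑ s ∈ Finset.range k, ((A (ys s) : EuclideanSpace ℝ κ) i - b i) := by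
    have : ((A ((k : ℝ)⁻¹ • ∑ s ∈ Finset.range k, ys s) - b : EuclideanSpace ℝ κ)) i
        = (k : ℝ)⁻¹ * ((A (∑ s ∈ Finset.range k, ys s) : EuclideanSpace ℝ κ) i) - b i := by
      rw [map_smul]; rfl
    have hb : ∑ _s ∈ Finset.range k, b i = (k : ℝ) * b i := by
      rw [Finset.sum_const, Finset.card_range, nsmul_eq_mul]
    have hAsum : ((∑ s ∈ Finset.range k, A (ys s) : EuclideanSpace ℝ κ)) i
        = ∑ s ∈ Finset.range k, (A (ys s) : EuclideanSpace ℝ κ) i := by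
      rw [WithLp.ofLp_sum]
      exact Finset.sum_apply i (Finset.range k) fun s => A (ys s)
    rw [this, map_sum, hAsum, Finset.sum_sub_distrib, hb, mul_sub]
    field_simp
  rw [hE]
  rcases le_or_gt ((k : ℝ)⁻¹ * ∑ s ∈ Finset.range k, ((A (ys s) : EuclideanSpace ℝ κ) i - b i)) 0 with h | h
  · rw [max_eq_right h]
    simpa using hnn k i
  · rw [max_eq_left h.le]
    have h2 : γ * ↑k * ((k : ℝ)⁻¹ * ∑ s ∈ Finset.range k, ((A (ys s) : EuclideanSpace ℝ κ) i - b i))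
        = γ * ∑ s ∈ Finset.range k, ((A (ys s) : EuclideanSpace ℝ κ) i - b i) := by
      field_simp
    rw [h2]
    have := key k i
    have h0 := hτ0 i
    linarith
end

section
/- (Lower bound on the primal suboptimality of the average response.) If 2γ‖A‖² ≤ α, then for every k ≥ 1 the average response ȳ^k = (1/k)∑_{s=0}^{k-1} y^s satisfies F₀(y⋆) − F₀(ȳ^k) ≤ (‖τ⋆‖/(γk))·( ‖τ⋆‖ + ‖τ⁰ − τ⋆‖ + 2·√(γ·E^k) ), where E^k = ∑_{s=0}^{k-1} ε^s. -/
set_option maxHeartbeats 1000000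


open scoped RealInnerProductSpace

private lemma eucl_inner_sum {κ : Type*} [Fintype κ] (x y : EuclideanSpace ℝ κ) :
    ⟪x, y⟫ = ∑ i, x i * y i := by
  simp [PiLp.inner_apply, RCLike.inner_apply, conj_trivial]
  exact Finset.sum_congr rfl fun i _ => mul_comm _ _

private lemma eucl_normsq {κ : Type*} [Fintype κ] (x : EuclideanSpace ℝ κ) :
    ‖x‖ ^ 2 = ∑ i, x i ^ 2 := by
  rw [EuclideanSpace.norm_eq, Real.sq_sqrt (by positivity)]
  simp [Real.norm_eq_abs, sq_abs]

theorem stmt_13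
    {ι κ : Type*} [Fintype ι] [Fintype κ] [Nonempty ι] [Nonempty κ]
    (Y : Set (EuclideanSpace ℝ ι)) (hYne : Y.Nonempty) (hYcpt : IsCompact Y)
    (hYconv : Convex ℝ Y)
    (α : ℝ) (hα : 0 < α)
    (F₀ : EuclideanSpace ℝ ι → ℝ) (hF₀cont : Continuous F₀)
    (hF₀sc : StrongConvexOn Y α F₀)
    (A : EuclideanSpace ℝ ι →L[ℝ] EuclideanSpace ℝ κ) (b : EuclideanSpace ℝ κ)
    (L : EuclideanSpace ℝ ι → EuclideanSpace ℝ κ → ℝ)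
    (hL : ∀ y τ, L y τ = F₀ y + ⟪τ, A y - b⟫)
    (d : EuclideanSpace ℝ κ → ℝ)
    (hd : ∀ τ, d τ = sInf ((fun y => L y τ) '' Y))
    (γ : ℝ) (hγ : 0 < γ)
    (τs : ℕ → EuclideanSpace ℝ κ) (ys : ℕ → EuclideanSpace ℝ ι) (εs : ℕ → ℝ)
    (hτ0 : ∀ i, 0 ≤ τs 0 i)
    (hεs : ∀ s, 0 ≤ εs s)
    (hysY : ∀ s, ys s ∈ Y)
    (hyseq : ∀ s, L (ys s) (τs s) ≤ d (τs s) + εs s)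
    (hupdate : ∀ s i, τs (s + 1) i = max (τs s i + γ * (A (ys s) - b) i) 0)
    (τstar : EuclideanSpace ℝ κ) (hτstarpos : ∀ i, 0 ≤ τstar i)
    (hτstarmax : ∀ σ : EuclideanSpace ℝ κ, (∀ i, 0 ≤ σ i) → d σ ≤ d τstar)
    (ystar : EuclideanSpace ℝ ι) (hystarY : ystar ∈ Y)
    (hystarL : L ystar τstar = d τstar)
    (hystarfeas : ∀ i, (A ystar - b) i ≤ 0)
    (hcompl : ⟪τstar, A ystar - b⟫ = 0)
    (hstep : 2 * γ * ‖A‖ ^ 2 ≤ α)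
    :
    ∀ k : ℕ, 1 ≤ k →
      F₀ ystar - F₀ ((k : ℝ)⁻¹ • ∑ s ∈ Finset.range k, ys s) ≤
        ‖τstar‖ / (γ * k) * (‖τstar‖ + ‖τs 0 - τstar‖ +
          2 * Real.sqrt (γ * ∑ s ∈ Finset.range k, εs s)) := by
  -- continuity of L(·, τ)
  have hcontL : ∀ τ, Continuous fun y => L y τ := by
    intro τ
    have h : Continuous fun y : EuclideanSpace ℝ ι => F₀ y + ⟪τ, A y - b⟫ :=
      hF₀cont.add (Continuous.inner continuous_const ((A.continuous).sub continuous_const))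
    exact h.congr fun y => (hL y τ).symm
  have hbdd : ∀ τ, BddBelow ((fun y => L y τ) '' Y) := fun τ =>
    (hYcpt.image (hcontL τ)).bddBelow
  have dle : ∀ τ, ∀ y ∈ Y, d τ ≤ L y τ := by
    intro τ y hy
    rw [hd]
    exact csInf_le (hbdd τ) ⟨y, hy, rfl⟩
  -- quadratic growth at the minimizer ystar of L(·, τstar)
  have hgrow : ∀ y ∈ Y, L ystar τstar + α / 4 * ‖y - ystar‖ ^ 2 ≤ L y τstar := by
    intro y hy
    have hmid : (1/2 : ℝ) • y + (1/2 : ℝ) • ystar ∈ Y :=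
      hYconv hy hystarY (by norm_num) (by norm_num) (by norm_num)
    have h1 := hF₀sc.2 hy hystarY (by norm_num : (0:ℝ) ≤ 1/2) (by norm_num : (0:ℝ) ≤ 1/2)
      (by norm_num)
    simp only [smul_eq_mul] at h1
    have hlin : ⟪τstar, A ((1/2:ℝ) • y + (1/2:ℝ) • ystar) - b⟫ =
        (1/2) * ⟪τstar, A y - b⟫ + (1/2) * ⟪τstar, A ystar - b⟫ := by
      have hv : A ((1/2:ℝ) • y + (1/2:ℝ) • ystar) - b
          = (1/2:ℝ) • (A y - b) + (1/2:ℝ) • (A ystar - b) := by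
        rw [map_add, map_smul, map_smul]; module
      rw [hv, inner_add_right, real_inner_smul_right, real_inner_smul_right]
    have hdmid := dle τstar _ hmid
    rw [hL, hlin] at hdmid
    have hLy := hL y τstar
    have hLys := hL ystar τstar
    nlinarith [hdmid, h1, hystarL]
  -- τstar is a fixed point of the update
  have hprod : ∀ i, τstar i * (A ystar - b) i = 0 := by
    have hsum0 : ∑ i, τstar i * (A ystar - b) i = 0 := by
      rw [← eucl_inner_sum]; exact hcompl
    have hsum : ∑ i, (- (τstar i * (A ystar - b) i)) = 0 := by
      simp only [Finset.sum_neg_distrib, neg_eq_zero]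
      exact hsum0
    intro i
    have h := (Finset.sum_eq_zero_iff_of_nonneg (fun j _ => by
      have := mul_nonpos_of_nonneg_of_nonpos (hτstarpos j) (hystarfeas j)
      linarith)).mp hsum i (Finset.mem_univ i)
    linarith
  have hfix : ∀ i, τstar i = max (τstar i + γ * (A ystar - b) i) 0 := by
    intro i
    rcases eq_or_lt_of_le (hτstarpos i) with h0 | h0
    · rw [← h0, zero_add]
      have : γ * (A ystar - b) i ≤ 0 := mul_nonpos_of_nonneg_of_nonpos hγ.le (hystarfeas i)
      rw [max_eq_right this]
    · have : (A ystar - b) i = 0 := by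
        rcases mul_eq_zero.mp (hprod i) with h | h
        · exact absurd h.symm (ne_of_lt h0)
        · exact h
      rw [this, mul_zero, add_zero, max_eq_left (hτstarpos i)]
  -- per-step contraction
  have hstep1 : ∀ s, ‖τs (s+1) - τstar‖ ^ 2 ≤
      ‖(τs s - τstar) + γ • (A (ys s) - A ystar)‖ ^ 2 := by
    intro s
    rw [eucl_normsq, eucl_normsq]
    apply Finset.sum_le_sum
    intro i _
    have h1 : (τs (s+1) - τstar) i =
        max (τs s i + γ * (A (ys s) - b) i) 0 - max (τstar i + γ * (A ystar - b) i) 0 := by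
      show τs (s+1) i - τstar i = _
      rw [hupdate s i, ← hfix i]
    have h2 : ((τs s - τstar) + γ • (A (ys s) - A ystar)) i =
        (τs s i + γ * (A (ys s) - b) i) - (τstar i + γ * (A ystar - b) i) := by
      show (τs s i - τstar i) + γ * ((A (ys s)) i - (A ystar) i) = _
      show (τs s i - τstar i) + γ * ((A (ys s)) i - (A ystar) i)
        = (τs s i + γ * ((A (ys s)) i - b i)) - (τstar i + γ * ((A ystar) i - b i))
      ring
    rw [h1, h2]
    have habs := abs_max_sub_max_le_abs (τs s i + γ * (A (ys s) - b) i)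
      (τstar i + γ * (A ystar - b) i) 0
    calc (max (τs s i + γ * (A (ys s) - b) i) 0 - max (τstar i + γ * (A ystar - b) i) 0) ^ 2
        = |max (τs s i + γ * (A (ys s) - b) i) 0 - max (τstar i + γ * (A ystar - b) i) 0| ^ 2 := by
          rw [sq_abs]
      _ ≤ |(τs s i + γ * (A (ys s) - b) i) - (τstar i + γ * (A ystar - b) i)| ^ 2 :=
          pow_le_pow_left₀ (abs_nonneg _) habs 2
      _ = ((τs s i + γ * (A (ys s) - b) i) - (τstar i + γ * (A ystar - b) i)) ^ 2 := by
          rw [sq_abs]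
  have hexp : ∀ s, ‖(τs s - τstar) + γ • (A (ys s) - A ystar)‖ ^ 2 =
      ‖τs s - τstar‖ ^ 2 + 2 * γ * ⟪τs s - τstar, A (ys s) - A ystar⟫
        + γ ^ 2 * ‖A (ys s) - A ystar‖ ^ 2 := by
    intro s
    rw [norm_add_sq_real, real_inner_smul_right, norm_smul]
    rw [Real.norm_eq_abs, abs_of_pos hγ]
    ring
  have hinner : ∀ s, ⟪τs s - τstar, A (ys s) - A ystar⟫ ≤
      εs s - α / 4 * ‖ys s - ystar‖ ^ 2 := by
    intro s
    have hAv : A (ys s) - A ystar = (A (ys s) - b) - (A ystar - b) := by abel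
    have expand : ⟪τs s - τstar, A (ys s) - A ystar⟫ =
        ⟪τs s, A (ys s) - b⟫ - ⟪τs s, A ystar - b⟫
          - ⟪τstar, A (ys s) - b⟫ + ⟪τstar, A ystar - b⟫ := by
      rw [hAv]; simp only [inner_sub_left, inner_sub_right]; ring
    have e1 : ⟪τs s, A (ys s) - b⟫ = L (ys s) (τs s) - F₀ (ys s) := by rw [hL]; ring
    have e2 : ⟪τs s, A ystar - b⟫ = L ystar (τs s) - F₀ ystar := by rw [hL]; ring
    have e3 : ⟪τstar, A (ys s) - b⟫ = L (ys s) τstar - F₀ (ys s) := by rw [hL]; ring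
    have e4 : ⟪τstar, A ystar - b⟫ = L ystar τstar - F₀ ystar := by rw [hL]; ring
    have h1 : L (ys s) (τs s) ≤ L ystar (τs s) + εs s :=
      le_trans (hyseq s) (by linarith [dle (τs s) ystar hystarY])
    have h2 := hgrow (ys s) (hysY s)
    rw [expand, e1, e2, e3, e4]
    linarith
  have hAnorm : ∀ s, ‖A (ys s) - A ystar‖ ^ 2 ≤ ‖A‖ ^ 2 * ‖ys s - ystar‖ ^ 2 := by
    intro s
    have h := A.le_opNorm (ys s - ystar)
    rw [map_sub] at h
    nlinarith [norm_nonneg (A (ys s) - A ystar), norm_nonneg (ys s - ystar),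
      A.opNorm_nonneg]
  have hones : ∀ s, ‖τs (s+1) - τstar‖ ^ 2 ≤ ‖τs s - τstar‖ ^ 2 + 2 * γ * εs s := by
    intro s
    have k1 := hstep1 s
    have k2 := hexp s
    have k3 := hinner s
    have k4 := hAnorm s
    nlinarith [sq_nonneg ‖ys s - ystar‖, hγ.le,
      mul_le_mul_of_nonneg_left hstep
        (by positivity : (0:ℝ) ≤ γ * ‖ys s - ystar‖ ^ 2 / 2)]
  have hsumsq : ∀ n, ‖τs n - τstar‖ ^ 2 ≤
      ‖τs 0 - τstar‖ ^ 2 + 2 * γ * ∑ s ∈ Finset.range n, εs s := by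
    intro n
    induction n with
    | zero => simp
    | succ n ih =>
      rw [Finset.sum_range_succ]
      have := hones n
      linarith [mul_add (2*γ) (∑ s ∈ Finset.range n, εs s) (εs n)]
  intro k hk
  have hk0 : (0:ℝ) < k := by exact_mod_cast Nat.lt_of_lt_of_le Nat.zero_lt_one hk
  have hkne : (k:ℝ) ≠ 0 := ne_of_gt hk0
  have hγk : (0:ℝ) < γ * k := mul_pos hγ hk0
  set E := ∑ s ∈ Finset.range k, εs s with hE_def
  have hE : 0 ≤ E := Finset.sum_nonneg fun s _ => hεs s
  set ybar := (k : ℝ)⁻¹ • ∑ s ∈ Finset.range k, ys s with hybar_def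
  -- ybar ∈ Y
  have hybarY : ybar ∈ Y := by
    have hrw : ybar = ∑ s ∈ Finset.range k, (k:ℝ)⁻¹ • ys s := by
      rw [hybar_def, Finset.smul_sum]
    rw [hrw]
    refine hYconv.sum_mem (fun s _ => by positivity) ?_ (fun s _ => hysY s)
    rw [Finset.sum_const, Finset.card_range, nsmul_eq_mul, mul_inv_cancel₀ hkne]
  -- bound on ‖τs k - τstar‖
  have hnormk : ‖τs k - τstar‖ ≤ ‖τs 0 - τstar‖ + 2 * Real.sqrt (γ * E) := by
    have hs := Real.sq_sqrt (mul_nonneg hγ.le hE)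
    have h1 : ‖τs k - τstar‖ ^ 2 ≤ (‖τs 0 - τstar‖ + 2 * Real.sqrt (γ * E)) ^ 2 := by
      nlinarith [hsumsq k, Real.sqrt_nonneg (γ * E), norm_nonneg (τs 0 - τstar),
        mul_nonneg (norm_nonneg (τs 0 - τstar)) (Real.sqrt_nonneg (γ * E))]
    have hrhs : (0:ℝ) ≤ ‖τs 0 - τstar‖ + 2 * Real.sqrt (γ * E) := by positivity
    exact (pow_le_pow_iff_left₀ (norm_nonneg _) hrhs two_ne_zero).mp h1
  -- lower bound on dual variables by accumulated violation
  have hτlower : ∀ n, ∀ i, τs 0 i + γ * ∑ s ∈ Finset.range n, (A (ys s) - b) i ≤ τs n i := by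
    intro n
    induction n with
    | zero => intro i; simp
    | succ n ih =>
      intro i
      have h3 : τs n i + γ * (A (ys n) - b) i ≤ τs (n+1) i := by
        rw [hupdate n i]; exact le_max_left _ _
      have := ih i
      rw [Finset.sum_range_succ, mul_add]
      linarith
  have hviol : ∀ i, γ * k * ((A ybar - b) i) ≤ τs k i := by
    intro i
    have hA : A ybar = (k:ℝ)⁻¹ • ∑ s ∈ Finset.range k, A (ys s) := by
      rw [hybar_def, map_smul, map_sum]
    have hsumapp : (∑ s ∈ Finset.range k, A (ys s)) i
        = ∑ s ∈ Finset.range k, (A (ys s)) i := by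
      rw [WithLp.ofLp_sum]; exact Finset.sum_apply i _ _
    have hcomp : (A ybar - b) i = (k:ℝ)⁻¹ * (∑ s ∈ Finset.range k, (A (ys s)) i) - b i := by
      show (A ybar) i - b i = _
      rw [hA]
      show (k:ℝ)⁻¹ * ((∑ s ∈ Finset.range k, A (ys s)) i) - b i = _
      rw [hsumapp]
    have hsum2 : ∑ s ∈ Finset.range k, (A (ys s) - b) i
        = (∑ s ∈ Finset.range k, (A (ys s)) i) - k * b i := by
      have : ∀ s, (A (ys s) - b) i = (A (ys s)) i - b i := fun s => rfl
      rw [Finset.sum_congr rfl fun s _ => this s, Finset.sum_sub_distrib,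
        Finset.sum_const, Finset.card_range, nsmul_eq_mul]
    have hlow := hτlower k i
    rw [hsum2] at hlow
    have hkey : γ * k * ((A ybar - b) i)
        = γ * ((∑ s ∈ Finset.range k, (A (ys s)) i) - k * b i) := by
      rw [hcomp]; field_simp
    rw [hkey]
    linarith [hτ0 i]
  -- primal gap via the toll
  have hfini : F₀ ystar - F₀ ybar ≤ ⟪τstar, A ybar - b⟫ := by
    have h0 : F₀ ystar + ⟪τstar, A ystar - b⟫ = d τstar := by rw [← hL]; exact hystarL
    have h1 := dle τstar ybar hybarY
    rw [hL] at h1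
    linarith [hcompl ▸ h0]
  have hin2 : γ * k * ⟪τstar, A ybar - b⟫ ≤ ⟪τstar, τs k⟫ := by
    rw [eucl_inner_sum, eucl_inner_sum, Finset.mul_sum]
    apply Finset.sum_le_sum
    intro i _
    calc γ * ↑k * (τstar i * (A ybar - b) i)
        = τstar i * (γ * ↑k * ((A ybar - b) i)) := by ring
      _ ≤ τstar i * τs k i := mul_le_mul_of_nonneg_left (hviol i) (hτstarpos i)
  have hin3 : ⟪τstar, τs k⟫ ≤ ‖τstar‖ * ‖τs k‖ := real_inner_le_norm _ _
  have hτknorm : ‖τs k‖ ≤ ‖τstar‖ + ‖τs 0 - τstar‖ + 2 * Real.sqrt (γ * E) := by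
    have heq : τstar + (τs k - τstar) = τs k := by abel
    have : ‖τs k‖ ≤ ‖τstar‖ + ‖τs k - τstar‖ := by
      calc ‖τs k‖ = ‖τstar + (τs k - τstar)‖ := by rw [heq]
        _ ≤ ‖τstar‖ + ‖τs k - τstar‖ := norm_add_le _ _
    linarith
  rw [div_mul_eq_mul_div, le_div_iff₀ hγk]
  have c1 : (F₀ ystar - F₀ ybar) * (γ * ↑k) ≤ γ * ↑k * ⟪τstar, A ybar - b⟫ := by
    have := mul_le_mul_of_nonneg_right hfini hγk.le
    linarith [this]
  have c2 : ‖τstar‖ * ‖τs k‖ ≤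
      ‖τstar‖ * (‖τstar‖ + ‖τs 0 - τstar‖ + 2 * Real.sqrt (γ * E)) :=
    mul_le_mul_of_nonneg_left hτknorm (norm_nonneg _)
  linarith
end

section
/- (Convergence of the average response to the constrained equilibrium.) If 2γ‖A‖² ≤ α, then for every k ≥ 1 the average response ȳ^k = (1/k)∑_{s=0}^{k-1} y^s satisfies ‖ȳ^k − y⋆‖² ≤ (2/(α·γ·k))·( D₁ + D₂ ), where D₁ = (1/2)·‖τ⁰‖² + 2γ·E^k, D₂ = ‖τ⋆‖² + ‖τ⋆‖·‖τ⁰ − τ⋆‖ + 2·‖τ⋆‖·√(γ·E^k), and E^k = ∑_{s=0}^{k-1} ε^s. -/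
open scoped RealInnerProductSpace

/-- Componentwise projection inequality: for `u ≥ 0`, `G ≤ 0`, `c ≥ 0` and `t = max v 0`,
`(t - u)^2 + 2*c*v*G - c^2*G^2 ≤ (v - u)^2`. -/
lemma stmt14_aux_comp (v u G t c : ℝ) (hu : 0 ≤ u) (hG : G ≤ 0) (hc : 0 ≤ c)
    (ht : t = max v 0) : (t - u) ^ 2 + 2 * c * v * G - c ^ 2 * G ^ 2 ≤ (v - u) ^ 2 := by
  rcases le_or_gt 0 v with h | h
  · rw [ht, max_eq_left h]
    nlinarith [mul_nonneg (mul_nonneg hc h) (neg_nonneg.2 hG), sq_nonneg (c * G)]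
  · rw [ht, max_eq_right h.le]
    nlinarith [sq_nonneg (v - c * G), mul_nonneg hu (neg_nonneg.2 h.le)]

set_option maxHeartbeats 2000000 in
theorem stmt_14
    {ι κ : Type*} [Fintype ι] [Fintype κ] [Nonempty ι] [Nonempty κ]
    (Y : Set (EuclideanSpace ℝ ι)) (hYne : Y.Nonempty) (hYcpt : IsCompact Y)
    (hYconv : Convex ℝ Y)
    (α : ℝ) (hα : 0 < α)
    (F₀ : EuclideanSpace ℝ ι → ℝ) (hF₀cont : Continuous F₀)
    (hF₀sc : StrongConvexOn Y α F₀)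
    (A : EuclideanSpace ℝ ι →L[ℝ] EuclideanSpace ℝ κ) (b : EuclideanSpace ℝ κ)
    (L : EuclideanSpace ℝ ι → EuclideanSpace ℝ κ → ℝ)
    (hL : ∀ y τ, L y τ = F₀ y + ⟪τ, A y - b⟫)
    (d : EuclideanSpace ℝ κ → ℝ)
    (hd : ∀ τ, d τ = sInf ((fun y => L y τ) '' Y))
    (γ : ℝ) (hγ : 0 < γ)
    (τs : ℕ → EuclideanSpace ℝ κ) (ys : ℕ → EuclideanSpace ℝ ι) (εs : ℕ → ℝ)
    (hτ0 : ∀ i, 0 ≤ τs 0 i)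
    (hεs : ∀ s, 0 ≤ εs s)
    (hysY : ∀ s, ys s ∈ Y)
    (hyseq : ∀ s, L (ys s) (τs s) ≤ d (τs s) + εs s)
    (hupdate : ∀ s i, τs (s + 1) i = max (τs s i + γ * (A (ys s) - b) i) 0)
    (τstar : EuclideanSpace ℝ κ) (hτstarpos : ∀ i, 0 ≤ τstar i)
    (hτstarmax : ∀ σ : EuclideanSpace ℝ κ, (∀ i, 0 ≤ σ i) → d σ ≤ d τstar)
    (ystar : EuclideanSpace ℝ ι) (hystarY : ystar ∈ Y)
    (hystarL : L ystar τstar = d τstar)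
    (hystarfeas : ∀ i, (A ystar - b) i ≤ 0)
    (hcompl : ⟪τstar, A ystar - b⟫ = 0)
    (hstep : 2 * γ * ‖A‖ ^ 2 ≤ α)
    :
    ∀ k : ℕ, 1 ≤ k →
      ‖((k : ℝ)⁻¹ • ∑ s ∈ Finset.range k, ys s) - ystar‖ ^ 2 ≤
        2 / (α * γ * k) *
          ((1 / 2 * ‖τs 0‖ ^ 2 + 2 * γ * ∑ s ∈ Finset.range k, εs s) +
           (‖τstar‖ ^ 2 + ‖τstar‖ * ‖τs 0 - τstar‖ +
             2 * ‖τstar‖ * Real.sqrt (γ * ∑ s ∈ Finset.range k, εs s))) := by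
  -- inner product and norm as sums
  have hinner : ∀ x y : EuclideanSpace ℝ κ, ⟪x, y⟫ = ∑ i, x i * y i := by
    intro x y; simp [PiLp.inner_apply, RCLike.inner_apply, conj_trivial]
    exact Finset.sum_congr rfl fun i _ => mul_comm _ _
  have hnorm : ∀ x : EuclideanSpace ℝ κ, ‖x‖ ^ 2 = ∑ i, (x i) ^ 2 := by
    intro x; rw [← real_inner_self_eq_norm_sq]
    rw [hinner]; simp only [sq]
  -- nonnegativity of the multipliers
  have hppos : ∀ s i, 0 ≤ τs s i := by
    intro s
    induction s with
    | zero => exact hτ0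
    | succ n _ => intro i; rw [hupdate n i]; exact le_max_right _ _
  -- d τ ≤ L y τ for y ∈ Y
  have hLcont : ∀ τ, Continuous fun y => L y τ := by
    intro τ
    have : (fun y => L y τ) = fun y => F₀ y + ⟪τ, A y - b⟫ := funext fun y => hL y τ
    rw [this]
    exact hF₀cont.add (Continuous.inner continuous_const (A.continuous.sub continuous_const))
  have hdle : ∀ τ, ∀ y ∈ Y, d τ ≤ L y τ := by
    intro τ y hy
    rw [hd]
    exact csInf_le (hYcpt.image (hLcont τ)).bddBelow ⟨y, hy, rfl⟩
  -- strong convexity of L (· , τ)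
  have hsc : ∀ τ, ∀ x ∈ Y, ∀ z ∈ Y, ∀ a c : ℝ, 0 ≤ a → 0 ≤ c → a + c = 1 →
      L (a • x + c • z) τ ≤ a * L x τ + c * L z τ - a * c * (α / 2 * ‖x - z‖ ^ 2) := by
    intro τ x hx z hz a c ha hc hac
    have h1 := hF₀sc.2 hx hz ha hc hac
    simp only [smul_eq_mul] at h1
    have h2 : ⟪τ, A (a • x + c • z) - b⟫ = a * ⟪τ, A x - b⟫ + c * ⟪τ, A z - b⟫ := by
      have h3 : A (a • x + c • z) - b = a • (A x - b) + c • (A z - b) := by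
        ext i
        have e1 : (A (a • x + c • z)) i = a * (A x) i + c * (A z) i := by
          rw [map_add, map_smul, map_smul]; rfl
        show (A (a • x + c • z)) i - b i
            = a * ((A x) i - b i) + c * ((A z) i - b i)
        rw [e1]; linear_combination (b i) * hac
      rw [h3, inner_add_right, real_inner_smul_right, real_inner_smul_right]
    rw [hL, hL, hL, h2]
    linarith
  -- midpoint estimate for approximate minimizers
  have hmid : ∀ (τ : EuclideanSpace ℝ κ) (y : EuclideanSpace ℝ ι) (ε : ℝ), y ∈ Y →
      L y τ ≤ d τ + ε →
      α / 2 * ‖y - ystar‖ ^ 2 ≤ 2 * (L ystar τ - L y τ) + 4 * ε := by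
    intro τ y ε hy hle
    have hm : (1 / 2 : ℝ) • y + (1 / 2 : ℝ) • ystar ∈ Y :=
      hYconv hy hystarY (by norm_num) (by norm_num) (by norm_num)
    have h1 := hsc τ y hy ystar hystarY (1 / 2) (1 / 2) (by norm_num) (by norm_num) (by norm_num)
    have h2 := hdle τ _ hm
    linarith
  -- the gap Δ s
  have hΔ0 : ∀ s, 0 ≤ L (ys s) τstar - L ystar τstar := by
    intro s
    have h := hdle τstar (ys s) (hysY s)
    linarith [hystarL]
  have hH2 : ∀ s, α / 4 * ‖ys s - ystar‖ ^ 2 ≤ L (ys s) τstar - L ystar τstar := by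
    intro s
    have h1 := hmid τstar (ys s) (L (ys s) τstar - L ystar τstar) (hysY s)
      (by rw [← hystarL]; linarith)
    linarith
  have hH1 : ∀ s, α / 2 * ‖ys s - ystar‖ ^ 2
      ≤ 2 * (L ystar (τs s) - L (ys s) (τs s)) + 4 * εs s :=
    fun s => hmid (τs s) (ys s) (εs s) (hysY s) (hyseq s)
  -- key difference identity
  have hLdiff : ∀ s, L ystar (τs s) - L (ys s) (τs s)
      = ⟪τstar, A (ys s) - b⟫ - (L (ys s) τstar - L ystar τstar)
        + ⟪τs s, A ystar - b⟫ - ⟪τs s, A (ys s) - b⟫ := by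
    intro s
    rw [hL ystar (τs s), hL (ys s) (τs s), hL (ys s) τstar, hL ystar τstar]
    linarith [hcompl]
  -- per-step recursions
  have key : ∀ s,
      1 / 2 * ‖τs (s + 1)‖ ^ 2 ≤ 1 / 2 * ‖τs s‖ ^ 2
        - γ * (L (ys s) τstar - L ystar τstar) + 2 * γ * εs s
        + γ * ⟪τstar, A (ys s) - b⟫
      ∧ ‖τs (s + 1) - τstar‖ ^ 2 ≤ ‖τs s - τstar‖ ^ 2 + 2 * γ * εs s := by
    intro s
    set g : EuclideanSpace ℝ κ := A (ys s) - b with hg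
    set G : EuclideanSpace ℝ κ := A ystar - b with hG
    set v : EuclideanSpace ℝ κ := τs s + γ • g with hv
    have hvi : ∀ i, v i = τs s i + γ * g i := fun i => rfl
    -- summed projection inequality
    have asum : ∀ u : EuclideanSpace ℝ κ, (∀ i, 0 ≤ u i) →
        ‖τs (s + 1) - u‖ ^ 2 + 2 * γ * ⟪v, G⟫ - γ ^ 2 * ‖G‖ ^ 2 ≤ ‖v - u‖ ^ 2 := by
      intro u hu
      have hcomp : ∀ i, (τs (s + 1) i - u i) ^ 2 + 2 * γ * v i * G i - γ ^ 2 * (G i) ^ 2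
          ≤ (v i - u i) ^ 2 := by
        intro i
        exact stmt14_aux_comp (v i) (u i) (G i) (τs (s + 1) i) γ (hu i) (hystarfeas i) hγ.le
          (by rw [hupdate s i, hvi i])
      have n1 : ‖τs (s + 1) - u‖ ^ 2 = ∑ i, (τs (s + 1) i - u i) ^ 2 := by rw [hnorm]; rfl
      have n2 : 2 * γ * ⟪v, G⟫ = ∑ i, 2 * γ * (v i * G i) := by rw [hinner, Finset.mul_sum]
      have n3 : γ ^ 2 * ‖G‖ ^ 2 = ∑ i, γ ^ 2 * (G i) ^ 2 := by rw [hnorm, Finset.mul_sum]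
      have n4 : ‖v - u‖ ^ 2 = ∑ i, (v i - u i) ^ 2 := by rw [hnorm]; rfl
      rw [n1, n2, n3, n4, ← Finset.sum_add_distrib, ← Finset.sum_sub_distrib]
      exact Finset.sum_le_sum fun i _ => by have := hcomp i; nlinarith [this]
    have a0 : ‖τs (s + 1)‖ ^ 2 + 2 * γ * ⟪v, G⟫ - γ ^ 2 * ‖G‖ ^ 2 ≤ ‖v‖ ^ 2 := by
      have := asum 0 fun i => le_rfl
      simpa using this
    have a1 : ‖τs (s + 1) - τstar‖ ^ 2 + 2 * γ * ⟪v, G⟫ - γ ^ 2 * ‖G‖ ^ 2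
        ≤ ‖v - τstar‖ ^ 2 := asum τstar hτstarpos
    -- norm expansions
    have hv2 : ‖v‖ ^ 2 = ‖τs s‖ ^ 2 + 2 * γ * ⟪τs s, g⟫ + γ ^ 2 * ‖g‖ ^ 2 := by
      rw [hv, norm_add_sq_real, real_inner_smul_right, norm_smul]
      simp [mul_pow, sq_abs]; ring
    have hv2' : ‖v - τstar‖ ^ 2 = ‖τs s - τstar‖ ^ 2
        + 2 * γ * (⟪τs s, g⟫ - ⟪τstar, g⟫) + γ ^ 2 * ‖g‖ ^ 2 := by
      have : v - τstar = (τs s - τstar) + γ • g := by rw [hv]; abel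
      rw [this, norm_add_sq_real, real_inner_smul_right, inner_sub_left, norm_smul]
      simp [mul_pow, sq_abs]; ring
    have hgdiff : g - G = A (ys s - ystar) := by
      rw [hg, hG, map_sub]; abel
    have hgsq : ‖g‖ ^ 2 = ‖A (ys s - ystar)‖ ^ 2 + 2 * ⟪g, G⟫ - ‖G‖ ^ 2 := by
      have e : g = (g - G) + G := by abel
      calc ‖g‖ ^ 2 = ‖(g - G) + G‖ ^ 2 := by rw [← e]
        _ = ‖g - G‖ ^ 2 + 2 * (⟪g, G⟫ - ⟪G, G⟫) + ‖G‖ ^ 2 := by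
            rw [norm_add_sq_real, inner_sub_left]
        _ = ‖A (ys s - ystar)‖ ^ 2 + 2 * ⟪g, G⟫ - ‖G‖ ^ 2 := by
            rw [hgdiff, real_inner_self_eq_norm_sq]; ring
    have hAop : ‖A (ys s - ystar)‖ ^ 2 ≤ ‖A‖ ^ 2 * ‖ys s - ystar‖ ^ 2 := by
      have h := A.le_opNorm (ys s - ystar)
      have h2 : ‖A (ys s - ystar)‖ ^ 2 ≤ (‖A‖ * ‖ys s - ystar‖) ^ 2 :=
        pow_le_pow_left₀ (norm_nonneg _) h 2
      rw [mul_pow] at h2; exact h2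
    have hstep' : γ ^ 2 / 2 * (‖A‖ ^ 2 * ‖ys s - ystar‖ ^ 2)
        ≤ γ / 4 * (α * ‖ys s - ystar‖ ^ 2) := by
      nlinarith [mul_le_mul_of_nonneg_left hstep
        (mul_nonneg (by positivity : (0:ℝ) ≤ γ / 4) (sq_nonneg ‖ys s - ystar‖))]
    have hvG : ⟪v, G⟫ = ⟪τs s, G⟫ + γ * ⟪g, G⟫ := by
      rw [hv, inner_add_left, real_inner_smul_left]
    -- scaled versions of the estimates
    have H1' := mul_le_mul_of_nonneg_left (hH1 s) (by positivity : (0:ℝ) ≤ γ / 2)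
    have H2' := mul_le_mul_of_nonneg_left (hH2 s) (by positivity : (0:ℝ) ≤ 2 * γ)
    have hLd := hLdiff s
    have hgsq2 : γ ^ 2 * ‖g‖ ^ 2
        = γ ^ 2 * ‖A (ys s - ystar)‖ ^ 2 + 2 * γ ^ 2 * ⟪g, G⟫ - γ ^ 2 * ‖G‖ ^ 2 := by
      linear_combination γ ^ 2 * hgsq
    have hvG2 : γ * ⟪v, G⟫ = γ * ⟪τs s, G⟫ + γ ^ 2 * ⟪g, G⟫ := by
      linear_combination γ * hvG
    have hLd2 : γ * (L ystar (τs s) - L (ys s) (τs s))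
        = γ * ⟪τstar, g⟫ - γ * (L (ys s) τstar - L ystar τstar)
          + γ * ⟪τs s, G⟫ - γ * ⟪τs s, g⟫ := by
      linear_combination γ * hLd
    have hAop' := mul_le_mul_of_nonneg_left hAop (by positivity : (0:ℝ) ≤ γ ^ 2 / 2)
    have hAop'' := mul_le_mul_of_nonneg_left hAop (by positivity : (0:ℝ) ≤ γ ^ 2)
    have hstep'' : γ ^ 2 * (‖A‖ ^ 2 * ‖ys s - ystar‖ ^ 2)
        ≤ γ / 2 * (α * ‖ys s - ystar‖ ^ 2) := by
      nlinarith [mul_le_mul_of_nonneg_left hstep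
        (mul_nonneg (by positivity : (0:ℝ) ≤ γ / 2) (sq_nonneg ‖ys s - ystar‖))]
    constructor
    · linarith [a0, hv2, hgsq2, hvG2, hLd2, hAop', hstep', H1']
    · -- second recursion
      have hi : ⟪τs s, g⟫ ≤ ⟪τstar, g⟫ - (L (ys s) τstar - L ystar τstar)
          + ⟪τs s, G⟫ + εs s := by
        have h1 := hyseq s
        have h2 := hdle (τs s) ystar hystarY
        linarith
      have hi2 := mul_le_mul_of_nonneg_left hi hγ.le
      linarith [a1, hv2', hgsq2, hvG2, hi2, hAop'', hstep'', H2']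
  intro k hk
  have hk0 : (0:ℝ) < k := by exact_mod_cast hk
  have hE0 : 0 ≤ ∑ s ∈ Finset.range k, εs s := Finset.sum_nonneg fun s _ => hεs s
  -- summed recursions
  have S1 : ∀ n : ℕ, 1 / 2 * ‖τs n‖ ^ 2
      + γ * ∑ s ∈ Finset.range n, (L (ys s) τstar - L ystar τstar)
      ≤ 1 / 2 * ‖τs 0‖ ^ 2 + 2 * γ * ∑ s ∈ Finset.range n, εs s
        + γ * ∑ s ∈ Finset.range n, ⟪τstar, A (ys s) - b⟫ := by
    intro n
    induction n with
    | zero => simp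
    | succ m ih =>
      have := (key m).1
      rw [Finset.sum_range_succ, Finset.sum_range_succ, Finset.sum_range_succ]
      linarith
  have S2 : ∀ n : ℕ, ‖τs n - τstar‖ ^ 2
      ≤ ‖τs 0 - τstar‖ ^ 2 + 2 * γ * ∑ s ∈ Finset.range n, εs s := by
    intro n
    induction n with
    | zero => simp
    | succ m ih =>
      have := (key m).2
      rw [Finset.sum_range_succ]
      linarith
  have S3 : ∀ (n : ℕ) (i : κ),
      γ * ∑ s ∈ Finset.range n, (A (ys s) - b) i ≤ τs n i - τs 0 i := by
    intro n i
    induction n with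
    | zero => simp
    | succ m ih =>
      have h1 : τs m i + γ * (A (ys m) - b) i ≤ τs (m + 1) i := by
        rw [hupdate m i]; exact le_max_left _ _
      rw [Finset.sum_range_succ]
      have := ih
      nlinarith [h1]
  -- bound on γ * ∑ Q
  have hQle : γ * ∑ s ∈ Finset.range k, ⟪τstar, A (ys s) - b⟫
      ≤ ⟪τstar, τs k⟫ - ⟪τstar, τs 0⟫ := by
    have e1 : ∑ s ∈ Finset.range k, ⟪τstar, A (ys s) - b⟫
        = ∑ i, τstar i * (∑ s ∈ Finset.range k, (A (ys s) - b) i) := by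
      calc ∑ s ∈ Finset.range k, ⟪τstar, A (ys s) - b⟫
          = ∑ s ∈ Finset.range k, ∑ i, τstar i * (A (ys s) - b) i :=
            Finset.sum_congr rfl fun s _ => hinner _ _
        _ = ∑ i, ∑ s ∈ Finset.range k, τstar i * (A (ys s) - b) i := Finset.sum_comm
        _ = ∑ i, τstar i * (∑ s ∈ Finset.range k, (A (ys s) - b) i) := by
            exact Finset.sum_congr rfl fun i _ => (Finset.mul_sum _ _ _).symm
    calc γ * ∑ s ∈ Finset.range k, ⟪τstar, A (ys s) - b⟫
        = ∑ i, τstar i * (γ * ∑ s ∈ Finset.range k, (A (ys s) - b) i) := by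
          rw [e1, Finset.mul_sum]; exact Finset.sum_congr rfl fun i _ => by ring
      _ ≤ ∑ i, τstar i * (τs k i - τs 0 i) :=
          Finset.sum_le_sum fun i _ =>
            mul_le_mul_of_nonneg_left (S3 k i) (hτstarpos i)
      _ = ⟪τstar, τs k⟫ - ⟪τstar, τs 0⟫ := by
          rw [hinner, hinner, ← Finset.sum_sub_distrib]
          exact Finset.sum_congr rfl fun i _ => by ring
  have hip0 : 0 ≤ ⟪τstar, τs 0⟫ := by
    rw [hinner]
    exact Finset.sum_nonneg fun i _ => mul_nonneg (hτstarpos i) (hτ0 i)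
  have hcs : ⟪τstar, τs k⟫ ≤ ‖τstar‖ * ‖τs k‖ := real_inner_le_norm _ _
  have htri : ‖τs k‖ ≤ ‖τstar‖ + ‖τs k - τstar‖ := by
    have := norm_sub_norm_le (τs k) τstar
    linarith
  have hsq0 : Real.sqrt (γ * ∑ s ∈ Finset.range k, εs s) ^ 2
      = γ * ∑ s ∈ Finset.range k, εs s := Real.sq_sqrt (by positivity)
  have hsqnn : 0 ≤ Real.sqrt (γ * ∑ s ∈ Finset.range k, εs s) := Real.sqrt_nonneg _
  have hsqrt : ‖τs k - τstar‖ ≤ ‖τs 0 - τstar‖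
      + 2 * Real.sqrt (γ * ∑ s ∈ Finset.range k, εs s) := by
    have h1 : ‖τs k - τstar‖ ^ 2
        ≤ (‖τs 0 - τstar‖ + 2 * Real.sqrt (γ * ∑ s ∈ Finset.range k, εs s)) ^ 2 := by
      have := S2 k
      nlinarith [norm_nonneg (τs 0 - τstar)]
    have h2 : (0:ℝ) ≤ ‖τs 0 - τstar‖ + 2 * Real.sqrt (γ * ∑ s ∈ Finset.range k, εs s) := by
      positivity
    nlinarith [norm_nonneg (τs k - τstar)]
  -- the master bound on γ * ∑ Δ
  have hmaster : γ * ∑ s ∈ Finset.range k, (L (ys s) τstar - L ystar τstar)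
      ≤ (1 / 2 * ‖τs 0‖ ^ 2 + 2 * γ * ∑ s ∈ Finset.range k, εs s)
        + (‖τstar‖ ^ 2 + ‖τstar‖ * ‖τs 0 - τstar‖
          + 2 * ‖τstar‖ * Real.sqrt (γ * ∑ s ∈ Finset.range k, εs s)) := by
    have h1 := S1 k
    have h2 : ‖τstar‖ * ‖τs k‖ ≤ ‖τstar‖ * (‖τstar‖ + ‖τs k - τstar‖) :=
      mul_le_mul_of_nonneg_left htri (norm_nonneg _)
    have h3 : ‖τstar‖ * ‖τs k - τstar‖
        ≤ ‖τstar‖ * (‖τs 0 - τstar‖ + 2 * Real.sqrt (γ * ∑ s ∈ Finset.range k, εs s)) :=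
      mul_le_mul_of_nonneg_left hsqrt (norm_nonneg _)
    nlinarith [sq_nonneg ‖τs k‖]
  -- Jensen for L (·, τstar)
  have hconvL : ConvexOn ℝ Y fun y => L y τstar := by
    refine ⟨hYconv, fun x hx z hz a c ha hc hac => ?_⟩
    have h1 := hsc τstar x hx z hz a c ha hc hac
    have h2 : 0 ≤ a * c * (α / 2 * ‖x - z‖ ^ 2) := by positivity
    simp only [smul_eq_mul]
    linarith
  have hw : ∑ _s ∈ Finset.range k, (k:ℝ)⁻¹ = 1 := by
    rw [Finset.sum_const, Finset.card_range, nsmul_eq_mul]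
    field_simp
  have hbar_eq : ((k : ℝ)⁻¹ • ∑ s ∈ Finset.range k, ys s)
      = ∑ s ∈ Finset.range k, (k:ℝ)⁻¹ • ys s := Finset.smul_sum
  have hbarY : ((k : ℝ)⁻¹ • ∑ s ∈ Finset.range k, ys s) ∈ Y := by
    rw [hbar_eq]
    exact hYconv.sum_mem (fun i _ => by positivity) hw (fun i _ => hysY i)
  have hjensen : L ((k : ℝ)⁻¹ • ∑ s ∈ Finset.range k, ys s) τstar
      ≤ (k:ℝ)⁻¹ * ∑ s ∈ Finset.range k, L (ys s) τstar := by
    rw [hbar_eq, Finset.mul_sum]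
    exact hconvL.map_sum_le (fun i _ => by positivity) hw (fun i _ => hysY i)
  set bary := (k : ℝ)⁻¹ • ∑ s ∈ Finset.range k, ys s with hbary
  -- strong convexity at the minimizer, limit version
  have hΔb0 : 0 ≤ L bary τstar - L ystar τstar := by
    have h := hdle τstar bary hbarY
    linarith [hystarL]
  have hkey2 : α / 2 * ‖bary - ystar‖ ^ 2 ≤ L bary τstar - L ystar τstar := by
    by_contra hcon
    push_neg at hcon
    set Δb := L bary τstar - L ystar τstar with hΔb
    set S := α / 2 * ‖bary - ystar‖ ^ 2 with hS
    have hSpos : 0 < S := lt_of_le_of_lt hΔb0 hcon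
    set t := (S - Δb) / (2 * S) with ht
    have ht0 : 0 < t := by
      apply div_pos; linarith; linarith
    have ht1 : t ≤ 1 / 2 := by
      rw [ht, div_le_div_iff₀ (by linarith) (by norm_num)]
      linarith
    have hmem : t • bary + (1 - t) • ystar ∈ Y :=
      hYconv hbarY hystarY ht0.le (by linarith) (by ring)
    have h1 := hsc τstar bary hbarY ystar hystarY t (1 - t) ht0.le (by linarith) (by ring)
    have h2 := hdle τstar _ hmem
    rw [← hystarL] at h2
    -- from h1, h2 : 0 ≤ t * Δb - t * (1 - t) * S
    have h1' : L (t • bary + (1 - t) • ystar) τstar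
        ≤ t * L bary τstar + (1 - t) * L ystar τstar - t * (1 - t) * S := by
      rw [hS]; linarith [h1]
    have hΔb2 : t * Δb = t * L bary τstar - t * L ystar τstar := by
      rw [hΔb]; ring
    have h3 : t * ((1 - t) * S) ≤ t * Δb := by
      nlinarith [h1', h2, hΔb2]
    have h4 : (1 - t) * S ≤ Δb := le_of_mul_le_mul_left h3 ht0
    have h5 : t * S = (S - Δb) / 2 := by
      rw [ht]; field_simp
    nlinarith [h4, h5, hcon]
  -- final arithmetic
  have hΔsum : L bary τstar - L ystar τstar
      ≤ (k:ℝ)⁻¹ * ∑ s ∈ Finset.range k, (L (ys s) τstar - L ystar τstar) := by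
    have e : ∑ s ∈ Finset.range k, (L (ys s) τstar - L ystar τstar)
        = (∑ s ∈ Finset.range k, L (ys s) τstar) - k * L ystar τstar := by
      rw [Finset.sum_sub_distrib, Finset.sum_const, Finset.card_range, nsmul_eq_mul]
    rw [e, mul_sub]
    have : (k:ℝ)⁻¹ * ((k:ℝ) * L ystar τstar) = L ystar τstar := by
      field_simp
    rw [this]
    linarith [hjensen]
  have hkinv : (k:ℝ) * (k:ℝ)⁻¹ = 1 := mul_inv_cancel₀ (ne_of_gt hk0)
  have hSumDelta0 : 0 ≤ ∑ s ∈ Finset.range k, (L (ys s) τstar - L ystar τstar) :=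
    Finset.sum_nonneg fun s _ => hΔ0 s
  set D := (1 / 2 * ‖τs 0‖ ^ 2 + 2 * γ * ∑ s ∈ Finset.range k, εs s)
      + (‖τstar‖ ^ 2 + ‖τstar‖ * ‖τs 0 - τstar‖
        + 2 * ‖τstar‖ * Real.sqrt (γ * ∑ s ∈ Finset.range k, εs s)) with hD
  have hD0 : 0 ≤ D := le_trans (by positivity) hmaster
  have hgoal : ‖bary - ystar‖ ^ 2 * (α * γ * k) ≤ 2 * D := by
    have hc1 : α / 2 * ‖bary - ystar‖ ^ 2
        ≤ (k:ℝ)⁻¹ * ∑ s ∈ Finset.range k, (L (ys s) τstar - L ystar τstar) :=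
      le_trans hkey2 hΔsum
    have hc2 := mul_le_mul_of_nonneg_left hc1
      (by positivity : (0:ℝ) ≤ 2 * γ * k)
    have hc3 := mul_le_mul_of_nonneg_left hmaster (by positivity : (0:ℝ) ≤ 2)
    calc ‖bary - ystar‖ ^ 2 * (α * γ * k)
        = 2 * γ * (k:ℝ) * (α / 2 * ‖bary - ystar‖ ^ 2) := by ring
      _ ≤ 2 * γ * (k:ℝ) * ((k:ℝ)⁻¹ * ∑ s ∈ Finset.range k, (L (ys s) τstar - L ystar τstar)) :=
          hc2
      _ = 2 * (γ * ∑ s ∈ Finset.range k, (L (ys s) τstar - L ystar τstar)) := by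
          field_simp
      _ ≤ 2 * D := hc3
  have hαγk : 0 < α * γ * (k:ℝ) := by positivity
  calc ‖bary - ystar‖ ^ 2
      = ‖bary - ystar‖ ^ 2 * (α * γ * k) / (α * γ * k) := by
        field_simp
    _ ≤ 2 * D / (α * γ * k) := (div_le_div_iff_of_pos_right hαγk).mpr hgoal
    _ = 2 / (α * γ * k) * D := by ring
end

section
/- (Strong convexity of the integrated congestion potential.) Suppose for each i ∈ ι, ℓ_i : ℝ → ℝ is monotone increasing and satisfies α·|x − x'| ≤ |ℓ_i(x) − ℓ_i(x')| for all x, x' ≥ 0. Define F₀ : EuclideanSpace ℝ ι → ℝ by F₀(y) = ∑_{i ∈ ι} ∫_0^{y_i} ℓ_i(u) du (intervalIntegral). Then F₀ is α-strongly convex on the nonnegative orthant {y : ∀ i, y_i ≥ 0}. -/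
open intervalIntegral

private lemma lin_int (c α z p q : ℝ) :
    (∫ u in p..q, (c + α * (u - z))) = c * (q - p) + α * ((q^2 - p^2)/2 - z*(q-p)) := by
  have h : (fun u : ℝ => c + α * (u - z)) = fun u => (c - α*z) + α * u := by
    ext u; ring
  have h2 : (∫ u in p..q, α * u) = α * ((q^2 - p^2)/2) := by
    rw [intervalIntegral.integral_const_mul, integral_id]
  rw [h, intervalIntegral.integral_add (f := fun _ => c - α*z) (g := fun u => α * u)
    intervalIntegrable_const
    ((continuous_const.mul continuous_id').intervalIntegrable _ _),
    h2, intervalIntegral.integral_const, smul_eq_mul]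
  ring

private lemma key1 (α : ℝ) (ℓ : ℝ → ℝ) (hm : Monotone ℓ)
    (hg : ∀ u v : ℝ, 0 ≤ u → 0 ≤ v → α * |u - v| ≤ |ℓ u - ℓ v|)
    (x y : ℝ) (hx : 0 ≤ x) (hxy : x ≤ y) (a b : ℝ)
    (ha : 0 ≤ a) (hb : 0 ≤ b) (hab : a + b = 1) :
    (∫ u in (0:ℝ)..(a*x + b*y), ℓ u) ≤
      a * (∫ u in (0:ℝ)..x, ℓ u) + b * (∫ u in (0:ℝ)..y, ℓ u)
        - α/2 * (a*b*(x - y)^2) := by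
  set z := a*x + b*y with hz
  have hxz : x ≤ z := by nlinarith
  have hzy : z ≤ y := by nlinarith
  have hz0 : 0 ≤ z := le_trans hx hxz
  have hI : ∀ p q : ℝ, IntervalIntegrable ℓ MeasureTheory.volume p q :=
    fun p q => hm.intervalIntegrable
  have hL : ∀ p q : ℝ, IntervalIntegrable (fun u => ℓ z + α * (u - z))
      MeasureTheory.volume p q := fun p q =>
    (intervalIntegrable_const.add ((continuous_const.mul
      (continuous_id.sub continuous_const)).intervalIntegrable _ _))
  have hub : ∀ u ∈ Set.Icc x z, ℓ u ≤ ℓ z + α * (u - z) := by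
    intro u hu
    have hu0 : 0 ≤ u := le_trans hx hu.1
    have h := hg u z hu0 hz0
    rw [abs_of_nonpos (by linarith [hu.2]), abs_of_nonpos (sub_nonpos.2 (hm hu.2))] at h
    linarith
  have hlb : ∀ u ∈ Set.Icc z y, ℓ z + α * (u - z) ≤ ℓ u := by
    intro u hu
    have hu0 : 0 ≤ u := le_trans hz0 hu.1
    have h := hg u z hu0 hz0
    rw [abs_of_nonneg (by linarith [hu.1]), abs_of_nonneg (sub_nonneg.2 (hm hu.1))] at h
    linarith
  have hA : (∫ u in x..z, ℓ u) ≤ ℓ z * (z - x) + α * ((z^2 - x^2)/2 - z*(z-x)) := by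
    rw [← lin_int (ℓ z) α z x z]
    exact intervalIntegral.integral_mono_on hxz (hI x z) (hL x z) hub
  have hB : ℓ z * (y - z) + α * ((y^2 - z^2)/2 - z*(y-z)) ≤ ∫ u in z..y, ℓ u := by
    rw [← lin_int (ℓ z) α z z y]
    exact intervalIntegral.integral_mono_on hzy (hL z y) (hI z y) hlb
  have e1 : (∫ u in (0:ℝ)..z, ℓ u) = (∫ u in (0:ℝ)..x, ℓ u) + ∫ u in x..z, ℓ u :=
    (intervalIntegral.integral_add_adjacent_intervals (hI 0 x) (hI x z)).symm
  have e2 : (∫ u in (0:ℝ)..y, ℓ u) = (∫ u in (0:ℝ)..z, ℓ u) + ∫ u in z..y, ℓ u :=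
    (intervalIntegral.integral_add_adjacent_intervals (hI 0 z) (hI z y)).symm
  -- the key algebraic identity
  have idq : a*(ℓ z * (z - x) + α * ((z^2 - x^2)/2 - z*(z-x))) + α/2*(a*b*(x-y)^2)
      = b*(ℓ z * (y - z) + α * ((y^2 - z^2)/2 - z*(y-z))) := by
    have hb' : b = 1 - a := by linarith
    rw [hz, hb']; ring
  have h : a * (∫ u in x..z, ℓ u) + α/2*(a*b*(x-y)^2) ≤ b * (∫ u in z..y, ℓ u) := by
    calc a * (∫ u in x..z, ℓ u) + α/2*(a*b*(x-y)^2)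
        ≤ a*(ℓ z * (z - x) + α * ((z^2 - x^2)/2 - z*(z-x))) + α/2*(a*b*(x-y)^2) := by
          have := mul_le_mul_of_nonneg_left hA ha; linarith
      _ = b*(ℓ z * (y - z) + α * ((y^2 - z^2)/2 - z*(y-z))) := idq
      _ ≤ b * (∫ u in z..y, ℓ u) := mul_le_mul_of_nonneg_left hB hb
  have e3 : a*(∫ u in (0:ℝ)..x, ℓ u) + b*(∫ u in (0:ℝ)..y, ℓ u)
      = (∫ u in (0:ℝ)..x, ℓ u) + b*(∫ u in x..z, ℓ u) + b*(∫ u in z..y, ℓ u) := by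
    rw [e2, e1]
    linear_combination (∫ u in (0:ℝ)..x, ℓ u) * hab
  have e4 : a*(∫ u in x..z, ℓ u) = (∫ u in x..z, ℓ u) - b*(∫ u in x..z, ℓ u) := by
    linear_combination (∫ u in x..z, ℓ u) * hab
  rw [e1, e3]
  linarith

private lemma key (α : ℝ) (ℓ : ℝ → ℝ) (hm : Monotone ℓ)
    (hg : ∀ u v : ℝ, 0 ≤ u → 0 ≤ v → α * |u - v| ≤ |ℓ u - ℓ v|)
    (x y : ℝ) (hx : 0 ≤ x) (hy : 0 ≤ y) (a b : ℝ)
    (ha : 0 ≤ a) (hb : 0 ≤ b) (hab : a + b = 1) :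
    (∫ u in (0:ℝ)..(a*x + b*y), ℓ u) ≤
      a * (∫ u in (0:ℝ)..x, ℓ u) + b * (∫ u in (0:ℝ)..y, ℓ u)
        - α/2 * (a*b*(x - y)^2) := by
  rcases le_total x y with h | h
  · exact key1 α ℓ hm hg x y hx h a b ha hb hab
  · have h' := key1 α ℓ hm hg y x hy h b a hb ha (by linarith)
    have e : b*y + a*x = a*x + b*y := by ring
    rw [e] at h'
    calc (∫ u in (0:ℝ)..(a*x + b*y), ℓ u)
        ≤ b * (∫ u in (0:ℝ)..y, ℓ u) + a * (∫ u in (0:ℝ)..x, ℓ u)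
          - α/2 * (b*a*(y - x)^2) := h'
      _ = a * (∫ u in (0:ℝ)..x, ℓ u) + b * (∫ u in (0:ℝ)..y, ℓ u)
          - α/2 * (a*b*(x - y)^2) := by ring

theorem stmt_16
    {ι : Type*} [Fintype ι] [Nonempty ι]
    (α : ℝ) (hα : 0 < α)
    (ℓ : ι → ℝ → ℝ)
    (hmono : ∀ i, Monotone (ℓ i))
    (hgrowth : ∀ i, ∀ x x' : ℝ, 0 ≤ x → 0 ≤ x' → α * |x - x'| ≤ |ℓ i x - ℓ i x'|)
    (F₀ : EuclideanSpace ℝ ι → ℝ)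
    (hF₀ : ∀ y, F₀ y = ∑ i, ∫ u in (0 : ℝ)..(y i), ℓ i u) :
    StrongConvexOn {y : EuclideanSpace ℝ ι | ∀ i, 0 ≤ y i} α F₀ := by
  constructor
  · intro x hx y hy a b ha hb hab i
    have := hx i
    have := hy i
    simp only [PiLp.add_apply, PiLp.smul_apply, smul_eq_mul]
    nlinarith
  · intro x hx y hy a b ha hb hab
    simp only [smul_eq_mul, hF₀]
    have happ : ∀ i, (a • x + b • y) i = a * x i + b * y i := by
      intro i
      simp [PiLp.add_apply, PiLp.smul_apply]
    have hnorm : ‖x - y‖^2 = ∑ i, (x i - y i)^2 := by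
      rw [EuclideanSpace.norm_eq, Real.sq_sqrt (by positivity)]
      exact Finset.sum_congr rfl fun i _ => by
        simp [PiLp.sub_apply, Real.norm_eq_abs, sq_abs]
    have hsum : ∑ i, (∫ u in (0:ℝ)..((a • x + b • y) i), ℓ i u) ≤
        ∑ i, (a * (∫ u in (0:ℝ)..(x i), ℓ i u) + b * (∫ u in (0:ℝ)..(y i), ℓ i u)
          - α/2 * (a*b*(x i - y i)^2)) := by
      apply Finset.sum_le_sum
      intro i _
      rw [happ i]
      exact key α (ℓ i) (hmono i) (hgrowth i) (x i) (y i) (hx i) (hy i) a b ha hb hab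
    have hc : ∑ i, α/2*(a*b*(x i - y i)^2) = a*b*(α/2 * ∑ i, (x i - y i)^2) := by
      rw [Finset.mul_sum, Finset.mul_sum]
      exact Finset.sum_congr rfl fun i _ => by ring
    calc ∑ i, (∫ u in (0:ℝ)..((a • x + b • y) i), ℓ i u) ≤ _ := hsum
      _ = a * (∑ i, ∫ u in (0:ℝ)..(x i), ℓ i u) + b * (∑ i, ∫ u in (0:ℝ)..(y i), ℓ i u)
            - a * b * (α / 2 * ‖x - y‖^2) := by
          rw [Finset.sum_sub_distrib, Finset.sum_add_distrib, ← Finset.mul_sum,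
            ← Finset.mul_sum, hc, ← hnorm]
end

section
/- (Potential minimizers are MDP Wardrop equilibria.) Let F : (Fin (T+1) → Fin S → Fin A → ℝ) → ℝ be differentiable, with the partial derivative of F with respect to the coordinate (t,s,a) at every point y equal to ℓ t s a (y). If y⋆ ∈ Y(P,p) minimizes F over Y(P,p), then y⋆ is an MDP Wardrop equilibrium: for all t, s, a with y⋆ t s a > 0 and all a', Q t s a (y⋆) ≤ Q t s a' (y⋆). -/
/-- The feasible set of population distributions for transition kernel `P`
and initial distribution `p`. -/
def feasibleY {T S A : ℕ}
    (P : Fin T → Fin S → Fin S → Fin A → ℝ) (p : Fin S → ℝ) :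
    Set (Fin (T + 1) → Fin S → Fin A → ℝ) :=
  {y | (∀ t s a, 0 ≤ y t s a) ∧
       (∀ s, ∑ a, y 0 s a = p s) ∧
       (∀ (t : Fin T) (s : Fin S),
          ∑ a, y t.succ s a = ∑ s', ∑ a, P t s s' a * y t.castSucc s' a)}

/-- Auxiliary Q-value function, indexed by "time remaining" `j` (so `j = 0`
corresponds to the final time `T`, and `j` corresponds to time `T - j`). -/
noncomputable def Qaux {T S A : ℕ}
    (P : Fin T → Fin S → Fin S → Fin A → ℝ)
    (ℓ : Fin (T + 1) → Fin S → Fin A → ((Fin (T + 1) → Fin S → Fin A → ℝ) → ℝ)) :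
    (j : ℕ) → j ≤ T → Fin S → Fin A → (Fin (T + 1) → Fin S → Fin A → ℝ) → ℝ
  | 0, _, s, a, y => ℓ (Fin.last T) s a y
  | (j + 1), h, s, a, y =>
      ℓ ⟨T - (j + 1), by omega⟩ s a y +
        ∑ s' : Fin S, P ⟨T - (j + 1), by omega⟩ s' s a *
          ⨅ a' : Fin A, Qaux P ℓ j (by omega) s' a' y

/-- The Q-value function of the MDP congestion game, defined by backward
recursion: `Q T s a y = ℓ T s a y` and for `t < T`,
`Q t s a y = ℓ t s a y + ∑ s', P t s' s a * min_{a'} Q (t+1) s' a' y`. -/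
noncomputable def Qval {T S A : ℕ}
    (P : Fin T → Fin S → Fin S → Fin A → ℝ)
    (ℓ : Fin (T + 1) → Fin S → Fin A → ((Fin (T + 1) → Fin S → Fin A → ℝ) → ℝ)) :
    Fin (T + 1) → Fin S → Fin A → (Fin (T + 1) → Fin S → Fin A → ℝ) → ℝ :=
  fun t => Qaux P ℓ (T - t.val) (Nat.sub_le T t.val)

section Flows
variable {T S A : ℕ}

/-- Forward flow routed through greedy actions. -/
noncomputable def flowG (P : Fin T → Fin S → Fin S → Fin A → ℝ)
    (gr : Fin (T + 1) → Fin S → Fin A) (t0 : ℕ) (init : Fin S → Fin A → ℝ) :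
    ℕ → Fin S → Fin A → ℝ
  | 0 => init
  | (k + 1) => fun s'' a'' =>
      if hlt : t0 + k < T then
        if a'' = gr ⟨t0 + k + 1, by omega⟩ s'' then
          ∑ s1, ∑ a1, P ⟨t0 + k, hlt⟩ s'' s1 a1 * flowG P gr t0 init k s1 a1
        else 0
      else 0

/-- Backward (removal) flow routed proportionally to `w`. -/
noncomputable def flowH (P : Fin T → Fin S → Fin S → Fin A → ℝ)
    (w : Fin (T + 1) → Fin S → Fin A → ℝ) (t0 : ℕ) (init : Fin S → Fin A → ℝ) :
    ℕ → Fin S → Fin A → ℝ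
  | 0 => init
  | (k + 1) => fun s'' a'' =>
      if hlt : t0 + k < T then
        ((∑ s1, ∑ a1, P ⟨t0 + k, hlt⟩ s'' s1 a1 * flowH P w t0 init k s1 a1) /
            (∑ a1, w ⟨t0 + k + 1, by omega⟩ s'' a1)) * w ⟨t0 + k + 1, by omega⟩ s'' a''
      else 0

variable {P : Fin T → Fin S → Fin S → Fin A → ℝ} {gr : Fin (T + 1) → Fin S → Fin A}
  {w : Fin (T + 1) → Fin S → Fin A → ℝ} {t0 : ℕ} {init : Fin S → Fin A → ℝ}

lemma flowG_nonneg (hP : ∀ t s' s a, 0 ≤ P t s' s a) (hinit : ∀ s a, 0 ≤ init s a) :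
    ∀ k s a, 0 ≤ flowG P gr t0 init k s a := by
  intro k
  induction k with
  | zero => exact hinit
  | succ k ih =>
    intro s a
    simp only [flowG]
    split
    · split
      · exact Finset.sum_nonneg fun s1 _ => Finset.sum_nonneg fun a1 _ =>
          mul_nonneg (hP _ _ _ _) (ih s1 a1)
      · exact le_refl 0
    · exact le_refl 0

lemma flowG_cons (k : ℕ) (hlt : t0 + k < T) (s'' : Fin S) :
    ∑ a, flowG P gr t0 init (k + 1) s'' a =
      ∑ s1, ∑ a1, P ⟨t0 + k, hlt⟩ s'' s1 a1 * flowG P gr t0 init k s1 a1 := by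
  simp only [flowG, dif_pos hlt]
  rw [Finset.sum_ite_eq' Finset.univ (gr ⟨t0 + k + 1, by omega⟩ s'')]
  simp

lemma flowG_supp (k : ℕ) (s : Fin S) (a : Fin A) (hlt : t0 + k < T)
    (h : flowG P gr t0 init (k + 1) s a ≠ 0) : a = gr ⟨t0 + k + 1, by omega⟩ s := by
  simp only [flowG, dif_pos hlt] at h
  by_contra hne
  exact h (if_neg hne)

lemma flowG_zero (k : ℕ) (hge : ¬ t0 + k < T) (s : Fin S) (a : Fin A) :
    flowG P gr t0 init (k + 1) s a = 0 := by simp only [flowG]; rw [dif_neg hge]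

lemma flowH_nonneg (hP : ∀ t s' s a, 0 ≤ P t s' s a) (hw : ∀ t s a, 0 ≤ w t s a)
    (hinit : ∀ s a, 0 ≤ init s a) :
    ∀ k s a, 0 ≤ flowH P w t0 init k s a := by
  intro k
  induction k with
  | zero => exact hinit
  | succ k ih =>
    intro s a
    simp only [flowH]
    split
    · refine mul_nonneg (div_nonneg ?_ ?_) (hw _ _ _)
      · exact Finset.sum_nonneg fun s1 _ => Finset.sum_nonneg fun a1 _ =>
          mul_nonneg (hP _ _ _ _) (ih s1 a1)
      · exact Finset.sum_nonneg fun a1 _ => hw _ _ _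
    · exact le_refl 0

lemma flowH_zero (k : ℕ) (hge : ¬ t0 + k < T) (s : Fin S) (a : Fin A) :
    flowH P w t0 init (k + 1) s a = 0 := by simp only [flowH]; rw [dif_neg hge]

lemma flowH_supp (k : ℕ) (s : Fin S) (a : Fin A) (hlt : t0 + k < T)
    (h : flowH P w t0 init (k + 1) s a ≠ 0) : w ⟨t0 + k + 1, by omega⟩ s a ≠ 0 := by
  simp only [flowH, dif_pos hlt] at h
  intro h0
  exact h (by rw [h0, mul_zero])

lemma flowH_dom (hP : ∀ t s' s a, 0 ≤ P t s' s a) (hw : ∀ t s a, 0 ≤ w t s a)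
    (hwfeas : ∀ (τ : Fin T) (s : Fin S),
      ∑ a, w τ.succ s a = ∑ s', ∑ a, P τ s s' a * w τ.castSucc s' a)
    (C : ℝ) (hC : 0 ≤ C) (ht0 : t0 ≤ T)
    (hinit : ∀ s a, init s a ≤ C * w ⟨t0, by omega⟩ s a) :
    ∀ k (hk : t0 + k ≤ T) s a, flowH P w t0 init k s a ≤ C * w ⟨t0 + k, by omega⟩ s a := by
  intro k
  induction k with
  | zero => intro _ s a; exact hinit s a
  | succ k ih =>
    intro hk s a
    have hlt : t0 + k < T := by omega
    simp only [flowH]; rw [dif_pos hlt]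
    set W := ∑ a1, w ⟨t0 + k + 1, by omega⟩ s a1 with hW
    set inflow := ∑ s1, ∑ a1, P ⟨t0 + k, hlt⟩ s s1 a1 * flowH P w t0 init k s1 a1 with hin
    have hinfl : inflow ≤ C * W := by
      have : W = ∑ s1, ∑ a1, P ⟨t0 + k, hlt⟩ s s1 a1 * w ⟨t0 + k, by omega⟩ s1 a1 := by
        have := hwfeas ⟨t0 + k, hlt⟩ s
        simpa [Fin.succ, Fin.castSucc, Fin.castAdd, Fin.castLE] using this
      rw [this, Finset.mul_sum]
      refine Finset.sum_le_sum fun s1 _ => ?_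
      rw [Finset.mul_sum]
      refine Finset.sum_le_sum fun a1 _ => ?_
      have := ih (by omega) s1 a1
      calc P ⟨t0 + k, hlt⟩ s s1 a1 * flowH P w t0 init k s1 a1
          ≤ P ⟨t0 + k, hlt⟩ s s1 a1 * (C * w ⟨t0 + k, by omega⟩ s1 a1) :=
            mul_le_mul_of_nonneg_left this (hP _ _ _ _)
        _ = C * (P ⟨t0 + k, hlt⟩ s s1 a1 * w ⟨t0 + k, by omega⟩ s1 a1) := by ring
    have hWnn : 0 ≤ W := Finset.sum_nonneg fun a1 _ => hw _ _ _
    rcases eq_or_lt_of_le hWnn with hW0 | hWpos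
    · -- W = 0, so w at each action is 0
      have hwa : w ⟨t0 + k + 1, by omega⟩ s a = 0 := by
        have h1 : w ⟨t0 + k + 1, by omega⟩ s a ≤ W :=
          Finset.single_le_sum (fun a1 _ => hw _ s a1) (Finset.mem_univ a)
        have h2 := hw ⟨t0 + k + 1, by omega⟩ s a
        linarith
      rw [hwa, mul_zero]
      exact mul_nonneg hC (hw _ _ _)
    · have hdiv : inflow / W ≤ C := (div_le_iff₀ hWpos).mpr (by linarith [hinfl])
      exact mul_le_mul_of_nonneg_right hdiv (hw _ _ _)

lemma flowH_cons (hP : ∀ t s' s a, 0 ≤ P t s' s a) (hw : ∀ t s a, 0 ≤ w t s a)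
    (hwfeas : ∀ (τ : Fin T) (s : Fin S),
      ∑ a, w τ.succ s a = ∑ s', ∑ a, P τ s s' a * w τ.castSucc s' a)
    (C : ℝ) (hC : 0 ≤ C) (ht0 : t0 ≤ T)
    (hinitnn : ∀ s a, 0 ≤ init s a)
    (hinit : ∀ s a, init s a ≤ C * w ⟨t0, by omega⟩ s a)
    (k : ℕ) (hlt : t0 + k < T) (s'' : Fin S) :
    ∑ a, flowH P w t0 init (k + 1) s'' a =
      ∑ s1, ∑ a1, P ⟨t0 + k, hlt⟩ s'' s1 a1 * flowH P w t0 init k s1 a1 := by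
  simp only [flowH, dif_pos hlt]
  rw [← Finset.mul_sum]
  set W := ∑ a1, w ⟨t0 + k + 1, by omega⟩ s'' a1 with hW
  set inflow := ∑ s1, ∑ a1, P ⟨t0 + k, hlt⟩ s'' s1 a1 * flowH P w t0 init k s1 a1 with hin
  rcases eq_or_ne W 0 with hW0 | hWne
  · -- inflow = 0 as well
    have hWfe : W = ∑ s1, ∑ a1, P ⟨t0 + k, hlt⟩ s'' s1 a1 * w ⟨t0 + k, by omega⟩ s1 a1 := by
      have := hwfeas ⟨t0 + k, hlt⟩ s''
      simpa [Fin.succ, Fin.castSucc, Fin.castAdd, Fin.castLE] using this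
    have hinfl_le : inflow ≤ C * W := by
      rw [hWfe, Finset.mul_sum]
      refine Finset.sum_le_sum fun s1 _ => ?_
      rw [Finset.mul_sum]
      refine Finset.sum_le_sum fun a1 _ => ?_
      have := flowH_dom hP hw hwfeas C hC ht0 hinit k (by omega) s1 a1
      calc P ⟨t0 + k, hlt⟩ s'' s1 a1 * flowH P w t0 init k s1 a1
          ≤ P ⟨t0 + k, hlt⟩ s'' s1 a1 * (C * w ⟨t0 + k, by omega⟩ s1 a1) :=
            mul_le_mul_of_nonneg_left this (hP _ _ _ _)
        _ = C * (P ⟨t0 + k, hlt⟩ s'' s1 a1 * w ⟨t0 + k, by omega⟩ s1 a1) := by ring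
    have hinfl_nn : 0 ≤ inflow := Finset.sum_nonneg fun s1 _ => Finset.sum_nonneg fun a1 _ =>
      mul_nonneg (hP _ _ _ _) (flowH_nonneg hP hw hinitnn k s1 a1)
    have : inflow = 0 := le_antisymm (by rw [hW0, mul_zero] at hinfl_le; exact hinfl_le) hinfl_nn
    rw [hW0, this, mul_zero]
  · rw [div_mul_cancel₀ _ hWne]

end Flows

section Qlemmas
variable {T S A : ℕ} (P : Fin T → Fin S → Fin S → Fin A → ℝ)
  (ℓ : Fin (T + 1) → Fin S → Fin A → ((Fin (T + 1) → Fin S → Fin A → ℝ) → ℝ))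

lemma Qaux_congr {j j' : ℕ} (h : j = j') (hj : j ≤ T) :
    Qaux P ℓ j hj = Qaux P ℓ j' (h ▸ hj) := by subst h; rfl

lemma Qval_last (s : Fin S) (a : Fin A) (y) :
    Qval P ℓ (Fin.last T) s a y = ℓ (Fin.last T) s a y := by
  have h : T - (Fin.last T).val = 0 := by simp
  rw [Qval, Qaux_congr P ℓ h]; rfl

lemma Qval_rec (t : Fin (T+1)) (ht : t.val < T) (s : Fin S) (a : Fin A) (y) :
    Qval P ℓ t s a y = ℓ t s a y +
      ∑ s' : Fin S, P ⟨t.val, ht⟩ s' s a *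
        ⨅ a' : Fin A, Qval P ℓ ⟨t.val + 1, by omega⟩ s' a' y := by
  have h : T - t.val = (T - (t.val + 1)) + 1 := by omega
  have h1 : T - (T - (t.val + 1) + 1) = t.val := by omega
  rw [Qval, Qaux_congr P ℓ h, Qaux]
  simp only [h1, Fin.eta]
  rfl

variable (ystar : Fin (T + 1) → Fin S → Fin A → ℝ)

/-- `ℓ` as a function of a natural-number time index. -/
noncomputable def Ln (τ : ℕ) (s : Fin S) (a : Fin A) : ℝ :=
  if h : τ ≤ T then ℓ ⟨τ, by omega⟩ s a ystar else 0

/-- `Qval` as a function of a natural-number time index. -/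
noncomputable def Qn (τ : ℕ) (s : Fin S) (a : Fin A) : ℝ :=
  if h : τ ≤ T then Qval P ℓ ⟨τ, by omega⟩ s a ystar else 0

/-- state values -/
noncomputable def Vn (τ : ℕ) (s : Fin S) : ℝ := ⨅ a, Qn P ℓ ystar τ s a

lemma Qn_last (s : Fin S) (a : Fin A) : Qn P ℓ ystar T s a = Ln ℓ ystar T s a := by
  rw [Qn, Ln, dif_pos (le_refl T), dif_pos (le_refl T)]
  have : (⟨T, by omega⟩ : Fin (T + 1)) = Fin.last T := rfl
  rw [this, Qval_last]

lemma Qn_rec [Nonempty (Fin A)] (τ : ℕ) (hτ : τ < T) (s : Fin S) (a : Fin A) :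
    Qn P ℓ ystar τ s a = Ln ℓ ystar τ s a +
      ∑ s' : Fin S, P ⟨τ, hτ⟩ s' s a * Vn P ℓ ystar (τ + 1) s' := by
  rw [Qn, Ln, dif_pos (by omega : τ ≤ T), dif_pos (by omega : τ ≤ T)]
  rw [Qval_rec P ℓ ⟨τ, by omega⟩ hτ s a ystar]
  congr 1
  refine Finset.sum_congr rfl fun s' _ => ?_
  congr 1
  rw [Vn]
  refine congrArg _ (funext fun a' => ?_)
  rw [Qn, dif_pos (by omega : τ + 1 ≤ T)]
end Qlemmas

section Cost
variable {T S A : ℕ} [Nonempty (Fin A)]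
  (P : Fin T → Fin S → Fin S → Fin A → ℝ)
  (ℓ : Fin (T + 1) → Fin S → Fin A → ((Fin (T + 1) → Fin S → Fin A → ℝ) → ℝ))
  (ystar : Fin (T + 1) → Fin S → Fin A → ℝ)

lemma cost_generic (t0 : ℕ) (f : ℕ → Fin S → Fin A → ℝ)
    (hcons : ∀ k (hlt : t0 + k < T) s'',
      ∑ a, f (k + 1) s'' a = ∑ s1, ∑ a1, P ⟨t0 + k, hlt⟩ s'' s1 a1 * f k s1 a1)
    (hsupp : ∀ k s a, 1 ≤ k → t0 + k ≤ T → f k s a ≠ 0 →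
      Qn P ℓ ystar (t0 + k) s a = Vn P ℓ ystar (t0 + k) s)
    (ht0 : t0 ≤ T) :
    ∀ n k, 1 ≤ k → k + n = T - t0 →
      ∑ j ∈ Finset.range (n + 1), ∑ s, ∑ a, Ln ℓ ystar (t0 + k + j) s a * f (k + j) s a
        = ∑ s, Vn P ℓ ystar (t0 + k) s * ∑ a, f k s a := by
  intro n
  induction n with
  | zero =>
    intro k hk1 hkn
    have hkT : t0 + k = T := by omega
    rw [Finset.sum_range_one]
    simp only [Nat.add_zero]
    refine Finset.sum_congr rfl fun s _ => ?_
    rw [Finset.mul_sum]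
    refine Finset.sum_congr rfl fun a _ => ?_
    rcases eq_or_ne (f k s a) 0 with h0 | h0
    · rw [h0, mul_zero, mul_zero]
    · have hQ := hsupp k s a hk1 (by omega) h0
      have hL : Ln ℓ ystar (t0 + k) s a = Qn P ℓ ystar (t0 + k) s a := by
        rw [hkT, Qn_last]
      rw [hL, hQ]
  | succ n IH =>
    intro k hk1 hkn
    have hlt : t0 + k < T := by omega
    rw [Finset.sum_range_succ']
    have hstep : (∑ j ∈ Finset.range (n + 1),
          ∑ s, ∑ a, Ln ℓ ystar (t0 + k + (j + 1)) s a * f (k + (j + 1)) s a)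
        = ∑ s, Vn P ℓ ystar (t0 + k + 1) s * ∑ a, f (k + 1) s a := by
      have h := IH (k + 1) (by omega) (by omega)
      rw [show t0 + (k + 1) = t0 + k + 1 from rfl] at h
      rw [← h]
      refine Finset.sum_congr rfl fun j _ => ?_
      rw [show t0 + k + 1 + j = t0 + k + (j + 1) from by omega,
        show k + 1 + j = k + (j + 1) from by omega]
    rw [hstep]
    simp only [Nat.add_zero]
    have hconsr : (∑ s, Vn P ℓ ystar (t0 + k + 1) s * ∑ a, f (k + 1) s a)
        = ∑ s1, ∑ a1, f k s1 a1 * ∑ s, P ⟨t0 + k, hlt⟩ s s1 a1 * Vn P ℓ ystar (t0 + k + 1) s := by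
      rw [Finset.sum_congr rfl fun s (_ : s ∈ Finset.univ) => by rw [hcons k hlt s]]
      simp only [Finset.mul_sum]
      rw [Finset.sum_comm]
      refine Finset.sum_congr rfl fun s1 _ => ?_
      rw [Finset.sum_comm]
      refine Finset.sum_congr rfl fun a1 _ => ?_
      refine Finset.sum_congr rfl fun s _ => ?_
      ring
    rw [hconsr, ← Finset.sum_add_distrib]
    refine Finset.sum_congr rfl fun s1 _ => ?_
    rw [← Finset.sum_add_distrib, Finset.mul_sum]
    refine Finset.sum_congr rfl fun a1 _ => ?_
    rcases eq_or_ne (f k s1 a1) 0 with h0 | h0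
    · simp [h0]
    · have hQ := hsupp k s1 a1 hk1 (by omega) h0
      have hVQ : Ln ℓ ystar (t0 + k) s1 a1 +
          ∑ s, P ⟨t0 + k, hlt⟩ s s1 a1 * Vn P ℓ ystar (t0 + k + 1) s
          = Vn P ℓ ystar (t0 + k) s1 :=
        (Qn_rec P ℓ ystar (t0 + k) hlt s1 a1).symm.trans hQ
      rw [← hVQ]
      ring
end Cost

section Cost2
variable {T S A : ℕ} [Nonempty (Fin A)]
  (P : Fin T → Fin S → Fin S → Fin A → ℝ)
  (ℓ : Fin (T + 1) → Fin S → Fin A → ((Fin (T + 1) → Fin S → Fin A → ℝ) → ℝ))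
  (ystar : Fin (T + 1) → Fin S → Fin A → ℝ)

lemma cost_full (t0 : ℕ) (f : ℕ → Fin S → Fin A → ℝ)
    (hcons : ∀ k (hlt : t0 + k < T) s'',
      ∑ a, f (k + 1) s'' a = ∑ s1, ∑ a1, P ⟨t0 + k, hlt⟩ s'' s1 a1 * f k s1 a1)
    (hsupp : ∀ k s a, 1 ≤ k → t0 + k ≤ T → f k s a ≠ 0 →
      Qn P ℓ ystar (t0 + k) s a = Vn P ℓ ystar (t0 + k) s)
    (ht0 : t0 ≤ T) (s0 : Fin S) (a0 : Fin A)
    (hinit : ∀ s a, f 0 s a = (if s = s0 then (1:ℝ) else 0) * (if a = a0 then 1 else 0)) :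
    ∑ j ∈ Finset.range (T - t0 + 1), ∑ s, ∑ a, Ln ℓ ystar (t0 + j) s a * f j s a
      = Qn P ℓ ystar t0 s0 a0 := by
  have hcollapse : ∀ (c : Fin S → Fin A → ℝ),
      (∑ s, ∑ a, c s a * f 0 s a) = c s0 a0 := by
    intro c
    rw [Finset.sum_congr rfl fun s (_ : s ∈ Finset.univ) =>
      Finset.sum_congr rfl fun a (_ : a ∈ Finset.univ) => by rw [hinit s a]]
    simp [mul_ite, mul_one, mul_zero, ite_and, Finset.sum_ite_eq', Finset.mem_univ]
  rcases Nat.eq_zero_or_pos (T - t0) with hK | hK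
  · have ht0T : t0 = T := by omega
    rw [hK, Finset.sum_range_one]
    simp only [Nat.add_zero]
    rw [hcollapse, ht0T, Qn_last]
  · have hlt0 : t0 < T := by omega
    obtain ⟨m, hm⟩ : ∃ m, T - t0 = m + 1 := ⟨T - t0 - 1, by omega⟩
    rw [hm, Finset.sum_range_succ']
    have h1 := cost_generic P ℓ ystar t0 f hcons hsupp ht0 m 1 (le_refl 1) (by omega)
    have hg : (∑ j ∈ Finset.range (m + 1),
          ∑ s, ∑ a, Ln ℓ ystar (t0 + (j + 1)) s a * f (j + 1) s a)
        = ∑ s, Vn P ℓ ystar (t0 + 1) s * ∑ a, f 1 s a := by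
      rw [← h1]
      exact Finset.sum_congr rfl fun j _ => by
        rw [show t0 + 1 + j = t0 + (j + 1) from by omega,
          show 1 + j = j + 1 from by omega]
    rw [hg]
    have hf1 : ∀ s, ∑ a, f 1 s a = P ⟨t0, hlt0⟩ s s0 a0 := by
      intro s
      have h := hcons 0 hlt0 s
      simp only [Nat.add_zero, Nat.zero_add] at h
      rw [h, hcollapse (fun s1 a1 => P ⟨t0, hlt0⟩ s s1 a1)]
    rw [Finset.sum_congr rfl fun s (_ : s ∈ Finset.univ) => by rw [hf1 s]]
    simp only [Nat.add_zero]
    rw [hcollapse (fun s1 a1 => Ln ℓ ystar t0 s1 a1)]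
    rw [Qn_rec P ℓ ystar t0 hlt0 s0 a0]
    rw [add_comm]
    congr 1
    exact Finset.sum_congr rfl fun s _ => by ring
end Cost2

section Analytic

lemma pi_decomp {T S A : ℕ} (d : Fin (T + 1) → Fin S → Fin A → ℝ) :
    d = ∑ t : Fin (T + 1), ∑ s : Fin S, ∑ a : Fin A,
      d t s a • (Pi.single t (Pi.single s (Pi.single a (1 : ℝ))) :
        Fin (T + 1) → Fin S → Fin A → ℝ) := by
  funext t0 s0 a0
  simp [Finset.sum_apply, Pi.single_apply, ite_apply, apply_ite, smul_eq_mul,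
    Finset.sum_ite_eq', Pi.zero_apply, mul_ite, mul_one, mul_zero]

lemma fderiv_dir_nonneg {E : Type*} [NormedAddCommGroup E] [NormedSpace ℝ E]
    (F : E → ℝ) (hF : Differentiable ℝ F) (y : E) (d : E) (ε0 : ℝ) (hε0 : 0 < ε0)
    (h : ∀ ε : ℝ, 0 < ε → ε ≤ ε0 → F y ≤ F (y + ε • d)) :
    0 ≤ fderiv ℝ F y d := by
  have hline : HasDerivAt (fun ε : ℝ => F (y + ε • d)) (fderiv ℝ F y d) 0 := by
    have h1 : HasDerivAt (fun ε : ℝ => y + ε • d) d 0 := by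
      simpa using ((hasDerivAt_id (0 : ℝ)).smul_const d).const_add y
    have h2 := (hF (y + (0 : ℝ) • d)).hasFDerivAt
    have h3 := h2.comp_hasDerivAt 0 h1
    simp only [zero_smul, add_zero] at h3
    exact h3
  rw [hasDerivAt_iff_tendsto_slope] at hline
  have hsub : Set.Ioi (0 : ℝ) ⊆ {(0 : ℝ)}ᶜ := fun x hx => ne_of_gt hx
  have hline' := hline.mono_left (nhdsWithin_mono 0 hsub)
  refine ge_of_tendsto hline' ?_
  filter_upwards [Ioc_mem_nhdsGT_of_mem ⟨le_refl 0, hε0⟩] with ε hε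
  have hle : F y ≤ F (y + ε • d) := h ε hε.1 hε.2
  simp only [slope_def_field]
  apply div_nonneg (by simpa using sub_nonneg.2 hle)
  simpa using hε.1.le

lemma fderiv_eq_sum {T S A : ℕ}
    (ℓ : Fin (T + 1) → Fin S → Fin A → ((Fin (T + 1) → Fin S → Fin A → ℝ) → ℝ))
    (F : (Fin (T + 1) → Fin S → Fin A → ℝ) → ℝ)
    (hFgrad : ∀ y t s a,
      fderiv ℝ F y (Pi.single t (Pi.single s (Pi.single a (1 : ℝ)))) = ℓ t s a y)
    (y d : Fin (T + 1) → Fin S → Fin A → ℝ) :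
    fderiv ℝ F y d = ∑ t, ∑ s, ∑ a, d t s a * ℓ t s a y := by
  conv_lhs => rw [pi_decomp d]
  rw [map_sum]
  refine Finset.sum_congr rfl fun t _ => ?_
  rw [map_sum]
  refine Finset.sum_congr rfl fun s _ => ?_
  rw [map_sum]
  refine Finset.sum_congr rfl fun a _ => ?_
  rw [ContinuousLinearMap.map_smul, hFgrad y t s a, smul_eq_mul]
end Analytic

lemma key_s17 {T S A : ℕ} (hA : 1 ≤ A)
    (P : Fin T → Fin S → Fin S → Fin A → ℝ)
    (hPnonneg : ∀ t s' s a, 0 ≤ P t s' s a)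
    (p : Fin S → ℝ)
    (ℓ : Fin (T + 1) → Fin S → Fin A → ((Fin (T + 1) → Fin S → Fin A → ℝ) → ℝ))
    (F : (Fin (T + 1) → Fin S → Fin A → ℝ) → ℝ)
    (hFdiff : Differentiable ℝ F)
    (hFgrad : ∀ y t s a,
      fderiv ℝ F y (Pi.single t (Pi.single s (Pi.single a (1 : ℝ)))) = ℓ t s a y)
    (ystar : Fin (T + 1) → Fin S → Fin A → ℝ)
    (hystar : ystar ∈ feasibleY P p)
    (hmin : ∀ y ∈ feasibleY P p, F ystar ≤ F y)
    (t : Fin (T + 1))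
    (IHW : ∀ τ : Fin (T + 1), t.val < τ.val → ∀ s a, 0 < ystar τ s a →
      ∀ a', Qval P ℓ τ s a ystar ≤ Qval P ℓ τ s a' ystar) :
    ∀ s a, 0 < ystar t s a → ∀ a', Qval P ℓ t s a ystar ≤ Qval P ℓ t s a' ystar := by
  intro s0 a0 hpos a'
  haveI : Nonempty (Fin A) := Fin.pos_iff_nonempty.mp hA
  obtain ⟨hynn, hyinit, hytrans⟩ := hystar
  -- greedy selector
  have hgr : ∀ (τ : Fin (T + 1)) (s : Fin S), ∃ a, ∀ b,
      Qval P ℓ τ s a ystar ≤ Qval P ℓ τ s b ystar :=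
    fun τ s => Finite.exists_min _
  choose gr hgrmin using hgr
  set t0 := t.val with ht0def
  have ht0 : t0 ≤ T := by omega
  have htt : (⟨t0, by omega⟩ : Fin (T + 1)) = t := Fin.ext rfl
  set iG : Fin S → Fin A → ℝ :=
    fun s a => (if s = s0 then (1 : ℝ) else 0) * (if a = a' then 1 else 0) with hiGdef
  set iH : Fin S → Fin A → ℝ :=
    fun s a => (if s = s0 then (1 : ℝ) else 0) * (if a = a0 then 1 else 0) with hiHdef
  set C := (ystar t s0 a0)⁻¹ with hCdef
  have hC : 0 ≤ C := inv_nonneg.mpr hpos.le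
  have hiGnn : ∀ s a, 0 ≤ iG s a := by
    intro s a; simp only [hiGdef]; positivity
  have hiHnn : ∀ s a, 0 ≤ iH s a := by
    intro s a; simp only [hiHdef]; positivity
  have hiHdom : ∀ s a, iH s a ≤ C * ystar ⟨t0, by omega⟩ s a := by
    intro s a
    rw [htt]
    simp only [hiHdef, hCdef]
    by_cases hs : s = s0
    · by_cases ha : a = a0
      · subst hs; subst ha
        rw [if_pos rfl, if_pos rfl, inv_mul_cancel₀ (ne_of_gt hpos), one_mul]
      · rw [if_neg ha, mul_zero]
        exact mul_nonneg (inv_nonneg.mpr hpos.le) (hynn _ _ _)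
    · rw [if_neg hs, zero_mul]
      exact mul_nonneg (inv_nonneg.mpr hpos.le) (hynn _ _ _)
  set g := flowG P gr t0 iG with hgdef
  set h := flowH P ystar t0 iH with hhdef
  set d : Fin (T + 1) → Fin S → Fin A → ℝ :=
    fun τ s a => if t0 ≤ τ.val then g (τ.val - t0) s a - h (τ.val - t0) s a else 0
    with hddef
  have hgnn : ∀ k s a, 0 ≤ g k s a := flowG_nonneg hPnonneg hiGnn
  have hdom := flowH_dom hPnonneg hynn hytrans C hC ht0 hiHdom
  -- initial masses sum per state
  have hiGsum : ∀ s, ∑ a, iG s a = (if s = s0 then (1 : ℝ) else 0) := by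
    intro s; simp only [hiGdef]; simp [← Finset.mul_sum, Finset.sum_ite_eq', Finset.mem_univ]
  have hiHsum : ∀ s, ∑ a, iH s a = (if s = s0 then (1 : ℝ) else 0) := by
    intro s; simp only [hiHdef]; simp [← Finset.mul_sum, Finset.sum_ite_eq', Finset.mem_univ]
  -- feasibility of the perturbed point
  have hfeas : ∀ ε : ℝ, 0 < ε → ε ≤ ystar t s0 a0 →
      (ystar + ε • d) ∈ feasibleY P p := by
    intro ε hε hεle
    have hεC : ε * C ≤ 1 := by
      rw [hCdef, ← div_eq_mul_inv]
      exact (div_le_one hpos).mpr hεle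
    have happ : ∀ (τ : Fin (T + 1)) s a,
        (ystar + ε • d) τ s a = ystar τ s a + ε * d τ s a := fun _ _ _ => rfl
    refine ⟨?_, ?_, ?_⟩
    · intro τ s a
      rw [happ]
      by_cases hτ : t0 ≤ τ.val
      · have hk : t0 + (τ.val - t0) ≤ T := by omega
        have hdomk := hdom (τ.val - t0) hk s a
        have hfin : (⟨t0 + (τ.val - t0), by omega⟩ : Fin (T + 1)) = τ :=
          Fin.ext (by simp; omega)
        rw [hfin] at hdomk
        have hdval : d τ s a = g (τ.val - t0) s a - h (τ.val - t0) s a := by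
          simp only [hddef]; rw [if_pos hτ]
        rw [hdval]
        have h1 : ε * h (τ.val - t0) s a ≤ ε * (C * ystar τ s a) :=
          mul_le_mul_of_nonneg_left hdomk hε.le
        have h2 : ε * (C * ystar τ s a) ≤ 1 * ystar τ s a := by
          rw [← mul_assoc]; exact mul_le_mul_of_nonneg_right hεC (hynn _ _ _)
        have h3 : 0 ≤ ε * g (τ.val - t0) s a := mul_nonneg hε.le (hgnn _ _ _)
        have h4 : ε * (g (τ.val - t0) s a - h (τ.val - t0) s a)
            = ε * g (τ.val - t0) s a - ε * h (τ.val - t0) s a := by ring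
        rw [h4]
        have := hynn τ s a
        linarith
      · have hdval : d τ s a = 0 := by simp only [hddef]; rw [if_neg hτ]
        rw [hdval, mul_zero, add_zero]; exact hynn τ s a
    · intro s
      rw [Finset.sum_congr rfl fun a (_ : a ∈ Finset.univ) => happ 0 s a,
        Finset.sum_add_distrib, ← Finset.mul_sum]
      have hd0 : ∑ a, d 0 s a = 0 := by
        by_cases h0 : t0 ≤ ((0 : Fin (T + 1))).val
        · have hval : ((0 : Fin (T + 1))).val = 0 := rfl
          have hdd : ∀ a, d 0 s a = g 0 s a - h 0 s a := by
            intro a; simp only [hddef]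
            rw [if_pos h0, show ((0 : Fin (T + 1))).val - t0 = 0 from by omega]
          rw [Finset.sum_congr rfl fun a (_ : a ∈ Finset.univ) => hdd a,
            Finset.sum_sub_distrib]
          have hg0 : ∑ a, g 0 s a = ∑ a, iG s a := rfl
          have hh0 : ∑ a, h 0 s a = ∑ a, iH s a := rfl
          rw [hg0, hh0, hiGsum, hiHsum, sub_self]
        · have hdd : ∀ a, d 0 s a = 0 := by
            intro a; simp only [hddef]; rw [if_neg h0]
          rw [Finset.sum_congr rfl fun a (_ : a ∈ Finset.univ) => hdd a]
          exact Finset.sum_const_zero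
      rw [hd0, mul_zero, add_zero]; exact hyinit s
    · intro τ' s''
      have hsuccval : (τ'.succ : Fin (T + 1)).val = τ'.val + 1 := rfl
      have hcastval : (τ'.castSucc : Fin (T + 1)).val = τ'.val := rfl
      suffices hd : ∑ a, d τ'.succ s'' a = ∑ s', ∑ a, P τ' s'' s' a * d τ'.castSucc s' a by
        simp only [happ]
        rw [Finset.sum_add_distrib, ← Finset.mul_sum, hytrans τ' s'', hd, Finset.mul_sum,
          ← Finset.sum_add_distrib]
        refine Finset.sum_congr rfl fun s' _ => ?_
        rw [Finset.mul_sum, ← Finset.sum_add_distrib]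
        refine Finset.sum_congr rfl fun a _ => ?_
        ring
      rcases lt_trichotomy (τ'.val + 1) t0 with hlt1 | heq1 | hgt1
      · have h1 : ∀ a, d τ'.succ s'' a = 0 := by
          intro a; simp only [hddef]; rw [if_neg (by rw [hsuccval]; omega)]
        have h2 : ∀ s' a, d τ'.castSucc s' a = 0 := by
          intro s' a; simp only [hddef]; rw [if_neg (by rw [hcastval]; omega)]
        simp [h1, h2]
      · have h2 : ∀ s' a, d τ'.castSucc s' a = 0 := by
          intro s' a; simp only [hddef]; rw [if_neg (by rw [hcastval]; omega)]
        have h1 : ∀ a, d τ'.succ s'' a = g 0 s'' a - h 0 s'' a := by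
          intro a; simp only [hddef]
          rw [if_pos (by rw [hsuccval]; omega),
            show (τ'.succ : Fin (T + 1)).val - t0 = 0 from by rw [hsuccval]; omega]
        rw [Finset.sum_congr rfl fun a (_ : a ∈ Finset.univ) => h1 a, Finset.sum_sub_distrib]
        have hg0 : ∑ a, g 0 s'' a = ∑ a, iG s'' a := rfl
        have hh0 : ∑ a, h 0 s'' a = ∑ a, iH s'' a := rfl
        rw [hg0, hh0, hiGsum, hiHsum, sub_self]
        symm
        refine Finset.sum_eq_zero fun s' _ => Finset.sum_eq_zero fun a _ => ?_
        rw [h2 s' a, mul_zero]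
      · have hτT : τ'.val < T := τ'.isLt
        have hle : t0 ≤ τ'.val := by omega
        have hlt : t0 + (τ'.val - t0) < T := by omega
        have h1 : ∀ a, d τ'.succ s'' a = g (τ'.val - t0 + 1) s'' a - h (τ'.val - t0 + 1) s'' a := by
          intro a; simp only [hddef]
          rw [if_pos (by rw [hsuccval]; omega),
            show (τ'.succ : Fin (T + 1)).val - t0 = τ'.val - t0 + 1 from by rw [hsuccval]; omega]
        have h2 : ∀ s' a, d τ'.castSucc s' a = g (τ'.val - t0) s' a - h (τ'.val - t0) s' a := by
          intro s' a; simp only [hddef]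
          rw [if_pos (by rw [hcastval]; omega),
            show (τ'.castSucc : Fin (T + 1)).val - t0 = τ'.val - t0 from rfl]
        have hfinτ : (⟨t0 + (τ'.val - t0), hlt⟩ : Fin T) = τ' := Fin.ext (by simp; omega)
        rw [Finset.sum_congr rfl fun a (_ : a ∈ Finset.univ) => h1 a, Finset.sum_sub_distrib,
          hgdef, hhdef, flowG_cons (τ'.val - t0) hlt s'',
          flowH_cons hPnonneg hynn hytrans C hC ht0 hiHnn hiHdom (τ'.val - t0) hlt s'', hfinτ]
        rw [← Finset.sum_sub_distrib]
        refine Finset.sum_congr rfl fun s' _ => ?_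
        rw [← Finset.sum_sub_distrib]
        refine Finset.sum_congr rfl fun a _ => ?_
        rw [h2 s' a, hgdef, hhdef]
        ring
  -- the directional derivative is nonnegative
  have hder : 0 ≤ fderiv ℝ F ystar d :=
    fderiv_dir_nonneg F hFdiff ystar d (ystar t s0 a0) hpos
      (fun ε h1 h2 => hmin _ (hfeas ε h1 h2))
  -- support properties for the two flows
  have hsuppG : ∀ k s a, 1 ≤ k → t0 + k ≤ T → flowG P gr t0 iG k s a ≠ 0 →
      Qn P ℓ ystar (t0 + k) s a = Vn P ℓ ystar (t0 + k) s := by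
    intro k s a hk1 hkT hne
    obtain ⟨k', rfl⟩ : ∃ k', k = k' + 1 := ⟨k - 1, by omega⟩
    have hlt : t0 + k' < T := by omega
    have ha := flowG_supp k' s a hlt hne
    rw [Qn, dif_pos (by omega : t0 + (k' + 1) ≤ T), Vn,
      show (fun b => Qn P ℓ ystar (t0 + (k' + 1)) s b)
        = fun b => Qval P ℓ ⟨t0 + (k' + 1), by omega⟩ s b ystar from
        funext fun b => by rw [Qn, dif_pos (by omega : t0 + (k' + 1) ≤ T)], ha]
    refine le_antisymm (le_ciInf fun b => ?_) (ciInf_le (Finite.bddBelow_range _) _)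
    exact hgrmin _ s b
  have hsuppH : ∀ k s a, 1 ≤ k → t0 + k ≤ T → flowH P ystar t0 iH k s a ≠ 0 →
      Qn P ℓ ystar (t0 + k) s a = Vn P ℓ ystar (t0 + k) s := by
    intro k s a hk1 hkT hne
    obtain ⟨k', rfl⟩ : ∃ k', k = k' + 1 := ⟨k - 1, by omega⟩
    have hlt : t0 + k' < T := by omega
    have hy := flowH_supp k' s a hlt hne
    have hypos : 0 < ystar ⟨t0 + k' + 1, by omega⟩ s a :=
      lt_of_le_of_ne (hynn _ _ _) (Ne.symm hy)
    have hW := IHW ⟨t0 + k' + 1, by omega⟩ (by simp only [ht0def]; omega) s a hypos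
    rw [Qn, dif_pos (by omega : t0 + (k' + 1) ≤ T), Vn,
      show (fun b => Qn P ℓ ystar (t0 + (k' + 1)) s b)
        = fun b => Qval P ℓ ⟨t0 + (k' + 1), by omega⟩ s b ystar from
        funext fun b => by rw [Qn, dif_pos (by omega : t0 + (k' + 1) ≤ T)]]
    refine le_antisymm (le_ciInf fun b => ?_) (ciInf_le (Finite.bddBelow_range _) _)
    exact hW b
  -- compute the directional derivative
  have hform := fderiv_eq_sum ℓ F hFgrad ystar d
  set ψ : ℕ → ℝ := fun m => ∑ s, ∑ a,
      (if t0 ≤ m then flowG P gr t0 iG (m - t0) s a - flowH P ystar t0 iH (m - t0) s a else 0)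
        * Ln ℓ ystar m s a with hψdef
  have hstep1 : (∑ τ : Fin (T + 1), ∑ s, ∑ a, d τ s a * ℓ τ s a ystar)
      = ∑ m ∈ Finset.range (T + 1), ψ m := by
    rw [Finset.sum_range fun m => ψ m]
    refine Finset.sum_congr rfl fun τ _ => ?_
    simp only [hψdef]
    refine Finset.sum_congr rfl fun s _ => Finset.sum_congr rfl fun a _ => ?_
    have hL : Ln ℓ ystar (τ : ℕ) s a = ℓ τ s a ystar := by
      rw [Ln, dif_pos (by omega : (τ : ℕ) ≤ T), Fin.eta]
    rw [hL]
  have hstep2 : ∑ m ∈ Finset.range (T + 1), ψ m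
      = ∑ j ∈ Finset.range (T - t0 + 1), ψ (t0 + j) := by
    rw [Finset.range_eq_Ico,
      ← Finset.sum_Ico_consecutive ψ (Nat.zero_le t0) (by omega : t0 ≤ T + 1)]
    have hzero : ∑ m ∈ Finset.Ico 0 t0, ψ m = 0 :=
      Finset.sum_eq_zero fun m hm => by
        simp only [hψdef]
        refine Finset.sum_eq_zero fun s _ => Finset.sum_eq_zero fun a _ => ?_
        rw [if_neg (by have := (Finset.mem_Ico.mp hm).2; omega), zero_mul]
    rw [hzero, zero_add, Finset.sum_Ico_eq_sum_range,
      show T + 1 - t0 = T - t0 + 1 from by omega, Finset.range_eq_Ico]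
  have hstep3 : ∀ j : ℕ, ψ (t0 + j)
      = (∑ s, ∑ a, Ln ℓ ystar (t0 + j) s a * flowG P gr t0 iG j s a)
        - ∑ s, ∑ a, Ln ℓ ystar (t0 + j) s a * flowH P ystar t0 iH j s a := by
    intro j
    simp only [hψdef]
    rw [← Finset.sum_sub_distrib]
    refine Finset.sum_congr rfl fun s _ => ?_
    rw [← Finset.sum_sub_distrib]
    refine Finset.sum_congr rfl fun a _ => ?_
    rw [if_pos (by omega : t0 ≤ t0 + j), show t0 + j - t0 = j from by omega]
    ring
  have hcostG := cost_full P ℓ ystar t0 (flowG P gr t0 iG)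
      (fun k hlt s'' => flowG_cons k hlt s'') hsuppG ht0 s0 a' (fun s a => rfl)
  have hcostH := cost_full P ℓ ystar t0 (flowH P ystar t0 iH)
      (fun k hlt s'' => flowH_cons hPnonneg hynn hytrans C hC ht0 hiHnn hiHdom k hlt s'')
      hsuppH ht0 s0 a0 (fun s a => rfl)
  have hfinal : fderiv ℝ F ystar d
      = Qn P ℓ ystar t0 s0 a' - Qn P ℓ ystar t0 s0 a0 := by
    rw [hform, hstep1, hstep2,
      Finset.sum_congr rfl fun j _ => hstep3 j,
      Finset.sum_sub_distrib, hcostG, hcostH]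
  rw [hfinal] at hder
  have hQ0 : Qn P ℓ ystar t0 s0 a0 = Qval P ℓ t s0 a0 ystar := by
    rw [Qn, dif_pos ht0, htt]
  have hQ' : Qn P ℓ ystar t0 s0 a' = Qval P ℓ t s0 a' ystar := by
    rw [Qn, dif_pos ht0, htt]
  rw [hQ0, hQ'] at hder
  linarith


theorem stmt_17
    (T S A : ℕ) (hS : 1 ≤ S) (hA : 1 ≤ A)
    (P : Fin T → Fin S → Fin S → Fin A → ℝ)
    (hPnonneg : ∀ t s' s a, 0 ≤ P t s' s a)
    (hPsum : ∀ t s a, ∑ s', P t s' s a = 1)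
    (p : Fin S → ℝ) (hp : ∀ s, 0 ≤ p s)
    (ℓ : Fin (T + 1) → Fin S → Fin A → ((Fin (T + 1) → Fin S → Fin A → ℝ) → ℝ))
    (hℓcont : ∀ t s a, Continuous (ℓ t s a))
    (F : (Fin (T + 1) → Fin S → Fin A → ℝ) → ℝ)
    (hFdiff : Differentiable ℝ F)
    (hFgrad : ∀ y t s a,
      fderiv ℝ F y (Pi.single t (Pi.single s (Pi.single a (1 : ℝ)))) = ℓ t s a y)
    (ystar : Fin (T + 1) → Fin S → Fin A → ℝ)
    (hystar : ystar ∈ feasibleY P p)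
    (hmin : ∀ y ∈ feasibleY P p, F ystar ≤ F y) :
    ∀ t s a, 0 < ystar t s a →
      ∀ a', Qval P ℓ t s a ystar ≤ Qval P ℓ t s a' ystar := by
  suffices H : ∀ n : ℕ, ∀ t : Fin (T + 1), T - t.val = n →
      ∀ s a, 0 < ystar t s a → ∀ a',
        Qval P ℓ t s a ystar ≤ Qval P ℓ t s a' ystar by
    intro t s a hpos a'
    exact H (T - t.val) t rfl s a hpos a'
  intro n
  induction n using Nat.strong_induction_on with
  | _ n IH =>
    intro t ht
    refine key_s17 hA P hPnonneg p ℓ F hFdiff hFgrad ystar hystar hmin t ?_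
    intro τ hτ s a hpos a'
    have h1 := τ.isLt
    exact IH (T - τ.val) (by omega) τ rfl s a hpos a'
end
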